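/- arXiv:2303.17414 — 10 statements merged into one kernel-verified Lean document; each statement's English description precedes it below -/
import Mathlib

section
/- Let f and g be continuous quasi-isometries of [0,∞). Suppose f(x)/x → c' as x → ∞ for some c' > 0, and suppose S_g = [a,b] with 0 < a ≤ b. Then S_{f∘g} = [c'a, c'b]. -/
open Filter Topology

/-- A quasi-isometry of the ray `[0,∞)`, modelled as a real function:
it maps nonnegatives to nonnegatives, satisfies the two-sided quasi-isometry
inequality with a constant `K > 1` on nonnegative arguments, and its image is
coarsely dense in `[0,∞)`. -/
def IsQI (g : ℝ → ℝ) : Prop :=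
  (∀ x, 0 ≤ x → 0 ≤ g x) ∧
  (∃ K : ℝ, 1 < K ∧ ∀ x y, 0 ≤ x → 0 ≤ y →
    (1 / K) * |x - y| - K ≤ |g x - g y| ∧ |g x - g y| ≤ K * |x - y| + K) ∧
  (∃ K' : ℝ, 0 < K' ∧ ∀ z, 0 ≤ z → ∃ x, 0 ≤ x ∧ |g x - z| ≤ K')

/-- `Sset g` is the set of all subsequential limits of `g x / x` as `x → ∞`:
limits of `g (u n) / u n` over sequences `u n → ∞` for which this quotient converges. -/
def Sset (g : ℝ → ℝ) : Set ℝ :=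
  { c | ∃ u : ℕ → ℝ, (∀ n, 0 ≤ u n) ∧ Tendsto u atTop atTop ∧
      Tendsto (fun n => g (u n) / u n) atTop (𝓝 c) }

/-- `g` is piecewise linear on `[0,∞)`: there is a strictly increasing divergent
sequence of breakpoints starting at `0` on whose consecutive intervals `g` is affine. -/
def IsPL (g : ℝ → ℝ) : Prop :=
  ∃ t : ℕ → ℝ, t 0 = 0 ∧ StrictMono t ∧ Tendsto t atTop atTop ∧
    ∀ n, ∃ lam : ℝ, ∀ x ∈ Set.Icc (t n) (t (n + 1)),
      g x = g (t n) + lam * (x - t n)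

/-- Two quasi-isometries `f, g` of `[0,∞)` are H-equivalent if `f` is boundedly close
(on `[0,∞)`) to `h ∘ g` for some quasi-isometry `h` with `h y / y → 1`. -/
def HEquiv (f g : ℝ → ℝ) : Prop :=
  ∃ h : ℝ → ℝ, IsQI h ∧ Tendsto (fun y => h y / y) atTop (𝓝 1) ∧
    ∃ C : ℝ, ∀ x, 0 ≤ x → |f x - h (g x)| ≤ C


lemma qi_tendsto_atTop {g : ℝ → ℝ} (hg : IsQI g) {u : ℕ → ℝ}
    (hu0 : ∀ n, 0 ≤ u n) (hu : Tendsto u atTop atTop) :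
    Tendsto (fun n => g (u n)) atTop atTop := by
  obtain ⟨hpos, ⟨K, hK1, hK⟩, -⟩ := hg
  have hK0 : (0:ℝ) < K := lt_trans one_pos hK1
  have hb : ∀ n, (1/K) * u n - K - g 0 ≤ g (u n) := by
    intro n
    have h := (hK (u n) 0 (hu0 n) le_rfl).1
    have habs : |g (u n) - g 0| ≤ g (u n) + g 0 := by
      have := abs_sub (g (u n)) (g 0)
      rw [abs_of_nonneg (hpos _ (hu0 n)), abs_of_nonneg (hpos 0 le_rfl)] at this
      exact this
    rw [sub_zero, abs_of_nonneg (hu0 n)] at h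
    linarith
  refine tendsto_atTop_mono hb ?_
  have h1 : Tendsto (fun n => (1/K) * u n) atTop atTop :=
    hu.const_mul_atTop (by positivity)
  exact tendsto_atTop_add_const_right _ _ (tendsto_atTop_add_const_right _ _ h1)

/-- If `f x / x → c' > 0` and `S_g = [a,b] ⊆ (0,∞)`, then
`S_{f ∘ g} = [c'a, c'b]`. -/
theorem stmt1 (f g : ℝ → ℝ) (hf : IsQI f) (hg : IsQI g)
    (hfc : ContinuousOn f (Set.Ici 0)) (hgc : ContinuousOn g (Set.Ici 0))
    (c' a b : ℝ) (hc' : 0 < c') (ha : 0 < a) (hab : a ≤ b)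
    (hft : Tendsto (fun x => f x / x) atTop (𝓝 c'))
    (hSg : Sset g = Set.Icc a b) :
    Sset (f ∘ g) = Set.Icc (c' * a) (c' * b) := by
  have key : ∀ u : ℕ → ℝ, (∀ n, 0 ≤ u n) → Tendsto u atTop atTop →
      Tendsto (fun n => f (g (u n)) / g (u n)) atTop (𝓝 c') := by
    intro u hu0 hu
    exact hft.comp (qi_tendsto_atTop hg hu0 hu)
  ext c
  simp only [Set.mem_Icc]
  constructor
  · rintro ⟨u, hu0, hu, hlim⟩
    have h1 := key u hu0 hu
    have h2 : Tendsto (fun n => (f (g (u n)) / u n) / (f (g (u n)) / g (u n)))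
        atTop (𝓝 (c / c')) := hlim.div h1 hc'.ne'
    have hev : ∀ᶠ n in atTop, (f (g (u n)) / u n) / (f (g (u n)) / g (u n))
        = g (u n) / u n := by
      have hgt : ∀ᶠ n in atTop, c'/2 < f (g (u n)) / g (u n) :=
        h1.eventually (eventually_gt_nhds (half_lt_self hc'))
      have hgpos : ∀ᶠ n in atTop, 0 < g (u n) :=
        (qi_tendsto_atTop hg hu0 hu).eventually_gt_atTop 0
      filter_upwards [hgt, hgpos] with n h h'
      have hA : f (g (u n)) ≠ 0 := by
        have hp : 0 < f (g (u n)) / g (u n) := lt_trans (by positivity) h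
        have := mul_pos hp h'
        rw [div_mul_cancel₀ _ h'.ne'] at this
        exact this.ne' 
      rw [div_div_div_comm, div_self hA, one_div_div]
    have h3 : Tendsto (fun n => g (u n) / u n) atTop (𝓝 (c / c')) :=
      h2.congr' hev
    have : c / c' ∈ Sset g := ⟨u, hu0, hu, h3⟩
    rw [hSg, Set.mem_Icc] at this
    obtain ⟨hl, hr⟩ := this
    constructor
    · calc c' * a ≤ c' * (c / c') := by nlinarith
        _ = c := mul_div_cancel₀ _ hc'.ne'
    · calc c = c' * (c / c') := (mul_div_cancel₀ _ hc'.ne').symm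
        _ ≤ c' * b := by nlinarith
  · rintro ⟨h1, h2⟩
    have hmem : c / c' ∈ Sset g := by
      rw [hSg, Set.mem_Icc]
      constructor
      · rw [le_div_iff₀ hc']; nlinarith
      · rw [div_le_iff₀ hc']; nlinarith
    obtain ⟨u, hu0, hu, hlim⟩ := hmem
    refine ⟨u, hu0, hu, ?_⟩
    have h3 := (key u hu0 hu).mul hlim
    rw [mul_div_cancel₀ _ hc'.ne'] at h3
    refine h3.congr' ?_
    have hgpos : ∀ᶠ n in atTop, 0 < g (u n) :=
      (qi_tendsto_atTop hg hu0 hu).eventually_gt_atTop 0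
    filter_upwards [hgpos] with n h
    simp only [Function.comp_apply]
    rw [div_mul_div_comm, mul_comm (g (u n)) (u n), mul_div_mul_right _ _ h.ne']
end

section
/- For every pair of real numbers 0 < a ≤ b there exists a continuous, strictly increasing, piecewise-linear quasi-isometry g : [0,∞) → [0,∞) such that S_g = [a,b]. In other words, the map sending a quasi-isometry g to the compact interval S_g is surjective onto the collection of all compact subintervals of (0,∞). -/
open Filter Topology

namespace Stmt2Aux
noncomputable section


def tt (n : ℕ) : ℝ := if n = 0 then 0 else (n.factorial : ℝ)
lemma tt_zero : tt 0 = 0 := by simp [tt]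
lemma tt_pos {n : ℕ} (hn : n ≠ 0) : 0 < tt n := by
  simp only [tt, if_neg hn]; exact_mod_cast n.factorial_pos
lemma tt_nonneg (n : ℕ) : 0 ≤ tt n := by
  rcases eq_or_ne n 0 with h | h
  · simp [h, tt_zero]
  · exact (tt_pos h).le
lemma tt_ge (n : ℕ) : (n : ℝ) ≤ tt n := by
  rcases eq_or_ne n 0 with h | h
  · simp [h, tt_zero]
  · simp only [tt, if_neg h]; exact_mod_cast Nat.self_le_factorial n
lemma tt_mono : StrictMono tt := by
  apply strictMono_nat_of_lt_succ
  intro n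
  rcases eq_or_ne n 0 with h | h
  · simp [h, tt]
  · simp only [tt, if_neg h, if_neg (Nat.succ_ne_zero n)]
    exact_mod_cast (Nat.factorial_lt (Nat.pos_of_ne_zero h)).mpr (Nat.lt_succ_self n)
lemma tt_tendsto : Tendsto tt atTop atTop :=
  tendsto_atTop_mono tt_ge tendsto_natCast_atTop_atTop
lemma tt_ratio (n : ℕ) : tt n / tt (n + 1) ≤ 1 / (n + 1 : ℝ) := by
  have h1 : (0:ℝ) < tt (n+1) := tt_pos (Nat.succ_ne_zero n)
  have h2 : (0:ℝ) < (n:ℝ) + 1 := by positivity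
  rw [div_le_div_iff₀ h1 h2]
  have h3 : tt n ≤ (n.factorial : ℝ) := by
    rcases eq_or_ne n 0 with h | h
    · simp [h, tt_zero]
    · simp [tt, if_neg h]
  have h4 : tt (n+1) = ((n+1) * n.factorial : ℕ) := by simp [tt, Nat.factorial_succ]
  calc tt n * ((n:ℝ)+1) ≤ (n.factorial : ℝ) * ((n:ℝ)+1) :=
        mul_le_mul_of_nonneg_right h3 (by positivity)
    _ = tt (n+1) := by rw [h4]; push_cast; ring
    _ = 1 * tt (n+1) := by ring

/-- slope on segment `n` -/
def sl (a b : ℝ) (n : ℕ) : ℝ := if Even n then a else b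

/-- values at breakpoints -/
def vv (a b : ℝ) : ℕ → ℝ
  | 0 => 0
  | n + 1 => vv a b n + sl a b n * (tt (n + 1) - tt n)

open scoped Classical in
/-- index of the segment containing `x` -/
def idx (x : ℝ) : ℕ := Nat.findGreatest (fun n => tt n ≤ x) ⌈x⌉₊

/-- the piecewise linear function -/
def gg (a b : ℝ) (x : ℝ) : ℝ :=
  vv a b (idx x) + sl a b (idx x) * (x - tt (idx x))

lemma idx_le {x : ℝ} (hx : 0 ≤ x) : tt (idx x) ≤ x := by
  classical
  exact Nat.findGreatest_spec (m := 0) (P := fun n => tt n ≤ x) (Nat.zero_le _) (by simpa [tt_zero] using hx)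

lemma idx_lt {x : ℝ} (hx : 0 ≤ x) : x < tt (idx x + 1) := by
  classical
  by_contra h
  push_neg at h
  have hcast : ((idx x + 1 : ℕ) : ℝ) ≤ (⌈x⌉₊ : ℝ) :=
    le_trans (le_trans (tt_ge _) h) (Nat.le_ceil x)
  have hle : idx x + 1 ≤ ⌈x⌉₊ := by exact_mod_cast hcast
  exact Nat.findGreatest_is_greatest (Nat.lt_succ_self _) hle h

lemma idx_eq {n : ℕ} {x : ℝ} (h1 : tt n ≤ x) (h2 : x < tt (n + 1)) : idx x = n := by
  have hx : 0 ≤ x := le_trans (tt_nonneg n) h1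
  have a1 := idx_le hx
  have a2 := idx_lt hx
  by_contra h
  rcases Nat.lt_or_ge (idx x) n with hlt | hge
  · have : tt (idx x + 1) ≤ tt n := tt_mono.monotone hlt
    linarith
  · have hlt : n < idx x := lt_of_le_of_ne hge (Ne.symm h)
    have : tt (n + 1) ≤ tt (idx x) := tt_mono.monotone hlt
    linarith

lemma gg_seg {a b : ℝ} {n : ℕ} {x : ℝ} (h1 : tt n ≤ x) (h2 : x ≤ tt (n + 1)) :
    gg a b x = vv a b n + sl a b n * (x - tt n) := by
  rcases lt_or_eq_of_le h2 with h2 | h2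
  · rw [gg, idx_eq h1 h2]
  · subst h2
    have he : idx (tt (n+1)) = n + 1 := idx_eq le_rfl (tt_mono (Nat.lt_succ_self _))
    rw [gg, he]
    simp [vv]

lemma gg_tt (a b : ℝ) (n : ℕ) : gg a b (tt n) = vv a b n := by
  rw [gg_seg le_rfl (tt_mono (Nat.lt_succ_self n)).le]
  simp

lemma gg_zero (a b : ℝ) : gg a b 0 = 0 := by
  have := gg_tt a b 0
  rwa [tt_zero] at this

lemma sl_bounds {a b : ℝ} (hab : a ≤ b) (n : ℕ) : a ≤ sl a b n ∧ sl a b n ≤ b := by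
  unfold sl; split_ifs
  · exact ⟨le_rfl, hab⟩
  · exact ⟨hab, le_rfl⟩


lemma vv_succ (a b : ℝ) (n : ℕ) :
    vv a b (n+1) = vv a b n + sl a b n * (tt (n + 1) - tt n) := rfl

lemma sl_even (a b : ℝ) (n : ℕ) : sl a b (2 * n) = a := by
  simp [sl, even_two_mul]

lemma sl_odd (a b : ℝ) (n : ℕ) : sl a b (2 * n + 1) = b := by
  have h : ¬ Even (2 * n + 1) := by
    simp [Nat.even_add_one, Nat.even_mul]
  simp [sl, h]

section
variable {a b : ℝ} (ha : 0 < a) (hab : a ≤ b)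


include hab in
lemma incr_aux : ∀ n : ℕ, ∀ x y : ℝ, 0 ≤ y → y ≤ x → x ≤ tt n →
    a * (x - y) ≤ gg a b x - gg a b y ∧ gg a b x - gg a b y ≤ b * (x - y) := by
  intro n
  induction n with
  | zero =>
    intro x y hy hyx hx
    rw [tt_zero] at hx
    have hx0 : x = 0 := le_antisymm hx (hy.trans hyx)
    have hy0 : y = 0 := le_antisymm (hyx.trans_eq hx0) hy
    subst hx0; subst hy0; simp
  | succ n ih =>
    intro x y hy hyx hx
    by_cases hxn : x ≤ tt n
    · exact ih x y hy hyx hxn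
    push_neg at hxn
    obtain ⟨hs1, hs2⟩ := sl_bounds hab n
    by_cases hyn : tt n ≤ y
    · rw [gg_seg (hyn.trans hyx) hx, gg_seg hyn (hyx.trans hx)]
      have h0 : 0 ≤ x - y := by linarith
      constructor
      · have := mul_le_mul_of_nonneg_right hs1 h0
        nlinarith
      · have := mul_le_mul_of_nonneg_right hs2 h0
        nlinarith
    · push_neg at hyn
      have h1 : gg a b x - gg a b (tt n) = sl a b n * (x - tt n) := by
        rw [gg_seg hxn.le hx, gg_tt]; ring
      have h2 := ih (tt n) y hy hyn.le le_rfl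
      have h3 : 0 ≤ x - tt n := by linarith
      have e1 : a * (x - tt n) ≤ sl a b n * (x - tt n) :=
        mul_le_mul_of_nonneg_right hs1 h3
      have e2 : sl a b n * (x - tt n) ≤ b * (x - tt n) :=
        mul_le_mul_of_nonneg_right hs2 h3
      constructor <;> nlinarith [h2.1, h2.2]

include hab in
lemma incr {x y : ℝ} (hy : 0 ≤ y) (hyx : y ≤ x) :
    a * (x - y) ≤ gg a b x - gg a b y ∧ gg a b x - gg a b y ≤ b * (x - y) := by
  obtain ⟨n, hn⟩ := (tt_tendsto.eventually_ge_atTop x).exists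
  exact incr_aux hab n x y hy hyx hn

include hab in
lemma gg_bounds {x : ℝ} (hx : 0 ≤ x) : a * x ≤ gg a b x ∧ gg a b x ≤ b * x := by
  have := incr hab le_rfl hx
  rw [gg_zero] at this
  simpa using this

include ha hab in
lemma abs_incr {x y : ℝ} (hx : 0 ≤ x) (hy : 0 ≤ y) :
    a * |x - y| ≤ |gg a b x - gg a b y| ∧ |gg a b x - gg a b y| ≤ b * |x - y| := by
  rcases le_total y x with h | h
  · obtain ⟨h1, h2⟩ := incr hab hy h
    rw [abs_of_nonneg (sub_nonneg.mpr h), abs_of_nonneg (le_trans (mul_nonneg ha.le (sub_nonneg.mpr h)) h1)]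
    exact ⟨h1, h2⟩
  · obtain ⟨h1, h2⟩ := incr hab hx h
    rw [abs_sub_comm x y, abs_sub_comm (gg a b x), abs_of_nonneg (sub_nonneg.mpr h),
      abs_of_nonneg (le_trans (mul_nonneg ha.le (sub_nonneg.mpr h)) h1)]
    exact ⟨h1, h2⟩

include ha hab in
lemma gg_contOn : ContinuousOn (gg a b) (Set.Ici 0) := by
  have hb : 0 ≤ b := (ha.trans_le hab).le
  apply LipschitzOnWith.continuousOn (K := ⟨b, hb⟩)
  apply LipschitzOnWith.of_dist_le_mul
  intro x hx y hy
  simp only [Real.dist_eq]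
  exact (abs_incr ha hab hx hy).2

include ha hab in
lemma gg_strictMonoOn : StrictMonoOn (gg a b) (Set.Ici 0) := by
  intro x hx y hy hxy
  have h := (incr hab hx hxy.le).1
  nlinarith [sub_pos.mpr hxy]

include ha hab in
lemma gg_isQI : (∀ x, 0 ≤ x → 0 ≤ gg a b x) ∧
  (∃ K : ℝ, 1 < K ∧ ∀ x y, 0 ≤ x → 0 ≤ y →
    (1 / K) * |x - y| - K ≤ |gg a b x - gg a b y| ∧ |gg a b x - gg a b y| ≤ K * |x - y| + K) ∧
  (∃ K' : ℝ, 0 < K' ∧ ∀ z, 0 ≤ z → ∃ x, 0 ≤ x ∧ |gg a b x - z| ≤ K') := by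
  have hb : 0 < b := ha.trans_le hab
  refine ⟨?_, ⟨b + 1/a + 1, ?_, ?_⟩, ⟨1, one_pos, ?_⟩⟩
  · intro x hx
    have := (gg_bounds hab hx).1
    nlinarith
  · have h : 0 < 1/a := by positivity
    linarith
  · intro x y hx hy
    have hia : 0 < 1/a := by positivity
    have hKpos : (0:ℝ) < b + 1/a + 1 := by linarith
    have expand : a * (b + 1/a + 1) = a*b + 1 + a := by field_simp
    have hKa : 1 / (b + 1/a + 1) ≤ a := by
      rw [div_le_iff₀ hKpos, expand]
      nlinarith [mul_pos ha hb]
    obtain ⟨h1, h2⟩ := abs_incr ha hab hx hy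
    have e1 : 1/(b + 1/a + 1) * |x - y| ≤ a * |x - y| :=
      mul_le_mul_of_nonneg_right hKa (abs_nonneg _)
    have e2 : b * |x - y| ≤ (b + 1/a + 1) * |x - y| :=
      mul_le_mul_of_nonneg_right (by linarith) (abs_nonneg _)
    exact ⟨by linarith, by linarith⟩
  · intro z hz
    have hM : 0 ≤ z / a := by positivity
    have hcont : ContinuousOn (gg a b) (Set.Icc 0 (z/a)) :=
      (gg_contOn ha hab).mono (fun x hx => hx.1)
    have hsub : z ∈ Set.Icc (gg a b 0) (gg a b (z/a)) := by
      rw [gg_zero]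
      refine ⟨hz, ?_⟩
      have := (gg_bounds hab hM).1
      rw [mul_div_cancel₀ z (ne_of_gt ha)] at this
      exact this
    obtain ⟨x, hx, hgx⟩ := intermediate_value_Icc hM hcont hsub
    exact ⟨x, hx.1, by rw [hgx]; simp⟩




lemma clamp_mem (lo hi c : ℝ) : max (min c hi) lo ∈ Set.uIcc lo hi := by
  rcases le_total lo hi with h | h
  · rw [Set.uIcc_of_le h]
    exact ⟨le_max_right _ _, max_le (min_le_right _ _) h⟩
  · rw [Set.uIcc_of_ge h]
    have : min c hi ≤ lo := (min_le_right _ _).trans h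
    rw [max_eq_right this]
    exact ⟨h, le_rfl⟩

-- ratio of breakpoint values
lemma inv_two_tendsto : Tendsto (fun n : ℕ => 1 / ((2*n : ℕ) + 1 : ℝ)) atTop (𝓝 0) := by
  apply tendsto_of_tendsto_of_tendsto_of_le_of_le tendsto_const_nhds
    tendsto_one_div_add_atTop_nhds_zero_nat
  · intro n; positivity
  · intro n
    apply one_div_le_one_div_of_le (by positivity)
    push_cast; linarith [Nat.cast_nonneg (α := ℝ) n]

include ha hab in
lemma lo_tendsto :
    Tendsto (fun n : ℕ => vv a b (2*n+1) / tt (2*n+1)) atTop (𝓝 a) := by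
  have hb : 0 < b := ha.trans_le hab
  have key : ∀ n : ℕ, a ≤ vv a b (2*n+1) / tt (2*n+1) ∧
      vv a b (2*n+1) / tt (2*n+1) ≤ a + (b - a) * (1 / ((2*n : ℕ) + 1 : ℝ)) := by
    intro n
    have htpos : 0 < tt (2*n+1) := tt_pos (Nat.succ_ne_zero _)
    have h1 : a * tt (2*n+1) ≤ vv a b (2*n+1) := by
      have := (gg_bounds hab (tt_nonneg (2*n+1))).1
      rwa [gg_tt] at this
    have h2 : vv a b (2*n) ≤ b * tt (2*n) := by
      have := (gg_bounds hab (tt_nonneg (2*n))).2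
      rwa [gg_tt] at this
    have hvs : vv a b (2*n+1) = vv a b (2*n) + a * (tt (2*n+1) - tt (2*n)) := by
      rw [vv_succ, sl_even]
    have hq : tt (2*n) / tt (2*n+1) ≤ 1 / ((2*n : ℕ) + 1 : ℝ) := tt_ratio (2*n)
    have hqn : 0 ≤ tt (2*n) / tt (2*n+1) := div_nonneg (tt_nonneg _) htpos.le
    constructor
    · rw [le_div_iff₀ htpos]; linarith
    · rw [div_le_iff₀ htpos]
      have e1 : vv a b (2*n+1) ≤ a * tt (2*n+1) + (b - a) * tt (2*n) := by
        rw [hvs]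
        have ht : tt (2*n) ≤ tt (2*n+1) := (tt_mono (Nat.lt_succ_self _)).le
        nlinarith
      have e2 : (b - a) * tt (2*n) ≤ (b - a) * ((1 / ((2*n : ℕ) + 1 : ℝ)) * tt (2*n+1)) := by
        apply mul_le_mul_of_nonneg_left _ (by linarith)
        rw [← div_le_iff₀ htpos] at *
        exact hq
      nlinarith
  refine tendsto_of_tendsto_of_tendsto_of_le_of_le
    tendsto_const_nhds ?_ (fun n => (key n).1) (fun n => (key n).2)
  have : Tendsto (fun n : ℕ => a + (b - a) * (1 / ((2*n : ℕ) + 1 : ℝ))) atTop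
      (𝓝 (a + (b - a) * 0)) :=
    tendsto_const_nhds.add (tendsto_const_nhds.mul inv_two_tendsto)
  simpa using this

include ha hab in
lemma hi_tendsto :
    Tendsto (fun n : ℕ => vv a b (2*n+2) / tt (2*n+2)) atTop (𝓝 b) := by
  have hb : 0 < b := ha.trans_le hab
  have key : ∀ n : ℕ, b - (b - a) * (1 / ((2*n+1 : ℕ) + 1 : ℝ)) ≤ vv a b (2*n+2) / tt (2*n+2) ∧
      vv a b (2*n+2) / tt (2*n+2) ≤ b := by
    intro n
    have htpos : 0 < tt (2*n+2) := tt_pos (Nat.succ_ne_zero _)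
    have h1 : vv a b (2*n+2) ≤ b * tt (2*n+2) := by
      have := (gg_bounds hab (tt_nonneg (2*n+2))).2
      rwa [gg_tt] at this
    have h2 : a * tt (2*n+1) ≤ vv a b (2*n+1) := by
      have := (gg_bounds hab (tt_nonneg (2*n+1))).1
      rwa [gg_tt] at this
    have hvs : vv a b (2*n+2) = vv a b (2*n+1) + b * (tt (2*n+2) - tt (2*n+1)) := by
      rw [show 2*n+2 = (2*n+1)+1 from rfl, vv_succ, sl_odd]
    have hq : tt (2*n+1) / tt (2*n+2) ≤ 1 / ((2*n+1 : ℕ) + 1 : ℝ) := tt_ratio (2*n+1)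
    constructor
    · rw [sub_le_iff_le_add, div_add' _ _ _ (ne_of_gt htpos), le_div_iff₀ htpos]
      have e1 : b * tt (2*n+2) - (b - a) * tt (2*n+1) ≤ vv a b (2*n+2) := by
        rw [hvs]; nlinarith
      have e2 : (b - a) * tt (2*n+1) ≤ (b - a) * ((1 / ((2*n+1 : ℕ) + 1 : ℝ)) * tt (2*n+2)) := by
        apply mul_le_mul_of_nonneg_left _ (by linarith)
        rw [← div_le_iff₀ htpos] at *
        exact hq
      nlinarith
    · rw [div_le_iff₀ htpos]; linarith
  refine tendsto_of_tendsto_of_tendsto_of_le_of_le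
    ?_ tendsto_const_nhds (fun n => (key n).1) (fun n => (key n).2)
  have h2 : Tendsto (fun n : ℕ => 1 / ((2*n+1 : ℕ) + 1 : ℝ)) atTop (𝓝 0) := by
    apply tendsto_of_tendsto_of_tendsto_of_le_of_le tendsto_const_nhds
      tendsto_one_div_add_atTop_nhds_zero_nat
    · intro n; positivity
    · intro n
      apply one_div_le_one_div_of_le (by positivity)
      push_cast; linarith [Nat.cast_nonneg (α := ℝ) n]
  have : Tendsto (fun n : ℕ => b - (b - a) * (1 / ((2*n+1 : ℕ) + 1 : ℝ))) atTop
      (𝓝 (b - (b - a) * 0)) :=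
    tendsto_const_nhds.sub (tendsto_const_nhds.mul h2)
  simpa using this

include ha hab in
lemma sset_eq : Sset (gg a b) = Set.Icc a b := by
  rw [Sset]
  have hb : 0 < b := ha.trans_le hab
  apply Set.Subset.antisymm
  · rintro c ⟨u, hu0, huT, huL⟩
    have hev : ∀ᶠ n in atTop, a ≤ gg a b (u n) / u n ∧ gg a b (u n) / u n ≤ b := by
      filter_upwards [huT.eventually_gt_atTop 0] with n hn
      obtain ⟨h1, h2⟩ := gg_bounds hab (hu0 n)
      exact ⟨(le_div_iff₀ hn).mpr h1, (div_le_iff₀ hn).mpr h2⟩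
    constructor
    · exact ge_of_tendsto huL (hev.mono fun n h => h.1)
    · exact le_of_tendsto huL (hev.mono fun n h => h.2)
  · intro c hc
    set lo : ℕ → ℝ := fun n => vv a b (2*n+1) / tt (2*n+1) with hlo
    set hi : ℕ → ℝ := fun n => vv a b (2*n+2) / tt (2*n+2) with hhi
    set cn : ℕ → ℝ := fun n => max (min c (hi n)) (lo n) with hcn
    have hcnT : Tendsto cn atTop (𝓝 c) := by
      have h1 : Tendsto (fun n => min c (hi n)) atTop (𝓝 (min c b)) :=
        tendsto_const_nhds.min (hi_tendsto ha hab)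
      have h2 : Tendsto cn atTop (𝓝 (max (min c b) a)) :=
        h1.max (lo_tendsto ha hab)
      rwa [min_eq_left hc.2, max_eq_left hc.1] at h2
    -- IVT on each interval
    have hstep : ∀ n : ℕ, ∃ x, x ∈ Set.Icc (tt (2*n+1)) (tt (2*n+2)) ∧
        gg a b x / x = cn n := by
      intro n
      have hle : tt (2*n+1) ≤ tt (2*n+2) := (tt_mono (Nat.lt_succ_self _)).le
      have hpos : 0 < tt (2*n+1) := tt_pos (Nat.succ_ne_zero _)
      have hIcc : Set.uIcc (tt (2*n+1)) (tt (2*n+2)) = Set.Icc (tt (2*n+1)) (tt (2*n+2)) :=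
        Set.uIcc_of_le hle
      have hcont : ContinuousOn (fun x => gg a b x / x) (Set.uIcc (tt (2*n+1)) (tt (2*n+2))) := by
        rw [hIcc]
        apply ContinuousOn.div
        · exact (gg_contOn ha hab).mono (fun x hx => le_trans hpos.le hx.1)
        · exact continuousOn_id
        · intro x hx
          exact ne_of_gt (lt_of_lt_of_le hpos hx.1)
      have hmem : cn n ∈ Set.uIcc (gg a b (tt (2*n+1)) / tt (2*n+1))
          (gg a b (tt (2*n+2)) / tt (2*n+2)) := by
        rw [gg_tt, gg_tt]
        exact clamp_mem _ _ _
      obtain ⟨x, hx, hgx⟩ := intermediate_value_uIcc hcont hmem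
      rw [hIcc] at hx
      exact ⟨x, hx, hgx⟩
    choose u hu1 hu2 using hstep
    refine ⟨u, ?_, ?_, ?_⟩
    · intro n
      exact le_trans (tt_nonneg _) (hu1 n).1
    · refine tendsto_atTop_mono (fun n => ?_) tendsto_natCast_atTop_atTop
      calc (n:ℝ) ≤ ((2*n+1 : ℕ) : ℝ) := by
              push_cast; linarith [Nat.cast_nonneg (α := ℝ) n]
        _ ≤ tt (2*n+1) := tt_ge _
        _ ≤ u n := (hu1 n).1
    · rw [tendsto_congr hu2]
      exact hcnT


end
end
end Stmt2Aux

/-- every compact subinterval `[a,b]` of `(0,∞)` is realized as `S_g` for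
some continuous, strictly increasing, piecewise-linear quasi-isometry `g` of `[0,∞)`. -/
theorem stmt2 (a b : ℝ) (ha : 0 < a) (hab : a ≤ b) :
    ∃ g : ℝ → ℝ, ContinuousOn g (Set.Ici 0) ∧ StrictMonoOn g (Set.Ici 0) ∧
      IsPL g ∧ IsQI g ∧ Sset g = Set.Icc a b := by
  refine ⟨Stmt2Aux.gg a b, Stmt2Aux.gg_contOn ha hab, Stmt2Aux.gg_strictMonoOn ha hab, ?_, ?_, ?_⟩
  · exact ⟨Stmt2Aux.tt, Stmt2Aux.tt_zero, Stmt2Aux.tt_mono, Stmt2Aux.tt_tendsto,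
      fun n => ⟨Stmt2Aux.sl a b n, fun x hx => by
        rw [Stmt2Aux.gg_seg hx.1 hx.2, Stmt2Aux.gg_tt]⟩⟩
  · exact Stmt2Aux.gg_isQI ha hab
  · exact Stmt2Aux.sset_eq ha hab
end

section
/- Let M ≥ 1 and let f, g be continuous quasi-isometries of [0,∞) with S_f = S_g = [1,M], where in addition g is a strictly increasing homeomorphism of [0,∞). Then f and g are H-equivalent if and only if for every ε > 0 there exists M' > 0 such that |f(x)/x − g(x)/x| < ε for all x > M' (equivalently, (f(x) − g(x))/x → 0 as x → ∞). -/
open Filter Topology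

lemma qi_div₁ {K D E : ℝ} (hK : 0 < K) (h : 1 / K * D - K ≤ E) : D ≤ K * E + K ^ 2 := by
  have h2 := mul_le_mul_of_nonneg_left h hK.le
  have h4 : K * (1 / K * D) = D := by field_simp
  nlinarith [h2, h4]

lemma qi_div₂ {K D E : ℝ} (hK : 0 < K) (h : D ≤ K * E + K ^ 2) : 1 / K * D - K ≤ E := by
  have h2 := mul_le_mul_of_nonneg_left h (by positivity : (0:ℝ) ≤ 1 / K)
  have h4 : 1 / K * (K * E) = E := by field_simp
  have h5 : 1 / K * K ^ 2 = K := by field_simp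
  nlinarith [h2, h4, h5]

set_option maxHeartbeats 3200000 in
/-- for `f, g` continuous quasi-isometries with `S_f = S_g = [1,M]` and `g`
a strictly increasing homeomorphism of `[0,∞)`, `f` and `g` are H-equivalent iff
`(f x - g x)/x → 0` as `x → ∞`. -/
theorem stmt3 (M : ℝ) (hM : 1 ≤ M) (f g : ℝ → ℝ) (hf : IsQI f) (hg : IsQI g)
    (hfc : ContinuousOn f (Set.Ici 0)) (hgc : ContinuousOn g (Set.Ici 0))
    (hSf : Sset f = Set.Icc 1 M) (hSg : Sset g = Set.Icc 1 M)
    (hgm : StrictMonoOn g (Set.Ici 0)) (hgbij : Set.BijOn g (Set.Ici 0) (Set.Ici 0)) :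
    HEquiv f g ↔ Tendsto (fun x => (f x - g x) / x) atTop (𝓝 0) := by
  obtain ⟨hf0, ⟨Kf, hKf1, hKf⟩, ⟨Kf', hKf'0, hKf'⟩⟩ := hf
  obtain ⟨hg0, ⟨Kg, hKg1, hKg⟩, -⟩ := hg
  have hKg0 : (0:ℝ) < Kg := lt_trans one_pos hKg1
  have hKf0 : (0:ℝ) < Kf := lt_trans one_pos hKf1
  -- g 0 = 0
  have hg00 : g 0 = 0 := by
    obtain ⟨x, hx, hgx⟩ := hgbij.surjOn (Set.self_mem_Ici : (0:ℝ) ∈ Set.Ici 0)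
    rcases eq_or_lt_of_le (Set.mem_Ici.mp hx : (0:ℝ) ≤ x) with h | h
    · rw [← h] at hgx; exact hgx
    · have h1 := hgm Set.self_mem_Ici hx h
      have h2 := hg0 0 le_rfl
      rw [hgx] at h1
      linarith
  -- upper linear bound for g
  have hgub : ∀ x, 0 ≤ x → g x ≤ Kg * x + Kg := by
    intro x hx
    have := (hKg x 0 hx le_rfl).2
    rwa [hg00, sub_zero, sub_zero, abs_of_nonneg (hg0 x hx), abs_of_nonneg hx] at this
  -- lower linear bound for g, cleared of divisions
  have hglb' : ∀ x, 0 ≤ x → x ≤ Kg * g x + Kg ^ 2 := by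
    intro x hx
    have := (hKg x 0 hx le_rfl).1
    rw [hg00, sub_zero, sub_zero, abs_of_nonneg (hg0 x hx), abs_of_nonneg hx] at this
    exact qi_div₁ hKg0 this
  -- g positive at positive points
  have hgpos : ∀ x, 0 < x → 0 < g x := by
    intro x hx
    have := hgm Set.self_mem_Ici (Set.mem_Ici.mpr hx.le) hx
    rwa [hg00] at this
  -- g tends to infinity
  have hgtop : Tendsto g atTop atTop := by
    apply tendsto_atTop_mono' atTop
      (show (fun x => (x - Kg ^ 2) / Kg) ≤ᶠ[atTop] g from ?_)
    · exact (tendsto_atTop_add_const_right atTop (-(Kg ^ 2)) tendsto_id).atTop_div_const hKg0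
    · filter_upwards [eventually_ge_atTop 0] with x hx
      rw [div_le_iff₀ hKg0]
      have := hglb' x hx
      nlinarith
  constructor
  · -- forward direction
    rintro ⟨h, ⟨hh0, ⟨Kh, hKh1, hKh⟩, -⟩, hh1, C, hC⟩
    have h1 : Tendsto (fun x => h (g x) / g x - 1) atTop (𝓝 0) := by
      have := (hh1.comp hgtop).sub_const 1
      simpa using this
    have key : ∀ᶠ x in atTop,
        |(f x - g x) / x| ≤ C / x + |h (g x) / g x - 1| * (2 * Kg) := by
      filter_upwards [eventually_ge_atTop 1] with x hx
      have hx0 : (0:ℝ) < x := lt_of_lt_of_le one_pos hx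
      have hgx : 0 < g x := hgpos x hx0
      have e1 : |h (g x) - g x| = |h (g x) / g x - 1| * g x := by
        have e : (h (g x) / g x - 1) * g x = h (g x) - g x := by field_simp
        rw [← e, abs_mul, abs_of_pos hgx]
      have t3 : g x ≤ 2 * Kg * x := by
        have := hgub x hx0.le
        nlinarith
      have t1 : |f x - g x| ≤ C + |h (g x) / g x - 1| * (2 * Kg) * x := by
        calc |f x - g x| ≤ |f x - h (g x)| + |h (g x) - g x| := by
              have e : f x - g x = (f x - h (g x)) + (h (g x) - g x) := by ring
              rw [e]; exact abs_add_le _ _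
          _ ≤ C + |h (g x) / g x - 1| * (2 * Kg * x) := by
              have := mul_le_mul_of_nonneg_left t3 (abs_nonneg (h (g x) / g x - 1))
              rw [e1] at *
              exact add_le_add (hC x hx0.le) this
          _ = C + |h (g x) / g x - 1| * (2 * Kg) * x := by ring
      rw [abs_div, abs_of_pos hx0]
      have e2 : C / x + |h (g x) / g x - 1| * (2 * Kg)
          = (C + |h (g x) / g x - 1| * (2 * Kg) * x) / x := by
        field_simp
      rw [e2]
      exact (div_le_div_iff_of_pos_right hx0).mpr t1
    have rhs : Tendsto (fun x => C / x + |h (g x) / g x - 1| * (2 * Kg)) atTop (𝓝 0) := by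
      have l1 : Tendsto (fun x : ℝ => C / x) atTop (𝓝 0) :=
        tendsto_const_nhds.div_atTop tendsto_id
      have l2 := h1.abs.mul_const (2 * Kg)
      simpa using l1.add l2
    have habs := squeeze_zero' (by filter_upwards with x using abs_nonneg _) key rhs
    exact (tendsto_zero_iff_abs_tendsto_zero _).mpr habs
  · -- backward direction
    intro hlim
    obtain ⟨ginv, hright, hmem, hleft⟩ :
        ∃ ginv : ℝ → ℝ, (∀ y, 0 ≤ y → g (ginv y) = y) ∧ (∀ y, 0 ≤ y → 0 ≤ ginv y) ∧
          (∀ x, 0 ≤ x → ginv (g x) = x) := by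
      have hex : ∀ y : ℝ, 0 ≤ y → ∃ a ∈ Set.Ici (0:ℝ), g a = y := by
        intro y hy
        obtain ⟨a, ha, hga⟩ := hgbij.surjOn (Set.mem_Ici.mpr hy)
        exact ⟨a, ha, hga⟩
      exact ⟨Function.invFunOn g (Set.Ici 0),
        fun y hy => Function.invFunOn_eq (f := g) (hex y hy),
        fun y hy => Function.invFunOn_mem (f := g) (hex y hy),
        fun x hx => hgbij.injOn.leftInvOn_invFunOn hx⟩
    -- ginv tends to infinity
    have hinvtop : Tendsto ginv atTop atTop := by
      apply tendsto_atTop_mono' atTop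
        (show (fun y => (y - Kg) / Kg) ≤ᶠ[atTop] ginv from ?_)
      · exact (tendsto_atTop_add_const_right atTop (-Kg) tendsto_id).atTop_div_const hKg0
      · filter_upwards [eventually_ge_atTop 0] with y hy
        have h1 : y ≤ Kg * ginv y + Kg := by
          have := hgub (ginv y) (hmem y hy)
          rwa [hright y hy] at this
        rw [div_le_iff₀ hKg0]
        linarith
    refine ⟨fun y => f (ginv y), ⟨?_, ?_, ?_⟩, ?_, 0, ?_⟩
    · -- nonnegativity
      intro y hy
      exact hf0 _ (hmem y hy)
    · -- QI bounds
      set K : ℝ := Kf * Kg ^ 2 + Kf + Kg ^ 2 with hKdef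
      have hK1 : (1:ℝ) < K := by nlinarith
      have hK0 : (0:ℝ) < K := lt_trans one_pos hK1
      refine ⟨K, hK1, fun u v hu hv => ?_⟩
      set a := ginv u with hadef
      set b := ginv v with hbdef
      have ha : 0 ≤ a := hmem u hu
      have hb : 0 ≤ b := hmem v hv
      have hga : g a = u := hright u hu
      have hgb : g b = v := hright v hv
      obtain ⟨hg_lb, hg_ub⟩ := hKg a b ha hb
      rw [hga, hgb] at hg_lb hg_ub
      obtain ⟨hf_lb, hf_ub⟩ := hKf a b ha hb
      have hab := qi_div₁ hKg0 hg_lb  -- |a - b| ≤ Kg * |u - v| + Kg ^ 2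
      have hD := qi_div₁ hKf0 hf_lb  -- |a - b| ≤ Kf * |f a - f b| + Kf ^ 2
      constructor
      · -- lower bound
        apply qi_div₂ hK0
        -- |u - v| ≤ K * |f a - f b| + K ^ 2
        nlinarith [hD, hg_ub, abs_nonneg (f a - f b), abs_nonneg (a - b),
          abs_nonneg (u - v), mul_le_mul_of_nonneg_left hD hKg0.le,
          mul_pos hKf0 hKg0, sq_nonneg Kg, sq_nonneg Kf, sq_nonneg (Kg - 1),
          sq_nonneg (Kf - 1), mul_pos (mul_pos hKf0 hKg0) hKg0]
      · -- upper bound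
        nlinarith [hab, hf_ub, abs_nonneg (u - v), abs_nonneg (a - b),
          mul_le_mul_of_nonneg_left hab hKf0.le, sq_nonneg (Kg - 1),
          mul_nonneg (mul_nonneg hKf0.le (sub_nonneg.mpr hKg1.le)) (abs_nonneg (u - v))]
    · -- coarse density
      refine ⟨Kf', hKf'0, fun z hz => ?_⟩
      obtain ⟨x, hx, hxz⟩ := hKf' z hz
      refine ⟨g x, hg0 x hx, ?_⟩
      show |f (ginv (g x)) - z| ≤ Kf'
      rw [hleft x hx]
      exact hxz
    · -- h y / y → 1
      have step1 : Tendsto (fun x => (f x - g x) / g x) atTop (𝓝 0) := by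
        apply (tendsto_zero_iff_abs_tendsto_zero _).mpr
        apply squeeze_zero' (by filter_upwards with x using abs_nonneg _)
          (g := fun x => |(f x - g x) / x| * (2 * Kg)) ?_ ?_
        · filter_upwards [eventually_ge_atTop (max 1 (2 * Kg ^ 2))] with x hx
          have hx1 : (1:ℝ) ≤ x := le_trans (le_max_left _ _) hx
          have hx2 : 2 * Kg ^ 2 ≤ x := le_trans (le_max_right _ _) hx
          have hx0 : (0:ℝ) < x := lt_of_lt_of_le one_pos hx1
          have hgx : 0 < g x := hgpos x hx0
          have hxle : x ≤ 2 * Kg * g x := by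
            have := hglb' x hx0.le
            nlinarith
          show |(f x - g x) / g x| ≤ |(f x - g x) / x| * (2 * Kg)
          rw [abs_div, abs_div, abs_of_pos hgx, abs_of_pos hx0,
            div_le_iff₀ hgx, div_mul_eq_mul_div, div_mul_eq_mul_div, le_div_iff₀ hx0]
          nlinarith [abs_nonneg (f x - g x)]
        · have := hlim.abs.mul_const (2 * Kg)
          simpa using this
      have step2 : Tendsto (fun x => f x / g x) atTop (𝓝 1) := by
        have l1 : Tendsto (fun x => 1 + (f x - g x) / g x) atTop (𝓝 1) := by
          have := step1.const_add 1
          simpa using this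
        apply l1.congr'
        filter_upwards [eventually_gt_atTop 0] with x hx
        have hgx : g x ≠ 0 := (hgpos x hx).ne'
        field_simp
        ring
      have step3 := step2.comp hinvtop
      apply step3.congr'
      filter_upwards [eventually_ge_atTop 0] with y hy
      show f (ginv y) / g (ginv y) = f (ginv y) / y
      rw [hright y hy]
    · -- bounded closeness (exact equality)
      intro x hx
      show |f x - f (ginv (g x))| ≤ 0
      rw [hleft x hx]
      simp
end

section
/- Let f, g : [0,∞) → [0,∞) be quasi-isometries and let (a_n) be a strictly increasing sequence tending to ∞ with f(a_n)/a_n → 1 and g(a_n)/a_n → 1. Suppose that for each n there is a partition a_n = x_{n,0} < x_{n,1} < ⋯ < x_{n,r_n} = a_{n+1} such that f and g are both affine on each interval [x_{n,i−1}, x_{n,i}], with slopes λ_{n,i} and λ'_{n,i} respectively. If max_{1≤i≤r_n} |λ_{n,i} − λ'_{n,i}| → 0 as n → ∞, then (f(x) − g(x))/x → 0 as x → ∞ (so by the equivalence criterion, f and g represent the same class modulo H). -/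
open Filter Topology

/-- with `f(aₙ)/aₙ → 1`, `g(aₙ)/aₙ → 1`, and common partitions of
`[aₙ, aₙ₊₁]` on whose pieces `f, g` are affine with slopes `λₙᵢ`, `λ'ₙᵢ`, if
`maxᵢ |λₙᵢ - λ'ₙᵢ| → 0` then `(f x - g x)/x → 0`. -/
theorem stmt4 (f g : ℝ → ℝ) (hf : IsQI f) (hg : IsQI g)
    (a : ℕ → ℝ) (ha : StrictMono a) (hatop : Tendsto a atTop atTop)
    (hfa : Tendsto (fun n => f (a n) / a n) atTop (𝓝 1))
    (hga : Tendsto (fun n => g (a n) / a n) atTop (𝓝 1))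
    (r : ℕ → ℕ) (hr : ∀ n, 1 ≤ r n)
    (x : ℕ → ℕ → ℝ) (hx0 : ∀ n, x n 0 = a n) (hxr : ∀ n, x n (r n) = a (n + 1))
    (hxmono : ∀ n, ∀ i < r n, x n i < x n (i + 1))
    (lam lam' : ℕ → ℕ → ℝ)
    (hflam : ∀ n, ∀ i < r n, ∀ t ∈ Set.Icc (x n i) (x n (i + 1)),
      f t = f (x n i) + lam n i * (t - x n i))
    (hglam : ∀ n, ∀ i < r n, ∀ t ∈ Set.Icc (x n i) (x n (i + 1)),
      g t = g (x n i) + lam' n i * (t - x n i))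
    (hconv : ∀ ε : ℝ, 0 < ε → ∃ N : ℕ, ∀ n ≥ N, ∀ i < r n, |lam n i - lam' n i| < ε) :
    Tendsto (fun t => (f t - g t) / t) atTop (𝓝 0) := by
  have mono0 : ∀ n, ∀ j ≤ r n, x n 0 ≤ x n j := by
    intro n j
    induction j with
    | zero => intro _; exact le_refl _
    | succ j ih =>
      intro h
      have h1 : j < r n := by omega
      have := hxmono n j h1
      have := ih (by omega)
      linarith
  -- key estimate on each block
  have key : ∀ n : ℕ, ∀ ε : ℝ, 0 ≤ ε → (∀ i < r n, |lam n i - lam' n i| ≤ ε) →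
      ∀ j ≤ r n, ∀ t ∈ Set.Icc (x n 0) (x n j),
        |(f t - g t) - (f (x n 0) - g (x n 0))| ≤ ε * (t - x n 0) := by
    intro n ε hε hslope j
    induction j with
    | zero =>
      intro _ t ht
      have : t = x n 0 := le_antisymm ht.2 ht.1
      simp [this]
    | succ j ih =>
      intro hj t ht
      have hj' : j < r n := by omega
      by_cases hcase : t ≤ x n j
      · exact ih (by omega) t ⟨ht.1, hcase⟩
      · push_neg at hcase
        have ht2 : t ∈ Set.Icc (x n j) (x n (j + 1)) := ⟨le_of_lt hcase, ht.2⟩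
        have hf' := hflam n j hj' t ht2
        have hg' := hglam n j hj' t ht2
        have hx0j : x n 0 ≤ x n j := mono0 n j (le_of_lt hj')
        have h1 := ih (le_of_lt hj') (x n j) ⟨hx0j, le_refl _⟩
        have h2 : |(f t - g t) - (f (x n j) - g (x n j))| ≤ ε * (t - x n j) := by
          have heq : (f t - g t) - (f (x n j) - g (x n j))
              = (lam n j - lam' n j) * (t - x n j) := by
            rw [hf', hg']; ring
          rw [heq, abs_mul, abs_of_nonneg (by linarith [ht2.1] : (0:ℝ) ≤ t - x n j)]
          exact mul_le_mul_of_nonneg_right (hslope j hj') (by linarith [ht2.1])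
        calc |(f t - g t) - (f (x n 0) - g (x n 0))|
            ≤ |(f t - g t) - (f (x n j) - g (x n j))|
              + |(f (x n j) - g (x n j)) - (f (x n 0) - g (x n 0))| := by
              exact abs_sub_le _ _ _
          _ ≤ ε * (t - x n j) + ε * (x n j - x n 0) := add_le_add h2 h1
          _ = ε * (t - x n 0) := by ring
  have hDan : Tendsto (fun n => (f (a n) - g (a n)) / a n) atTop (𝓝 0) := by
    have := hfa.sub hga
    simpa [sub_div] using this
  rw [Metric.tendsto_nhds]
  intro ε hε
  rw [eventually_atTop]
  obtain ⟨N1, hN1⟩ := hconv (ε / 2) (by linarith)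
  have h2 : ∀ᶠ n in atTop, |(f (a n) - g (a n)) / a n| < ε / 2 := by
    have := Metric.tendsto_nhds.mp hDan (ε / 2) (by linarith)
    simp only [Real.dist_eq, sub_zero] at this
    exact this
  obtain ⟨N2, hN2⟩ := eventually_atTop.mp h2
  obtain ⟨N3, hN3⟩ := eventually_atTop.mp (hatop.eventually_ge_atTop 1)
  set N := max N1 (max N2 N3) with hN
  refine ⟨a N, fun t hta => ?_⟩
  -- find the block containing t
  have hS : ∃ m, t < a m := by
    obtain ⟨m, hm⟩ := eventually_atTop.mp (hatop.eventually_ge_atTop (t + 1))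
    exact ⟨m, by linarith [hm m (le_refl m)]⟩
  classical
  set m0 := Nat.find hS with hm0
  have hm0spec : t < a m0 := Nat.find_spec hS
  have hm0gt : N < m0 := by
    by_contra hcon
    push_neg at hcon
    have : a m0 ≤ a N := ha.monotone hcon
    linarith
  set n := m0 - 1 with hn
  have hn1 : n + 1 = m0 := by omega
  have hnN : N ≤ n := by omega
  have hant : a n ≤ t := by
    by_contra hcon
    push_neg at hcon
    have := Nat.find_min hS (show n < m0 by omega)
    exact this hcon
  have htan1 : t < a (n + 1) := by rw [hn1]; exact hm0spec
  have han1 : (1:ℝ) ≤ a n := hN3 n (by omega)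
  have hanpos : (0:ℝ) < a n := by linarith
  have htpos : (0:ℝ) < t := by linarith
  -- apply key
  have hkey := key n (ε / 2) (by linarith)
    (fun i hi => le_of_lt (hN1 n (by omega) i hi)) (r n) (le_refl _)
    t (by rw [hx0, hxr]; exact ⟨hant, le_of_lt htan1⟩)
  rw [hx0] at hkey
  have hDa : |f (a n) - g (a n)| < ε / 2 * a n := by
    have := hN2 n (by omega)
    rw [abs_div, abs_of_pos hanpos] at this
    calc |f (a n) - g (a n)| = |f (a n) - g (a n)| / a n * a n := by
          field_simp
      _ < ε / 2 * a n := by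
          exact mul_lt_mul_of_pos_right this hanpos
  have hDt : |f t - g t| ≤ |f (a n) - g (a n)| + ε / 2 * (t - a n) := by
    calc |f t - g t| ≤ |f (a n) - g (a n)|
        + |(f t - g t) - (f (a n) - g (a n))| := by
          have := abs_add_le (f (a n) - g (a n)) ((f t - g t) - (f (a n) - g (a n)))
          simpa using this
      _ ≤ |f (a n) - g (a n)| + ε / 2 * (t - a n) := by linarith
  rw [Real.dist_eq, sub_zero, abs_div, abs_of_pos htpos, div_lt_iff₀ htpos]
  nlinarith [abs_nonneg (f t - g t), abs_nonneg (f (a n) - g (a n))]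
end

section
/- Let f, g : [0,∞) → [0,∞) be quasi-isometries and let (a_n) be a strictly increasing sequence tending to ∞ with a_1 > 0, f(a_n)/a_n → 1 and g(a_n)/a_n → 1. Suppose that for each n there is a partition a_n = x_{n,0} < x_{n,1} < ⋯ < x_{n,r_n} = a_{n+1} such that f and g are both affine on each interval [x_{n,i−1}, x_{n,i}], with slopes λ_{n,i} and λ'_{n,i} respectively. Assume there exists K₁ > 1 such that x_{n,i} > K₁·x_{n,i−1} for all n and all 1 ≤ i ≤ r_n, and assume (f(x) − g(x))/x → 0 as x → ∞. Then max_{1≤i≤r_n} |λ_{n,i} − λ'_{n,i}| → 0 as n → ∞. -/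
open Filter Topology

/-- conversely, if the partition points grow geometrically
(`xₙᵢ > K₁ xₙ,ᵢ₋₁` with `K₁ > 1`) and `(f x - g x)/x → 0`, then
`maxᵢ |λₙᵢ - λ'ₙᵢ| → 0`. -/
theorem stmt5 (f g : ℝ → ℝ) (hf : IsQI f) (hg : IsQI g)
    (a : ℕ → ℝ) (ha0 : 0 < a 0) (ha : StrictMono a) (hatop : Tendsto a atTop atTop)
    (hfa : Tendsto (fun n => f (a n) / a n) atTop (𝓝 1))
    (hga : Tendsto (fun n => g (a n) / a n) atTop (𝓝 1))
    (r : ℕ → ℕ) (hr : ∀ n, 1 ≤ r n)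
    (x : ℕ → ℕ → ℝ) (hx0 : ∀ n, x n 0 = a n) (hxr : ∀ n, x n (r n) = a (n + 1))
    (hxmono : ∀ n, ∀ i < r n, x n i < x n (i + 1))
    (lam lam' : ℕ → ℕ → ℝ)
    (hflam : ∀ n, ∀ i < r n, ∀ t ∈ Set.Icc (x n i) (x n (i + 1)),
      f t = f (x n i) + lam n i * (t - x n i))
    (hglam : ∀ n, ∀ i < r n, ∀ t ∈ Set.Icc (x n i) (x n (i + 1)),
      g t = g (x n i) + lam' n i * (t - x n i))
    (K₁ : ℝ) (hK₁ : 1 < K₁) (hgeo : ∀ n, ∀ i < r n, K₁ * x n i < x n (i + 1))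
    (hdiff : Tendsto (fun t => (f t - g t) / t) atTop (𝓝 0)) :
    ∀ ε : ℝ, 0 < ε → ∃ N : ℕ, ∀ n ≥ N, ∀ i < r n, |lam n i - lam' n i| < ε := by

  intro ε hε
  set δ : ℝ := ε * (K₁ - 1) / (2 * K₁) with hδdef
  have hK₁0 : (0:ℝ) < K₁ := lt_trans one_pos hK₁
  have hδ : 0 < δ := by
    apply div_pos (mul_pos hε (by linarith)) (by linarith)
  -- eventual bound on (f t - g t)/t
  have h1 : ∀ᶠ t in atTop, |(f t - g t) / t| < δ := by
    have := hdiff.eventually (Metric.ball_mem_nhds (0:ℝ) hδ)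
    filter_upwards [this] with t ht
    rw [abs_div]
    simpa [Real.dist_eq, abs_div] using ht
  obtain ⟨T, hT⟩ := eventually_atTop.mp h1
  obtain ⟨N, hN⟩ := eventually_atTop.mp (hatop.eventually_ge_atTop T)
  refine ⟨N, fun n hn i hi => ?_⟩
  have hapos : 0 < a n := lt_of_lt_of_le ha0 (ha.monotone (Nat.zero_le n))
  -- x n j ≥ a n for j ≤ r n
  have hxa : ∀ j, j ≤ r n → a n ≤ x n j := by
    intro j
    induction j with
    | zero => intro _; rw [hx0]
    | succ k ih =>
      intro hk
      have hk' : k < r n := Nat.lt_of_succ_le hk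
      exact le_of_lt (lt_of_le_of_lt (ih (le_of_lt hk')) (hxmono n k hk'))
  set u := x n i with hu
  set v := x n (i + 1) with hv
  have hau : a n ≤ u := hxa i (le_of_lt hi)
  have hav : a n ≤ v := hxa (i + 1) hi
  have hupos : 0 < u := lt_of_lt_of_le hapos hau
  have hvpos : 0 < v := lt_of_lt_of_le hapos hav
  have huv : u < v := hxmono n i hi
  have hKuv : K₁ * u < v := hgeo n i hi
  have hfv : f v = f u + lam n i * (v - u) :=
    hflam n i hi v ⟨le_of_lt huv, le_refl v⟩
  have hgv : g v = g u + lam' n i * (v - u) :=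
    hglam n i hi v ⟨le_of_lt huv, le_refl v⟩
  have hTu : T ≤ u := le_trans (hN n hn) hau
  have hTv : T ≤ v := le_trans (hN n hn) hav
  have hbu : |f u - g u| < δ * u := by
    have := hT u hTu
    rw [abs_div, abs_of_pos hupos] at this
    exact (div_lt_iff₀ hupos).mp this
  have hbv : |f v - g v| < δ * v := by
    have := hT v hTv
    rw [abs_div, abs_of_pos hvpos] at this
    exact (div_lt_iff₀ hvpos).mp this
  have key : (lam n i - lam' n i) * (v - u) = (f v - g v) - (f u - g u) := by
    rw [hfv, hgv]; ring
  have h2 : |lam n i - lam' n i| * (v - u) < δ * v + δ * u := by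
    have : |(lam n i - lam' n i) * (v - u)| ≤ |f v - g v| + |f u - g u| := by
      rw [key]; exact abs_sub _ _
    rw [abs_mul, abs_of_pos (by linarith : (0:ℝ) < v - u)] at this
    linarith
  have h3 : δ * v + δ * u < 2 * δ * v := by nlinarith
  have h4 : v * (K₁ - 1) / K₁ < v - u := by
    rw [div_lt_iff₀ hK₁0]; nlinarith
  have habs : 0 ≤ |lam n i - lam' n i| := abs_nonneg _
  have h5 : |lam n i - lam' n i| * (v * (K₁ - 1) / K₁) < 2 * δ * v := by
    calc |lam n i - lam' n i| * (v * (K₁ - 1) / K₁)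
        ≤ |lam n i - lam' n i| * (v - u) := by
          apply mul_le_mul_of_nonneg_left (le_of_lt h4) habs
      _ < δ * v + δ * u := h2
      _ < 2 * δ * v := h3
  have hδv : 2 * δ * v = ε * (v * (K₁ - 1) / K₁) := by
    rw [hδdef]; field_simp
  rw [hδv] at h5
  have hpos : 0 < v * (K₁ - 1) / K₁ := div_pos (mul_pos hvpos (by linarith)) hK₁0
  exact lt_of_mul_lt_mul_right (by linarith [h5]) (le_of_lt hpos)
end

section
/- There exist continuous, strictly increasing, piecewise-linear quasi-isometries f, g : [0,∞) → [0,∞), a strictly increasing sequence (a_n) tending to ∞ with f(a_n)/a_n → 1 and g(a_n)/a_n → 1, and for each n a partition a_n = x_{n,0} < x_{n,1} < x_{n,2} = a_{n+1} on whose pieces both f and g are affine, such that (f(x) − g(x))/x → 0 as x → ∞ (so f and g agree modulo H), yet the maximal slope difference max_i |λ_{n,i} − λ'_{n,i}| ≥ 1/4 for every n; moreover sup_{x≥0} |f(x) − g(x)| = ∞. In particular, the geometric spacing hypothesis x_{n,i} > K₁·x_{n,i−1} in the converse direction of the slope-comparison theorem cannot be dropped. -/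
open Filter Topology

noncomputable section
namespace Stmt6Aux

def S : Set ℝ := Set.range (fun n : ℕ => ((n:ℝ))^2)

noncomputable def phi (x : ℝ) : ℝ := Metric.infDist x S

noncomputable def F (x : ℝ) : ℝ := x + (1/2) * phi x

lemma phi_nonneg (x : ℝ) : 0 ≤ phi x := Metric.infDist_nonneg

lemma phi_lip (x y : ℝ) : |phi x - phi y| ≤ |x - y| := by
  have h1 := Metric.infDist_le_infDist_add_dist (x := x) (y := y) (s := S)
  have h2 := Metric.infDist_le_infDist_add_dist (x := y) (y := x) (s := S)
  rw [Real.dist_eq] at h1 h2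
  rw [abs_sub_le_iff]
  have h3 : |y - x| = |x - y| := abs_sub_comm y x
  constructor <;> [skip; rw [abs_sub_comm]] <;> simp only [phi] <;> linarith

lemma sq_mem (n : ℕ) : ((n:ℝ))^2 ∈ S := ⟨n, rfl⟩

lemma phi_formula (n : ℕ) (x : ℝ) (h1 : ((n:ℝ))^2 ≤ x) (h2 : x ≤ ((n:ℝ)+1)^2) :
    phi x = min (x - (n:ℝ)^2) (((n:ℝ)+1)^2 - x) := by
  apply le_antisymm
  · apply le_min
    · have := Metric.infDist_le_dist_of_mem (x := x) (sq_mem n)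
      rwa [Real.dist_eq, abs_of_nonneg (by linarith)] at this
    · have hm : ((n:ℝ)+1)^2 ∈ S := by
        have := sq_mem (n+1); simpa using this
      have := Metric.infDist_le_dist_of_mem (x := x) hm
      rwa [Real.dist_eq, abs_of_nonpos (by linarith), neg_sub] at this
  · by_contra hlt
    push_neg at hlt
    obtain ⟨y, ⟨m, rfl⟩, hy⟩ := (Metric.infDist_lt_iff ⟨_, sq_mem 0⟩).1 hlt
    rw [Real.dist_eq] at hy
    rcases le_or_gt m n with hmn | hmn
    · have : ((m:ℝ))^2 ≤ (n:ℝ)^2 := by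
        have : (m:ℝ) ≤ n := Nat.cast_le.2 hmn
        nlinarith [Nat.cast_nonneg (α := ℝ) m]
      have habs : |x - ((m:ℝ))^2| = x - (m:ℝ)^2 := abs_of_nonneg (by linarith)
      have := min_le_left (x - (n:ℝ)^2) (((n:ℝ)+1)^2 - x)
      linarith [hy.le, habs.symm.le]
    · have hle : ((n:ℝ)+1)^2 ≤ ((m:ℝ))^2 := by
        have : ((n:ℝ)+1) ≤ m := by exact_mod_cast hmn
        nlinarith [Nat.cast_nonneg (α := ℝ) n]
      have habs : |x - ((m:ℝ))^2| = (m:ℝ)^2 - x := by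
        rw [abs_of_nonpos (by linarith)]; ring
      have := min_le_right (x - (n:ℝ)^2) (((n:ℝ)+1)^2 - x)
      linarith

lemma phi_sq (n : ℕ) : phi (((n:ℝ))^2) = 0 := by
  rw [phi_formula n _ le_rfl (by nlinarith [Nat.cast_nonneg (α := ℝ) n])]
  rw [sub_self, min_eq_left (by nlinarith [Nat.cast_nonneg (α := ℝ) n])]

lemma F_sq (n : ℕ) : F (((n:ℝ))^2) = ((n:ℝ))^2 := by
  simp [F, phi_sq]

lemma F_lower {x y : ℝ} (h : y ≤ x) : (1/2) * (x - y) ≤ F x - F y := by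
  have := phi_lip x y
  rw [abs_of_nonneg (by linarith : (0:ℝ) ≤ x - y)] at this
  have := abs_le.1 this
  simp only [F]; nlinarith [this.1, this.2]

lemma F_strictMono : StrictMono F := by
  intro x y hxy
  have := F_lower hxy.le
  linarith

lemma F_cont : Continuous F := by
  apply continuous_id.add
  exact continuous_const.mul (Metric.continuous_infDist_pt S)

lemma F_ge (x : ℝ) : x ≤ F x := by
  have := phi_nonneg x; simp [F]; linarith

lemma phi_le_sqrt (t : ℝ) (ht : 0 ≤ t) : phi t ≤ Real.sqrt t + 1 := by
  set n := Nat.sqrt ⌊t⌋₊ with hn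
  have h1 : (n:ℝ)^2 ≤ t := by
    have : n^2 ≤ ⌊t⌋₊ := by
      have := Nat.sqrt_le' ⌊t⌋₊; simpa [pow_two] using this
    calc ((n:ℝ))^2 = ((n^2 : ℕ) : ℝ) := by push_cast; ring
    _ ≤ (⌊t⌋₊ : ℝ) := by exact_mod_cast this
    _ ≤ t := Nat.floor_le ht
  have h2 : t ≤ ((n:ℝ)+1)^2 := by
    have h : ⌊t⌋₊ < (n+1)^2 := by
      have := Nat.lt_succ_sqrt' ⌊t⌋₊; simpa [pow_two] using this
    have : t < (⌊t⌋₊ : ℝ) + 1 := Nat.lt_floor_add_one t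
    have h' : ((⌊t⌋₊ : ℝ)) + 1 ≤ (((n+1)^2 : ℕ) : ℝ) := by exact_mod_cast h
    push_cast at h' ⊢
    linarith
  rw [phi_formula n t h1 h2]
  have hns : (n:ℝ) ≤ Real.sqrt t := by
    rw [show (n:ℝ) = Real.sqrt ((n:ℝ)^2) by rw [Real.sqrt_sq (Nat.cast_nonneg n)]]
    exact Real.sqrt_le_sqrt h1
  calc min (t - (n:ℝ)^2) (((n:ℝ)+1)^2 - t) ≤ (n:ℝ) + 1 := by
        rcases le_total t ((n:ℝ)^2 + (n:ℝ) + 1/2) with h | h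
        · exact le_trans (min_le_left _ _) (by linarith)
        · refine le_trans (min_le_right _ _) (by nlinarith)
    _ ≤ Real.sqrt t + 1 := by linarith

lemma sqrt_tendsto : Tendsto Real.sqrt atTop atTop := by
  apply tendsto_atTop.2
  intro b
  filter_upwards [eventually_ge_atTop (b^2), eventually_ge_atTop 0] with t ht ht0
  calc b ≤ |b| := le_abs_self b
    _ = Real.sqrt (b^2) := (Real.sqrt_sq_eq_abs b).symm
    _ ≤ Real.sqrt t := Real.sqrt_le_sqrt ht


lemma F_piece0 (n : ℕ) {t : ℝ} (h1 : ((n:ℝ))^2 ≤ t) (h2 : t ≤ (n:ℝ)^2 + n + 1/2) :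
    F t = F (((n:ℝ))^2) + (3/2) * (t - (n:ℝ)^2) := by
  have hn : (0:ℝ) ≤ n := Nat.cast_nonneg n
  have h2' : t ≤ ((n:ℝ)+1)^2 := by nlinarith
  rw [F, phi_formula n t h1 h2', min_eq_left (by nlinarith), F_sq]
  ring

lemma phi_mid (n : ℕ) : phi ((n:ℝ)^2 + n + 1/2) = (n:ℝ) + 1/2 := by
  have hn : (0:ℝ) ≤ n := Nat.cast_nonneg n
  rw [phi_formula n _ (by nlinarith) (by nlinarith)]
  rw [min_eq_left (by nlinarith)]
  ring

lemma F_piece1 (n : ℕ) {t : ℝ} (h1 : (n:ℝ)^2 + n + 1/2 ≤ t) (h2 : t ≤ ((n:ℝ)+1)^2) :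
    F t = F ((n:ℝ)^2 + (n:ℝ) + 1/2) + (1/2) * (t - ((n:ℝ)^2 + n + 1/2)) := by
  have hn : (0:ℝ) ≤ n := Nat.cast_nonneg n
  have h1' : ((n:ℝ))^2 ≤ t := by nlinarith
  rw [F, phi_formula n t h1' h2, min_eq_right (by nlinarith), F, phi_mid]
  ring

lemma F_qi (x y : ℝ) : (1/2)*|x-y| ≤ |F x - F y| ∧ |F x - F y| ≤ (3/2)*|x-y| := by
  have key : ∀ u v : ℝ, v ≤ u → (1/2)*|u-v| ≤ |F u - F v| ∧ |F u - F v| ≤ (3/2)*|u-v| := by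
    intro u v h
    have hl := F_lower h
    have lip := abs_le.1 (phi_lip u v)
    rw [abs_of_nonneg (sub_nonneg.2 h)] at lip ⊢
    have hFF : 0 ≤ F u - F v := by linarith
    rw [abs_of_nonneg hFF]
    exact ⟨by linarith, by simp only [F]; linarith [lip.1, lip.2]⟩
  rcases le_total y x with h | h
  · exact (key x y h)
  · have := key y x h
    rw [abs_sub_comm y x, abs_sub_comm (F y) (F x)] at this
    exact this

noncomputable def tt (k : ℕ) : ℝ :=
  ((k/2 : ℕ):ℝ)^2 + (if Even k then 0 else ((k/2:ℕ):ℝ) + 1/2)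

lemma tt_even (m : ℕ) : tt (2*m) = ((m:ℝ))^2 := by
  simp [tt, Nat.mul_div_cancel_left m (by norm_num : 0 < 2), even_two_mul]

lemma tt_odd (m : ℕ) : tt (2*m+1) = ((m:ℝ))^2 + m + 1/2 := by
  have hd : (2*m+1)/2 = m := by omega
  have ho : ¬ Even (2*m+1) := by simp [Nat.even_add_one, parity_simps]
  simp [tt, hd, ho]
  ring

lemma tt_strictMono : StrictMono tt := by
  apply strictMono_nat_of_lt_succ
  intro k
  rcases Nat.even_or_odd k with ⟨m, hm⟩ | ⟨m, hm⟩
  · subst hm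
    rw [show m + m = 2*m by ring, tt_even, show 2*m+1 = 2*m+1 from rfl, tt_odd]
    have : (0:ℝ) ≤ m := Nat.cast_nonneg m
    linarith
  · subst hm
    rw [tt_odd, show 2*m+1+1 = 2*(m+1) by ring, tt_even]
    have : (0:ℝ) ≤ m := Nat.cast_nonneg m
    push_cast
    nlinarith

lemma tt_tendsto : Tendsto tt atTop atTop := by
  have hdiv : Tendsto (fun k : ℕ => (((k:ℝ))-1)/2) atTop atTop := by
    apply Tendsto.atTop_div_const (by norm_num)
    exact tendsto_atTop_add_const_right _ (-1) tendsto_natCast_atTop_atTop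
  apply tendsto_atTop_mono _ hdiv
  intro k
  rcases Nat.even_or_odd k with ⟨m, hm⟩ | ⟨m, hm⟩
  · subst hm
    rw [show m + m = 2*m by ring, tt_even]
    have h1 : (m:ℝ) ≤ (m:ℝ)^2 := by
      have hnat : m ≤ m^2 := Nat.le_self_pow two_ne_zero m
      exact_mod_cast hnat
    push_cast
    linarith
  · subst hm
    rw [tt_odd]
    have h1 : (0:ℝ) ≤ (m:ℝ)^2 := sq_nonneg _
    push_cast
    linarith

lemma F_isPL : IsPL F := by
  refine ⟨tt, by simp [tt], tt_strictMono, tt_tendsto, ?_⟩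
  intro k
  rcases Nat.even_or_odd k with ⟨m, hm⟩ | ⟨m, hm⟩
  · refine ⟨3/2, ?_⟩
    intro x hx
    subst hm
    rw [show m + m = 2*m by ring] at hx ⊢
    rw [tt_even] at hx ⊢
    rw [show 2*m+1 = 2*m+1 from rfl, tt_odd] at hx
    exact F_piece0 m hx.1 hx.2
  · refine ⟨1/2, ?_⟩
    intro x hx
    subst hm
    rw [tt_odd] at hx ⊢
    rw [show 2*m+1+1 = 2*(m+1) by ring, tt_even] at hx
    have h2 : x ≤ ((m:ℝ)+1)^2 := by
      have := hx.2; push_cast at this; linarith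
    exact F_piece1 m hx.1 h2


end Stmt6Aux
end

/-- an example showing the geometric-spacing hypothesis in the converse
direction cannot be dropped: `f, g` continuous strictly increasing piecewise-linear
quasi-isometries with two-piece partitions of `[aₙ, aₙ₊₁]`, `(f x - g x)/x → 0`,
yet `maxᵢ |λₙᵢ - λ'ₙᵢ| ≥ 1/4` for all `n` and `sup |f - g| = ∞`. -/
theorem stmt6 : ∃ (f g : ℝ → ℝ) (a : ℕ → ℝ) (x : ℕ → ℕ → ℝ) (lam lam' : ℕ → ℕ → ℝ),
    IsQI f ∧ IsQI g ∧
    ContinuousOn f (Set.Ici 0) ∧ ContinuousOn g (Set.Ici 0) ∧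
    StrictMonoOn f (Set.Ici 0) ∧ StrictMonoOn g (Set.Ici 0) ∧
    IsPL f ∧ IsPL g ∧
    StrictMono a ∧ Tendsto a atTop atTop ∧
    Tendsto (fun n => f (a n) / a n) atTop (𝓝 1) ∧
    Tendsto (fun n => g (a n) / a n) atTop (𝓝 1) ∧
    (∀ n, x n 0 = a n ∧ x n 0 < x n 1 ∧ x n 1 < x n 2 ∧ x n 2 = a (n + 1)) ∧
    (∀ n, ∀ i < 2, ∀ t ∈ Set.Icc (x n i) (x n (i + 1)),
      f t = f (x n i) + lam n i * (t - x n i)) ∧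
    (∀ n, ∀ i < 2, ∀ t ∈ Set.Icc (x n i) (x n (i + 1)),
      g t = g (x n i) + lam' n i * (t - x n i)) ∧
    Tendsto (fun t => (f t - g t) / t) atTop (𝓝 0) ∧
    (∀ n, ∃ i < 2, (1 : ℝ) / 4 ≤ |lam n i - lam' n i|) ∧
    ¬ ∃ C : ℝ, ∀ t : ℝ, 0 ≤ t → |f t - g t| ≤ C := by
  classical
  open Stmt6Aux in
  refine ⟨F, id, (fun n => ((n:ℝ))^2),
    (fun n i => if i = 0 then ((n:ℝ))^2 else if i = 1 then (n:ℝ)^2 + n + 1/2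
      else ((n:ℝ)+1)^2),
    (fun _ i => if i = 0 then 3/2 else 1/2), (fun _ _ => 1),
    ?_, ?_, ?_, ?_, ?_, ?_, ?_, ?_, ?_, ?_, ?_, ?_, ?_, ?_, ?_, ?_, ?_, ?_⟩
  · -- IsQI F
    refine ⟨fun x hx => le_trans hx (F_ge x), ⟨2, by norm_num, ?_⟩, ⟨1, by norm_num, ?_⟩⟩
    · intro x y _ _
      obtain ⟨h1, h2⟩ := F_qi x y
      have h3 := abs_nonneg (x - y)
      constructor <;> [linarith; linarith]
    · intro z hz
      have h0 : F 0 = 0 := by simpa using F_sq 0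
      have hz2 : z ∈ Set.Icc (F 0) (F z) := ⟨by rw [h0]; exact hz, F_ge z⟩
      obtain ⟨x, hx, hfx⟩ := intermediate_value_Icc hz F_cont.continuousOn hz2
      exact ⟨x, hx.1, by rw [hfx]; simp⟩
  · -- IsQI id
    refine ⟨fun x hx => hx, ⟨2, by norm_num, ?_⟩, ⟨1, by norm_num, fun z hz => ⟨z, hz, by simp⟩⟩⟩
    intro x y _ _
    have h3 := abs_nonneg (x - y)
    constructor <;> simp only [id_eq] <;> linarith
  · exact F_cont.continuousOn
  · exact continuous_id.continuousOn
  · exact F_strictMono.strictMonoOn _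
  · exact fun _ _ _ _ h => h
  · exact F_isPL
  · -- IsPL id
    refine ⟨fun k => (k:ℝ), by norm_num, fun a b h => Nat.strictMono_cast h,
      tendsto_natCast_atTop_atTop, fun n => ⟨1, fun x _ => by simp⟩⟩
  · -- StrictMono a
    intro m n h
    have hmn : (m:ℝ) < n := by exact_mod_cast h
    show (m:ℝ)^2 < (n:ℝ)^2
    nlinarith [Nat.cast_nonneg (α := ℝ) m]
  · -- Tendsto a atTop
    apply tendsto_atTop_mono _ tendsto_natCast_atTop_atTop
    intro n
    have : n ≤ n^2 := Nat.le_self_pow two_ne_zero n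
    exact_mod_cast this
  · -- f (a n) / a n → 1
    apply Tendsto.congr' _ (tendsto_const_nhds (x := (1:ℝ)))
    filter_upwards [eventually_ge_atTop 1] with n hn
    have hne : ((n:ℝ))^2 ≠ 0 := by
      have : (0:ℝ) < n := by exact_mod_cast hn
      positivity
    rw [F_sq, div_self hne]
  · -- g (a n) / a n → 1
    apply Tendsto.congr' _ (tendsto_const_nhds (x := (1:ℝ)))
    filter_upwards [eventually_ge_atTop 1] with n hn
    have hne : ((n:ℝ))^2 ≠ 0 := by
      have : (0:ℝ) < n := by exact_mod_cast hn
      positivity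
    rw [id_eq, div_self hne]
  · -- partition
    intro n
    have hn : (0:ℝ) ≤ n := Nat.cast_nonneg n
    refine ⟨by norm_num, by norm_num; linarith, by norm_num; nlinarith, by push_cast; norm_num⟩
  · -- affine pieces of f
    intro n i hi t ht
    interval_cases i
    · norm_num at ht ⊢
      exact F_piece0 n ht.1 ht.2
    · norm_num at ht ⊢
      exact F_piece1 n ht.1 ht.2
  · -- affine pieces of g
    intro n i hi t ht
    simp only [id_eq, one_mul]
    ring
  · -- (f - g)/t → 0
    have key : Tendsto (fun t : ℝ => 1 / Real.sqrt t) atTop (𝓝 0) := by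
      simp only [one_div]; exact sqrt_tendsto.inv_tendsto_atTop
    apply tendsto_of_tendsto_of_tendsto_of_le_of_le' tendsto_const_nhds key
    · filter_upwards [eventually_gt_atTop 0] with t ht
      have := F_ge t
      simp only [id_eq]
      exact div_nonneg (by linarith) ht.le
    · filter_upwards [eventually_ge_atTop 1] with t ht
      have ht0 : (0:ℝ) < t := by linarith
      have hs1 : 1 ≤ Real.sqrt t := by
        rw [show (1:ℝ) = Real.sqrt 1 by rw [Real.sqrt_one]]
        exact Real.sqrt_le_sqrt ht
      have hst : Real.sqrt t * Real.sqrt t = t := Real.mul_self_sqrt ht0.le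
      have hphi : F t - t ≤ Real.sqrt t := by
        have h1 := phi_le_sqrt t ht0.le
        simp only [F]
        linarith
      have hFt := F_ge t
      simp only [id_eq]
      rw [div_le_div_iff₀ ht0 (by linarith : (0:ℝ) < Real.sqrt t)]
      nlinarith
  · -- slopes differ
    intro n
    refine ⟨0, by norm_num, ?_⟩
    norm_num
  · -- unbounded
    rintro ⟨C, hC⟩
    obtain ⟨n, hn⟩ := exists_nat_gt (2*C)
    set t := (n:ℝ)^2 + n + 1/2 with htdef
    have hn0 : (0:ℝ) ≤ n := Nat.cast_nonneg n
    have ht0 : 0 ≤ t := by positivity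
    have hC' := hC t ht0
    have hft : F t - t = ((n:ℝ) + 1/2)/2 := by
      simp only [F, htdef, phi_mid]
      ring
    rw [id_eq, hft, abs_of_nonneg (by linarith)] at hC'
    linarith
end

section
/- Let M > 1 and let C denote the set of continuously differentiable functions f : [0,1] → [1,M] with f(0) = 1, f(1) = M and f'(x) ≠ 0 for all x ∈ [0,1]. Then there exists a map f ↦ g_f assigning to each f ∈ C a continuous, strictly increasing quasi-isometry g_f of [0,∞) such that S_{g_f} = [1,M] for every f ∈ C, and such that whenever f₁ ≠ f₂ in C, the quasi-isometries g_{f₁} and g_{f₂} are not H-equivalent. In particular, C embeds into H_{[1,M]}/H. -/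
open Filter Topology

/-- Membership in the class `C^{[1,M]}_{[0,1]}`: continuously differentiable on `[0,1]`,
mapping into `[1,M]`, with `f 0 = 1`, `f 1 = M` and nonvanishing derivative. -/
def CClass (M : ℝ) (f : ℝ → ℝ) : Prop :=
  ContDiffOn ℝ 1 f (Set.Icc 0 1) ∧
  (∀ x ∈ Set.Icc (0 : ℝ) 1, f x ∈ Set.Icc 1 M) ∧
  f 0 = 1 ∧ f 1 = M ∧
  (∀ x ∈ Set.Icc (0 : ℝ) 1, derivWithin f (Set.Icc 0 1) x ≠ 0)

noncomputable section QIAux7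

/-- Breakpoints: `tseq n = (n+1)!`. -/
def tseq (n : ℕ) : ℝ := (Nat.factorial (n+1) : ℝ)

lemma tseq_zero : tseq 0 = 1 := by simp [tseq, Nat.factorial]

lemma tseq_pos (n : ℕ) : 0 < tseq n := by
  unfold tseq; exact_mod_cast Nat.factorial_pos (n+1)

lemma one_le_tseq (n : ℕ) : 1 ≤ tseq n := by
  unfold tseq; exact_mod_cast Nat.one_le_iff_ne_zero.2 (Nat.factorial_ne_zero (n+1))

lemma tseq_succ_eq (n : ℕ) : tseq (n+1) = ((n:ℝ)+2) * tseq n := by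
  have : Nat.factorial (n+2) = (n+2) * Nat.factorial (n+1) := Nat.factorial_succ (n+1)
  unfold tseq
  rw [this]
  push_cast
  ring

lemma tseq_lt_succ (n : ℕ) : tseq n < tseq (n+1) := by
  rw [tseq_succ_eq]
  nlinarith [tseq_pos n]

lemma tseq_strictMono : StrictMono tseq := strictMono_nat_of_lt_succ tseq_lt_succ

lemma tseq_mono : Monotone tseq := tseq_strictMono.monotone

lemma add_one_le_tseq (n : ℕ) : (n:ℝ) + 1 ≤ tseq n := by
  have := Nat.self_le_factorial (n+1)
  have : ((n+1 : ℕ) : ℝ) ≤ (Nat.factorial (n+1) : ℝ) := by exact_mod_cast this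
  unfold tseq; push_cast at this ⊢; linarith

lemma lt_tseq (x : ℝ) : ∃ n, x < tseq (n+1) := by
  obtain ⟨n, hn⟩ := exists_nat_gt x
  refine ⟨n, lt_of_lt_of_le hn ?_⟩
  have := add_one_le_tseq (n+1)
  push_cast at this
  linarith

open Classical in
/-- index of the block containing `x` (for `x ≥ 1`). -/
def idx (x : ℝ) : ℕ := Nat.find (lt_tseq x)

lemma idx_lt (x : ℝ) : x < tseq (idx x + 1) := Nat.find_spec (lt_tseq x)

lemma tseq_idx_le {x : ℝ} (hx : 1 ≤ x) : tseq (idx x) ≤ x := by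
  rcases Nat.eq_zero_or_pos (idx x) with h | h
  · rw [h, tseq_zero]; exact hx
  · obtain ⟨k, hk⟩ := Nat.exists_eq_succ_of_ne_zero h.ne'
    have hk' : Nat.find (lt_tseq x) = k + 1 := hk
    have := Nat.find_min (lt_tseq x) (m := k) (by omega)
    rw [hk]; exact not_lt.1 this

open Classical in
lemma idx_eq {x : ℝ} {n : ℕ} (h1 : tseq n ≤ x) (h2 : x < tseq (n+1)) : idx x = n := by
  rw [idx, Nat.find_eq_iff]
  exact ⟨h2, fun m hm hlt => absurd hlt (not_lt.2 (le_trans (tseq_mono (by omega)) h1))⟩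

/-- values at breakpoints. -/
def Gv (s : ℕ → ℝ) : ℕ → ℝ
  | 0 => 1
  | n+1 => Gv s n + s n * (tseq (n+1) - tseq n)

/-- the piecewise linear map with slopes `s n` on `[tseq n, tseq (n+1)]`
(and identity below `1 = tseq 0`). -/
def gmap (s : ℕ → ℝ) (x : ℝ) : ℝ :=
  if x < 1 then x else Gv s (idx x) + s (idx x) * (x - tseq (idx x))

lemma gmap_of_lt_one {s : ℕ → ℝ} {x : ℝ} (h : x < 1) : gmap s x = x := if_pos h

lemma gmap_eq (s : ℕ → ℝ) {n : ℕ} {x : ℝ} (h1 : tseq n ≤ x) (h2 : x ≤ tseq (n+1)) :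
    gmap s x = Gv s n + s n * (x - tseq n) := by
  have hx1 : 1 ≤ x := le_trans (one_le_tseq n) h1
  rcases lt_or_eq_of_le h2 with h2' | h2'
  · rw [gmap, if_neg (not_lt.2 hx1), idx_eq h1 h2']
  · have hidx : idx x = n + 1 := idx_eq (by rw [h2']) (by rw [h2']; exact tseq_lt_succ (n+1))
    rw [gmap, if_neg (not_lt.2 hx1), hidx, h2']
    show Gv s (n+1) + s (n+1) * (tseq (n+1) - tseq (n+1)) = _
    rw [Gv]
    ring

lemma gmap_tseq (s : ℕ → ℝ) (n : ℕ) : gmap s (tseq n) = Gv s n := by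
  rw [gmap_eq s (le_refl (tseq n)) (tseq_lt_succ n).le]
  ring

lemma gmap_id_of_le_one (s : ℕ → ℝ) {x : ℝ} (h : x ≤ 1) : gmap s x = x := by
  rcases lt_or_eq_of_le h with h' | h'
  · exact gmap_of_lt_one h'
  · rw [h']
    have := gmap_tseq s 0
    rw [tseq_zero] at this
    rw [this]; rfl


section Bounds
variable {M : ℝ} {s : ℕ → ℝ}

lemma gmap_bound_aux (hs1 : ∀ n, 1 ≤ s n) (hsM : ∀ n, s n ≤ M) :
    ∀ n : ℕ, ∀ x y : ℝ, 0 ≤ x → x ≤ y → y ≤ tseq n →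
      y - x ≤ gmap s y - gmap s x ∧ gmap s y - gmap s x ≤ M * (y - x) := by
  have hM : 1 ≤ M := le_trans (hs1 0) (hsM 0)
  intro n
  induction n with
  | zero =>
    intro x y hx hxy hy
    rw [tseq_zero] at hy
    rw [gmap_id_of_le_one s hy, gmap_id_of_le_one s (le_trans hxy hy)]
    constructor
    · linarith
    · nlinarith
  | succ n ih =>
    intro x y hx hxy hy
    rcases le_or_gt y (tseq n) with h | h
    · exact ih x y hx hxy h
    · rcases le_or_gt (tseq n) x with h' | h'
      · rw [gmap_eq s (le_trans h' hxy) hy, gmap_eq s h' (le_trans hxy hy)]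
        have h1 := hs1 n; have h2 := hsM n
        constructor
        · nlinarith
        · nlinarith
      · have hb := ih x (tseq n) hx h'.le (le_refl _)
        have hblock : gmap s y - gmap s (tseq n) = s n * (y - tseq n) := by
          rw [gmap_eq s h.le hy, gmap_tseq]; ring
        have h1 := hs1 n; have h2 := hsM n
        constructor
        · nlinarith [hb.1]
        · nlinarith [hb.2]

lemma gmap_bound (hs1 : ∀ n, 1 ≤ s n) (hsM : ∀ n, s n ≤ M) {x y : ℝ}
    (hx : 0 ≤ x) (hxy : x ≤ y) :
    y - x ≤ gmap s y - gmap s x ∧ gmap s y - gmap s x ≤ M * (y - x) := by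
  obtain ⟨n, hn⟩ := lt_tseq y
  exact gmap_bound_aux hs1 hsM (n+1) x y hx hxy hn.le

lemma gmap_zero (s : ℕ → ℝ) : gmap s 0 = 0 := gmap_of_lt_one (by norm_num)

lemma gmap_self_bounds (hs1 : ∀ n, 1 ≤ s n) (hsM : ∀ n, s n ≤ M) {x : ℝ} (hx : 0 ≤ x) :
    x ≤ gmap s x ∧ gmap s x ≤ M * x := by
  have := gmap_bound hs1 hsM (le_refl (0:ℝ)) hx
  rw [gmap_zero] at this
  constructor <;> [linarith [this.1]; linarith [this.2]]

lemma Gv_ratio (hs1 : ∀ n, 1 ≤ s n) (hsM : ∀ n, s n ≤ M) (n : ℕ) :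
    |Gv s (n+1) / tseq (n+1) - s n| ≤ M / ((n:ℝ)+2) := by
  have hM : 1 ≤ M := le_trans (hs1 0) (hsM 0)
  have ht0 := tseq_pos n
  have ht1 := tseq_pos (n+1)
  have hGl : tseq n ≤ Gv s n := by
    have := (gmap_self_bounds hs1 hsM (tseq_pos n).le).1
    rwa [gmap_tseq] at this
  have hGu : Gv s n ≤ M * tseq n := by
    have := (gmap_self_bounds hs1 hsM (tseq_pos n).le).2
    rwa [gmap_tseq] at this
  have key : Gv s (n+1) / tseq (n+1) - s n = (Gv s n - s n * tseq n) / tseq (n+1) := by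
    show (Gv s n + s n * (tseq (n+1) - tseq n)) / tseq (n+1) - s n = _
    field_simp
    ring
  have habs : |Gv s n - s n * tseq n| ≤ M * tseq n := by
    rw [abs_le]
    constructor <;> nlinarith [hs1 n, hsM n]
  have heq : M * tseq n / tseq (n+1) = M / ((n:ℝ)+2) := by
    rw [tseq_succ_eq]
    rw [div_eq_div_iff (by positivity) (by positivity)]
    ring
  rw [key, abs_div, abs_of_pos ht1]
  calc |Gv s n - s n * tseq n| / tseq (n+1) ≤ M * tseq n / tseq (n+1) := by gcongr
    _ = M / ((n:ℝ)+2) := heq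

lemma tseq_comp_tendsto (φ : ℕ → ℕ) (hφ : ∀ j, j ≤ φ j) :
    Tendsto (fun j => tseq (φ j + 1)) atTop atTop := by
  apply tendsto_atTop_mono (f := fun j : ℕ => (j:ℝ))
  · intro j
    have h1 := add_one_le_tseq (φ j + 1)
    have : (j:ℝ) ≤ (φ j : ℝ) := by exact_mod_cast hφ j
    push_cast at h1
    linarith
  · exact tendsto_natCast_atTop_atTop

lemma ratio_tendsto (hs1 : ∀ n, 1 ≤ s n) (hsM : ∀ n, s n ≤ M) (φ : ℕ → ℕ)
    (hφ : ∀ j, j ≤ φ j) (c : ℝ) (hc : ∀ j, s (φ j) = c) :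
    Tendsto (fun j => gmap s (tseq (φ j + 1)) / tseq (φ j + 1)) atTop (𝓝 c) := by
  have hM : 1 ≤ M := le_trans (hs1 0) (hsM 0)
  rw [tendsto_iff_norm_sub_tendsto_zero]
  apply squeeze_zero (g := fun j : ℕ => M / ((j:ℝ)+2))
  · intro t; positivity
  · intro j
    rw [Real.norm_eq_abs, gmap_tseq]
    have h := Gv_ratio hs1 hsM (φ j)
    rw [hc j] at h
    refine le_trans h ?_
    have : (j:ℝ) ≤ (φ j : ℝ) := by exact_mod_cast hφ j
    have hM0 : (0:ℝ) ≤ M := by linarith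
    gcongr <;> linarith
  · exact Tendsto.div_atTop tendsto_const_nhds
      (tendsto_atTop_add_const_right _ 2 tendsto_natCast_atTop_atTop)

lemma gmap_continuousOn (hs1 : ∀ n, 1 ≤ s n) (hsM : ∀ n, s n ≤ M) :
    ContinuousOn (gmap s) (Set.Ici 0) := by
  have hM : 1 ≤ M := le_trans (hs1 0) (hsM 0)
  apply LipschitzOnWith.continuousOn (K := Real.toNNReal M)
  apply LipschitzOnWith.of_dist_le_mul
  intro x hx y hy
  simp only [Set.mem_Ici] at hx hy
  rw [Real.dist_eq, Real.dist_eq, Real.coe_toNNReal _ (by linarith)]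
  rcases le_total x y with h | h
  · have hb := gmap_bound hs1 hsM hx h
    rw [abs_sub_comm x y, abs_of_nonneg (by linarith : (0:ℝ) ≤ y - x),
      abs_sub_comm (gmap s x), abs_of_nonneg (by linarith [hb.1] : (0:ℝ) ≤ gmap s y - gmap s x)]
    exact hb.2
  · have hb := gmap_bound hs1 hsM hy h
    rw [abs_of_nonneg (by linarith : (0:ℝ) ≤ x - y),
      abs_of_nonneg (by linarith [hb.1] : (0:ℝ) ≤ gmap s x - gmap s y)]
    exact hb.2

end Bounds


/-- Slope sequence encoding `f`: pattern `1, M, clamp (f (rational))` with period 3. -/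
def slopes (M : ℝ) (r : ℕ → ℚ) (f : ℝ → ℝ) (n : ℕ) : ℝ :=
  if n % 3 = 0 then 1
  else if n % 3 = 1 then M
  else min M (max 1 (f ((r (Nat.unpair (n/3)).1 : ℚ) : ℝ)))

lemma slopes_one_le {M : ℝ} (hM : 1 ≤ M) (r : ℕ → ℚ) (f : ℝ → ℝ) (n : ℕ) :
    1 ≤ slopes M r f n := by
  unfold slopes
  split
  · exact le_refl 1
  · split
    · exact hM
    · exact le_min hM (le_max_left 1 _)

lemma slopes_le {M : ℝ} (hM : 1 ≤ M) (r : ℕ → ℚ) (f : ℝ → ℝ) (n : ℕ) :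
    slopes M r f n ≤ M := by
  unfold slopes
  split
  · exact hM
  · split
    · exact le_refl M
    · exact min_le_left M _

lemma slopes_c0 {M : ℝ} (r : ℕ → ℚ) (f : ℝ → ℝ) (j : ℕ) : slopes M r f (3*j) = 1 := by
  have h : (3*j) % 3 = 0 := by omega
  simp [slopes, h]

lemma slopes_c1 {M : ℝ} (r : ℕ → ℚ) (f : ℝ → ℝ) (j : ℕ) : slopes M r f (3*j+1) = M := by
  have h : (3*j+1) % 3 = 1 := by omega
  simp [slopes, h]

lemma slopes_c2 {M : ℝ} (r : ℕ → ℚ) (f : ℝ → ℝ) (j : ℕ) :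
    slopes M r f (3*j+2) = min M (max 1 (f ((r (Nat.unpair j).1 : ℚ) : ℝ))) := by
  have h : (3*j+2) % 3 = 2 := by omega
  have hd : (3*j+2) / 3 = j := by omega
  simp [slopes, h, hd]

end QIAux7

/-- the class `C^{[1,M]}_{[0,1]}` embeds in `H_{[1,M]}/H`: there is a map
`f ↦ g_f` into continuous strictly increasing quasi-isometries with `S_{g_f} = [1,M]`,
such that distinct `f`'s give non-H-equivalent quasi-isometries. -/
theorem stmt7 (M : ℝ) (hM : 1 < M) :
    ∃ G : (ℝ → ℝ) → (ℝ → ℝ),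
      (∀ f : ℝ → ℝ, CClass M f →
        IsQI (G f) ∧ ContinuousOn (G f) (Set.Ici 0) ∧ StrictMonoOn (G f) (Set.Ici 0) ∧
        Sset (G f) = Set.Icc 1 M) ∧
      (∀ f₁ f₂ : ℝ → ℝ, CClass M f₁ → CClass M f₂ →
        (∃ x ∈ Set.Icc (0 : ℝ) 1, f₁ x ≠ f₂ x) → ¬ HEquiv (G f₁) (G f₂)) := by
  classical
  obtain ⟨r, hr⟩ := exists_surjective_nat ℚ
  have hM1 : (1:ℝ) ≤ M := hM.le
  have hMpos : (0:ℝ) < M := by linarith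
  refine ⟨fun f => gmap (slopes M r f), ?_, ?_⟩
  · intro f _hf
    beta_reduce
    set s := slopes M r f with hsdef
    have hs1 : ∀ n, 1 ≤ s n := slopes_one_le hM1 r f
    have hsM : ∀ n, s n ≤ M := slopes_le hM1 r f
    have habs : ∀ x y : ℝ, 0 ≤ x → 0 ≤ y →
        |x - y| ≤ |gmap s x - gmap s y| ∧ |gmap s x - gmap s y| ≤ M * |x - y| := by
      intro x y hx hy
      rcases le_total x y with hxy | hxy
      · have hb := gmap_bound hs1 hsM hx hxy
        rw [abs_sub_comm x y, abs_of_nonneg (by linarith : (0:ℝ) ≤ y - x),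
          abs_sub_comm (gmap s x),
          abs_of_nonneg (by linarith [hb.1] : (0:ℝ) ≤ gmap s y - gmap s x)]
        exact ⟨hb.1, hb.2⟩
      · have hb := gmap_bound hs1 hsM hy hxy
        rw [abs_of_nonneg (by linarith : (0:ℝ) ≤ x - y),
          abs_of_nonneg (by linarith [hb.1] : (0:ℝ) ≤ gmap s x - gmap s y)]
        exact ⟨hb.1, hb.2⟩
    refine ⟨⟨?_, ⟨M, hM, ?_⟩, ⟨1, one_pos, ?_⟩⟩, gmap_continuousOn hs1 hsM, ?_, ?_⟩
    · intro x hx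
      have := (gmap_self_bounds hs1 hsM hx).1
      linarith
    · intro x y hx hy
      obtain ⟨hl, hu⟩ := habs x y hx hy
      have h1 : 1/M ≤ 1 := by rw [div_le_one hMpos]; exact hM1
      constructor
      · nlinarith [abs_nonneg (x - y)]
      · linarith
    · intro z hz
      have hc : ContinuousOn (gmap s) (Set.Icc 0 z) :=
        (gmap_continuousOn hs1 hsM).mono Set.Icc_subset_Ici_self
      have hmem : z ∈ Set.Icc (gmap s 0) (gmap s z) := by
        rw [gmap_zero]
        exact ⟨hz, (gmap_self_bounds hs1 hsM hz).1⟩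
      obtain ⟨x, hx, hgx⟩ := intermediate_value_Icc hz hc hmem
      exact ⟨x, hx.1, by rw [hgx]; simp⟩
    · intro x hx y _hy hxy
      have := (gmap_bound hs1 hsM hx hxy.le).1
      linarith
    · apply Set.eq_of_subset_of_subset
      · rintro c ⟨u, hu0, huT, huc⟩
        refine isClosed_Icc.mem_of_tendsto huc ?_
        filter_upwards [huT.eventually_ge_atTop 1] with n hn
        have hpos : (0:ℝ) < u n := by linarith
        obtain ⟨h1, h2⟩ := gmap_self_bounds hs1 hsM hpos.le
        constructor
        · rw [le_div_iff₀ hpos]; linarith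
        · rw [div_le_iff₀ hpos]; exact h2
      · intro c hc
        rcases eq_or_lt_of_le hc.1 with h1 | h1
        · refine ⟨fun j => tseq (3*j + 1), fun j => (tseq_pos _).le,
            tseq_comp_tendsto (fun j => 3*j) (fun j => by show j ≤ 3*j; omega), ?_⟩
          rw [← h1]
          exact ratio_tendsto hs1 hsM (fun j => 3*j) (fun j => by show j ≤ 3*j; omega) 1 (slopes_c0 r f)
        · rcases eq_or_lt_of_le hc.2 with h2 | h2
          · refine ⟨fun j => tseq (3*j + 1 + 1), fun j => (tseq_pos _).le,
              tseq_comp_tendsto (fun j => 3*j + 1) (fun j => by show j ≤ 3*j+1; omega), ?_⟩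
            rw [h2]
            exact ratio_tendsto hs1 hsM (fun j => 3*j+1) (fun j => by show j ≤ 3*j+1; omega) M (slopes_c1 r f)
          · have hA := ratio_tendsto hs1 hsM (fun j => 3*j) (fun j => by show j ≤ 3*j; omega) 1
              (slopes_c0 r f)
            have hB := ratio_tendsto hs1 hsM (fun j => 3*j+1) (fun j => by show j ≤ 3*j+1; omega) M
              (slopes_c1 r f)
            have hA' : ∀ᶠ j in atTop,
                gmap s (tseq (3*j + 1)) / tseq (3*j + 1) < c := hA.eventually_lt_const h1
            have hB' : ∀ᶠ j in atTop,
                c < gmap s (tseq (3*j + 1 + 1)) / tseq (3*j + 1 + 1) :=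
              hB.eventually_const_lt h2
            obtain ⟨J, hJ⟩ := eventually_atTop.1 (hA'.and hB')
            have hIVT : ∀ j : ℕ, ∃ x ∈ Set.Icc (tseq (3*(J+j)+1)) (tseq (3*(J+j)+1+1)),
                gmap s x / x = c := by
              intro j
              have hJ' := hJ (J + j) (Nat.le_add_right J j)
              have hab : tseq (3*(J+j)+1) ≤ tseq (3*(J+j)+1+1) := (tseq_lt_succ _).le
              have hpos : 0 < tseq (3*(J+j)+1) := tseq_pos _
              have hcont : ContinuousOn (fun x => gmap s x / x)
                  (Set.Icc (tseq (3*(J+j)+1)) (tseq (3*(J+j)+1+1))) := by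
                apply ContinuousOn.div
                · exact (gmap_continuousOn hs1 hsM).mono
                    (fun x hx => Set.mem_Ici.2 (le_trans hpos.le hx.1))
                · exact continuousOn_id
                · intro x hx
                  exact ne_of_gt (lt_of_lt_of_le hpos hx.1)
              exact intermediate_value_Icc hab hcont ⟨hJ'.1.le, hJ'.2.le⟩
            choose u hu huc using hIVT
            refine ⟨u, fun n => le_trans (tseq_pos _).le (hu n).1, ?_, ?_⟩
            · apply tendsto_atTop_mono (f := fun j : ℕ => (j:ℝ))
              · intro j
                have h1' := add_one_le_tseq (3*(J+j)+1)
                push_cast at h1'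
                have hJ0 : (0:ℝ) ≤ (J:ℝ) := Nat.cast_nonneg J
                have hj0 : (0:ℝ) ≤ (j:ℝ) := Nat.cast_nonneg j
                linarith [(hu j).1]
              · exact tendsto_natCast_atTop_atTop
            · simp only [huc]
              exact tendsto_const_nhds
  · rintro f₁ f₂ hf₁ hf₂ ⟨x₀, hx₀, hne⟩ ⟨h, _hQI, hlim, C, hC⟩
    beta_reduce at hC
    set s₁ := slopes M r f₁ with hs₁def
    set s₂ := slopes M r f₂ with hs₂def
    have hs1₁ : ∀ n, 1 ≤ s₁ n := slopes_one_le hM1 r f₁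
    have hsM₁ : ∀ n, s₁ n ≤ M := slopes_le hM1 r f₁
    have hs1₂ : ∀ n, 1 ≤ s₂ n := slopes_one_le hM1 r f₂
    have hsM₂ : ∀ n, s₂ n ≤ M := slopes_le hM1 r f₂
    -- find a rational point where f₁ and f₂ differ
    have hc₁ : ContinuousOn f₁ (Set.Icc 0 1) := hf₁.1.continuousOn
    have hc₂ : ContinuousOn f₂ (Set.Icc 0 1) := hf₂.1.continuousOn
    have hd : ContinuousWithinAt (fun x => f₁ x - f₂ x) (Set.Icc 0 1) x₀ :=
      (hc₁.sub hc₂) x₀ hx₀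
    have hne' : f₁ x₀ - f₂ x₀ ≠ 0 := sub_ne_zero.2 hne
    have hev : {x : ℝ | f₁ x - f₂ x ≠ 0} ∈ 𝓝[Set.Icc 0 1] x₀ := by
      have : {y : ℝ | y ≠ 0} ∈ 𝓝 (f₁ x₀ - f₂ x₀) := isOpen_ne.mem_nhds hne'
      exact hd this
    obtain ⟨ε, hε, hball⟩ := Metric.mem_nhdsWithin_iff.1 hev
    obtain ⟨q, hq_mem, hq_ball⟩ : ∃ q : ℚ, (q:ℝ) ∈ Set.Icc (0:ℝ) 1 ∧
        (q:ℝ) ∈ Metric.ball x₀ ε := by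
      rcases lt_or_eq_of_le hx₀.2 with hlt | heq
      · have hlt' : x₀ < min 1 (x₀ + ε) := lt_min hlt (by linarith)
        obtain ⟨q, hq1, hq2⟩ := exists_rat_btwn hlt'
        refine ⟨q, ⟨le_trans hx₀.1 hq1.le,
          le_of_lt (lt_of_lt_of_le hq2 (min_le_left _ _))⟩, ?_⟩
        rw [Metric.mem_ball, Real.dist_eq, abs_of_pos (by linarith)]
        have := min_le_right 1 (x₀ + ε)
        linarith
      · have hlt' : max 0 (1 - ε) < 1 := max_lt one_pos (by linarith)
        obtain ⟨q, hq1, hq2⟩ := exists_rat_btwn hlt'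
        refine ⟨q, ⟨le_trans (le_max_left 0 _) hq1.le, hq2.le⟩, ?_⟩
        rw [Metric.mem_ball, Real.dist_eq, heq, abs_of_nonpos (by linarith), neg_sub]
        have := le_max_right 0 (1 - ε)
        linarith
    have hq_ne : f₁ (q:ℝ) ≠ f₂ (q:ℝ) := sub_ne_zero.1 (hball ⟨hq_ball, hq_mem⟩)
    have hq₁ : f₁ (q:ℝ) ∈ Set.Icc 1 M := hf₁.2.1 _ hq_mem
    have hq₂ : f₂ (q:ℝ) ∈ Set.Icc 1 M := hf₂.2.1 _ hq_mem
    obtain ⟨m, hm⟩ := hr q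
    have hsl : ∀ (f : ℝ → ℝ), f (q:ℝ) ∈ Set.Icc 1 M →
        ∀ j : ℕ, slopes M r f (3 * Nat.pair m j + 2) = f (q:ℝ) := by
      intro f hfq j
      rw [slopes_c2, Nat.unpair_pair, hm, max_eq_right hfq.1, min_eq_right hfq.2]
    have hφ : ∀ j : ℕ, j ≤ 3 * Nat.pair m j + 2 :=
      fun j => le_trans (Nat.right_le_pair m j) (by omega)
    have hA : Tendsto (fun j : ℕ => gmap s₁ (tseq (3 * Nat.pair m j + 2 + 1)) /
        tseq (3 * Nat.pair m j + 2 + 1)) atTop (𝓝 (f₁ (q:ℝ))) :=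
      ratio_tendsto hs1₁ hsM₁ (fun j => 3 * Nat.pair m j + 2) hφ _ (hsl f₁ hq₁)
    have hB0 : Tendsto (fun j : ℕ => gmap s₂ (tseq (3 * Nat.pair m j + 2 + 1)) /
        tseq (3 * Nat.pair m j + 2 + 1)) atTop (𝓝 (f₂ (q:ℝ))) :=
      ratio_tendsto hs1₂ hsM₂ (fun j => 3 * Nat.pair m j + 2) hφ _ (hsl f₂ hq₂)
    have hxT : Tendsto (fun j : ℕ => tseq (3 * Nat.pair m j + 2 + 1)) atTop atTop :=
      tseq_comp_tendsto (fun j => 3 * Nat.pair m j + 2) hφ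
    have hg2T : Tendsto (fun j : ℕ => gmap s₂ (tseq (3 * Nat.pair m j + 2 + 1)))
        atTop atTop :=
      tendsto_atTop_mono
        (fun j => (gmap_self_bounds hs1₂ hsM₂ (tseq_pos _).le).1) hxT
    have hh1 : Tendsto (fun j : ℕ => h (gmap s₂ (tseq (3 * Nat.pair m j + 2 + 1))) /
        gmap s₂ (tseq (3 * Nat.pair m j + 2 + 1))) atTop (𝓝 1) := hlim.comp hg2T
    have hB : Tendsto (fun j : ℕ => h (gmap s₂ (tseq (3 * Nat.pair m j + 2 + 1))) /
        tseq (3 * Nat.pair m j + 2 + 1)) atTop (𝓝 (f₂ (q:ℝ))) := by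
      have hmul := hh1.mul hB0
      rw [one_mul] at hmul
      refine hmul.congr (fun j => ?_)
      have hxpos : 0 < tseq (3 * Nat.pair m j + 2 + 1) := tseq_pos _
      have hypos : 0 < gmap s₂ (tseq (3 * Nat.pair m j + 2 + 1)) :=
        lt_of_lt_of_le hxpos (gmap_self_bounds hs1₂ hsM₂ hxpos.le).1
      field_simp
    have hCd : Tendsto (fun j : ℕ => C / tseq (3 * Nat.pair m j + 2 + 1)) atTop (𝓝 0) :=
      Tendsto.div_atTop tendsto_const_nhds hxT
    have hCd' : Tendsto (fun j : ℕ => -(C / tseq (3 * Nat.pair m j + 2 + 1)))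
        atTop (𝓝 0) := by
      simpa using hCd.neg
    have hzero : Tendsto (fun j : ℕ =>
        gmap s₁ (tseq (3 * Nat.pair m j + 2 + 1)) / tseq (3 * Nat.pair m j + 2 + 1) -
        h (gmap s₂ (tseq (3 * Nat.pair m j + 2 + 1))) / tseq (3 * Nat.pair m j + 2 + 1))
        atTop (𝓝 0) := by
      apply tendsto_of_tendsto_of_tendsto_of_le_of_le hCd' hCd
      · intro j
        have hxpos : 0 < tseq (3 * Nat.pair m j + 2 + 1) := tseq_pos _
        have hCb := abs_le.1 (hC (tseq (3 * Nat.pair m j + 2 + 1)) hxpos.le)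
        beta_reduce
        rw [div_sub_div_same, ← neg_div]
        gcongr
        exact hCb.1
      · intro j
        have hxpos : 0 < tseq (3 * Nat.pair m j + 2 + 1) := tseq_pos _
        have hCb := abs_le.1 (hC (tseq (3 * Nat.pair m j + 2 + 1)) hxpos.le)
        beta_reduce
        rw [div_sub_div_same]
        gcongr
        exact hCb.2
    have hfinal := tendsto_nhds_unique (hA.sub hB) hzero
    exact hq_ne (sub_eq_zero.1 hfinal)
end

section
/- Let f₁, …, f_n be strictly increasing homeomorphisms of [0,∞), each a quasi-isometry, and suppose that for each i it is not the case that f_i(x)/x → 1 as x → ∞ (i.e., each class [f_i] is a nontrivial element of QI(ℝ₊)/H). Then there exist signs ε_i ∈ {+1, −1} such that for every nonempty finite sequence of indices i₁, …, i_m, the composition w = f_{i₁}^{ε_{i₁}} ∘ f_{i₂}^{ε_{i₂}} ∘ ⋯ ∘ f_{i_m}^{ε_{i_m}} does not satisfy w(x)/x → 1 as x → ∞. (By Navas's criterion this proves that the quotient group QI(ℝ₊)/H is left-orderable.) -/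
open Filter Topology

/-- Maps that are positive and strictly increasing on `(0,∞)`. -/
def GoodMap (Ψ : ℝ → ℝ) : Prop :=
  (∀ τ, 0 < τ → 0 < Ψ τ) ∧ ∀ τ τ', 0 < τ → τ < τ' → Ψ τ < Ψ τ'

def DifSet (Ψ : ℝ → ℝ) : Set ℝ := {x | 0 < x ∧ Ψ x ≠ x}

/-- Positive cone: at the `WellOrderingRel`-least point of difference, `Ψ` is above id. -/
def PosM (Ψ : ℝ → ℝ) : Prop :=
  GoodMap Ψ ∧ ∃ a ∈ DifSet Ψ, a < Ψ a ∧ ∀ b ∈ DifSet Ψ, ¬ WellOrderingRel b a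

def QPosM (Ψ : ℝ → ℝ) : Prop :=
  PosM Ψ ∨ (GoodMap Ψ ∧ ∀ x, 0 < x → Ψ x = x)

lemma GoodMap.comp {Ψ₁ Ψ₂ : ℝ → ℝ} (h1 : GoodMap Ψ₁) (h2 : GoodMap Ψ₂) :
    GoodMap (Ψ₁ ∘ Ψ₂) := by
  refine ⟨fun τ hτ => h1.1 _ (h2.1 _ hτ), fun τ τ' hτ hlt => ?_⟩
  exact h1.2 _ _ (h2.1 _ hτ) (h2.2 _ _ hτ hlt)

lemma QPosM.good {Ψ : ℝ → ℝ} (h : QPosM Ψ) : GoodMap Ψ := by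
  rcases h with h | h
  · exact h.1
  · exact h.1

lemma posM_comp_aux {Ψ₁ Ψ₂ : ℝ → ℝ} (h1 : PosM Ψ₁) (h2 : PosM Ψ₂) :
    PosM (Ψ₁ ∘ Ψ₂) := by
  obtain ⟨g1, a1, ha1, ha1', hmin1⟩ := h1
  obtain ⟨g2, a2, ha2, ha2', hmin2⟩ := h2
  -- choose c, the `r`-smaller of a1, a2
  have tri := trichotomous_of WellOrderingRel a1 a2
  have key : ∀ c : ℝ, c ∈ DifSet Ψ₁ ∪ DifSet Ψ₂ →
      (WellOrderingRel c a1 ∨ c = a1) → (WellOrderingRel c a2 ∨ c = a2) →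
      PosM (Ψ₁ ∘ Ψ₂) := by
    intro c hc hc1 hc2
    have hcpos : 0 < c := by
      rcases hc with h | h
      · exact h.1
      · exact h.1
    have hΨ2c : c ≤ Ψ₂ c := by
      rcases hc2 with h | h
      · have : c ∉ DifSet Ψ₂ := fun hmem => hmin2 c hmem h
        have : Ψ₂ c = c := by
          by_contra hne
          exact this ⟨hcpos, hne⟩
        exact le_of_eq this.symm
      · subst h; exact le_of_lt ha2'
    have hΨ1c : c ≤ Ψ₁ c := by
      rcases hc1 with h | h
      · have : c ∉ DifSet Ψ₁ := fun hmem => hmin1 c hmem h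
        have : Ψ₁ c = c := by
          by_contra hne
          exact this ⟨hcpos, hne⟩
        exact le_of_eq this.symm
      · subst h; exact le_of_lt ha1'
    have hgt : c < Ψ₁ (Ψ₂ c) := by
      rcases lt_or_eq_of_le hΨ2c with hlt | heq
      · calc c ≤ Ψ₁ c := hΨ1c
          _ < Ψ₁ (Ψ₂ c) := g1.2 _ _ hcpos hlt
      · -- Ψ₂ c = c, so c must be in DifSet Ψ₁, hence c = a1
        have hc1' : c ∈ DifSet Ψ₁ := by
          rcases hc with h | h
          · exact h
          · exact absurd heq.symm h.2
        have : c = a1 := by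
          rcases hc1 with h | h
          · exact absurd h (hmin1 c hc1')
          · exact h
        subst this
        rw [← heq]
        exact ha1'
    refine ⟨g1.comp g2, c, ⟨hcpos, hgt.ne'⟩, hgt, ?_⟩
    intro b hb hrb
    have hb1 : WellOrderingRel b a1 := by
      rcases hc1 with h | h
      · exact _root_.trans hrb h
      · rwa [h] at hrb
    have hb2 : WellOrderingRel b a2 := by
      rcases hc2 with h | h
      · exact _root_.trans hrb h
      · rwa [h] at hrb
    have hbpos : 0 < b := hb.1
    have e2 : Ψ₂ b = b := by
      by_contra hne
      exact (hmin2 b ⟨hbpos, hne⟩ hb2).elim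
    have e1 : Ψ₁ b = b := by
      by_contra hne
      exact (hmin1 b ⟨hbpos, hne⟩ hb1).elim
    exact hb.2 (by simp [Function.comp, e2, e1])
  rcases tri with h | h | h
  · exact key a1 (Or.inl ⟨ha1.1, ha1.2⟩) (Or.inr rfl) (Or.inl h)
  · exact key a1 (Or.inl ⟨ha1.1, ha1.2⟩) (Or.inr rfl) (Or.inr h)
  · exact key a2 (Or.inr ⟨ha2.1, ha2.2⟩) (Or.inl h) (Or.inr rfl)

lemma qPosM_comp {Ψ₁ Ψ₂ : ℝ → ℝ} (h1 : QPosM Ψ₁) (h2 : QPosM Ψ₂) :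
    QPosM (Ψ₁ ∘ Ψ₂) ∧ ((PosM Ψ₁ ∨ PosM Ψ₂) → PosM (Ψ₁ ∘ Ψ₂)) := by
  rcases h1 with hp1 | ht1
  · rcases h2 with hp2 | ht2
    · exact ⟨Or.inl (posM_comp_aux hp1 hp2), fun _ => posM_comp_aux hp1 hp2⟩
    · -- Ψ₂ trivial on positives: composition equals Ψ₁ on positives
      have hP : PosM (Ψ₁ ∘ Ψ₂) := by
        obtain ⟨g1, a, ha, ha', hmin⟩ := hp1
        have hset : ∀ x, 0 < x → (Ψ₁ ∘ Ψ₂) x = Ψ₁ x := fun x hx => by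
          simp [Function.comp, ht2.2 x hx]
        refine ⟨g1.comp ht2.1, a, ⟨ha.1, by rw [hset a ha.1]; exact ha.2⟩,
          by rw [hset a ha.1]; exact ha', ?_⟩
        intro b hb
        exact hmin b ⟨hb.1, by rw [← hset b hb.1]; exact hb.2⟩
      exact ⟨Or.inl hP, fun _ => hP⟩
  · rcases h2 with hp2 | ht2
    · have hP : PosM (Ψ₁ ∘ Ψ₂) := by
        obtain ⟨g2, a, ha, ha', hmin⟩ := hp2
        have hset : ∀ x, 0 < x → (Ψ₁ ∘ Ψ₂) x = Ψ₂ x := fun x hx => by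
          simp [Function.comp, ht1.2 (Ψ₂ x) (g2.1 x hx)]
        refine ⟨ht1.1.comp g2, a, ⟨ha.1, by rw [hset a ha.1]; exact ha.2⟩,
          by rw [hset a ha.1]; exact ha', ?_⟩
        intro b hb
        exact hmin b ⟨hb.1, by rw [← hset b hb.1]; exact hb.2⟩
      exact ⟨Or.inl hP, fun _ => hP⟩
    · refine ⟨Or.inr ⟨ht1.1.comp ht2.1, fun x hx => ?_⟩, fun h => ?_⟩
      · simp [Function.comp, ht2.2 x hx, ht1.2 x hx]
      · rcases h with h | h
        · exact absurd h (by rintro ⟨_, a, ha, _, _⟩; exact ha.2 (ht1.2 a ha.1))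
        · exact absurd h (by rintro ⟨_, a, ha, _, _⟩; exact ha.2 (ht2.2 a ha.1))

lemma qPosM_foldr (ℓ : List (ℝ → ℝ)) (h : ∀ Ψ ∈ ℓ, QPosM Ψ) :
    QPosM (ℓ.foldr (· ∘ ·) id) ∧ ((∃ Ψ ∈ ℓ, PosM Ψ) → PosM (ℓ.foldr (· ∘ ·) id)) := by
  induction ℓ with
  | nil =>
    refine ⟨Or.inr ⟨⟨fun τ hτ => hτ, fun _ _ _ h => h⟩, fun x _ => rfl⟩, ?_⟩
    rintro ⟨Ψ, hΨ, _⟩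
    exact absurd hΨ List.not_mem_nil
  | cons g ℓ ih =>
    have hg : QPosM g := h g List.mem_cons_self
    have ihs := ih (fun Ψ hΨ => h Ψ (List.mem_cons_of_mem g hΨ))
    have hcomp := qPosM_comp hg ihs.1
    refine ⟨hcomp.1, ?_⟩
    rintro ⟨Ψ, hΨ, hP⟩
    rcases List.mem_cons.mp hΨ with rfl | hmem
    · exact hcomp.2 (Or.inl hP)
    · exact hcomp.2 (Or.inr (ihs.2 ⟨Ψ, hmem, hP⟩))

lemma posM_neq_id {Ψ : ℝ → ℝ} (h : PosM Ψ) : ∃ a, 0 < a ∧ a < Ψ a := by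
  obtain ⟨_, a, ha, ha', _⟩ := h
  exact ⟨a, ha.1, ha'⟩

lemma sign_choice {Ψ Χ : ℝ → ℝ} (hΨ : GoodMap Ψ) (hΧ : GoodMap Χ)
    (hinv1 : ∀ x, 0 < x → Ψ (Χ x) = x) (hinv2 : ∀ x, 0 < x → Χ (Ψ x) = x)
    (hnt : ∃ τ, 0 < τ ∧ Ψ τ ≠ τ) : PosM Ψ ∨ PosM Χ := by
  have hDif : DifSet Ψ = DifSet Χ := by
    ext x
    constructor
    · rintro ⟨hx, hne⟩
      refine ⟨hx, fun hX => hne ?_⟩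
      calc Ψ x = Ψ (Χ x) := by rw [hX]
        _ = x := hinv1 x hx
    · rintro ⟨hx, hne⟩
      refine ⟨hx, fun hΨx => hne ?_⟩
      calc Χ x = Χ (Ψ x) := by rw [hΨx]
        _ = x := hinv2 x hx
  obtain ⟨τ, hτ, hτ'⟩ := hnt
  have hne : (DifSet Ψ).Nonempty := ⟨τ, hτ, hτ'⟩
  set wf := (IsWellFounded.wf : WellFounded (WellOrderingRel : ℝ → ℝ → Prop)) with hwf
  set a := wf.min (DifSet Ψ) hne with hadef
  have hamem : a ∈ DifSet Ψ := wf.min_mem _ hne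
  have hmin : ∀ b ∈ DifSet Ψ, ¬ WellOrderingRel b a := fun b hb => wf.not_lt_min _ hb
  rcases lt_or_gt_of_ne hamem.2 with hlt | hgt
  · -- Ψ a < a, so a < Χ a
    right
    have : Χ (Ψ a) < Χ a := hΧ.2 _ _ (hΨ.1 a hamem.1) hlt
    rw [hinv2 a hamem.1] at this
    refine ⟨hΧ, a, ?_, this, ?_⟩
    · exact hDif ▸ hamem
    · rw [← hDif]; exact hmin
  · exact Or.inl ⟨hΨ, a, hamem, hgt, hmin⟩


noncomputable def psiF (F : Filter ℝ) (g : ℝ → ℝ) (τ : ℝ) : ℝ :=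
  limUnder F (fun s => g (s * τ) / s)

/-- admissible maps: nonneg-preserving and coarsely Lipschitz on nonnegatives. -/
def Adm (g : ℝ → ℝ) : Prop :=
  (∀ x, 0 ≤ x → 0 ≤ g x) ∧
  ∃ L : ℝ, 1 ≤ L ∧ ∀ x y, 0 ≤ x → 0 ≤ y → |g x - g y| ≤ L * |x - y| + L

lemma tendsto_psiF {𝒰 : Ultrafilter ℝ} (hle : ↑𝒰 ≤ (atTop : Filter ℝ))
    {g : ℝ → ℝ} (hg : Adm g) {τ : ℝ} (hτ : 0 ≤ τ) :
    Tendsto (fun s => g (s * τ) / s) ↑𝒰 (𝓝 (psiF ↑𝒰 g τ)) := by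
  obtain ⟨hmaps, L, hL, hlip⟩ := hg
  set B : ℝ := L * τ + g 0 + L with hB
  have hmem : ∀ᶠ s in ↑𝒰, g (s * τ) / s ∈ Set.Icc (0:ℝ) B := by
    filter_upwards [hle (eventually_ge_atTop 1)] with s hs
    have hs0 : (0:ℝ) < s := lt_of_lt_of_le one_pos hs
    have hsτ : 0 ≤ s * τ := mul_nonneg hs0.le hτ
    constructor
    · exact div_nonneg (hmaps _ hsτ) hs0.le
    · have h1 : g (s * τ) - g 0 ≤ L * (s * τ) + L := by
        have h2 := hlip (s * τ) 0 hsτ le_rfl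
        rw [sub_zero] at h2
        have habs : g (s * τ) - g 0 ≤ |g (s * τ) - g 0| := le_abs_self _
        have h3 : |g (s * τ) - g 0| ≤ L * (s * τ) + L := by
          simpa [abs_of_nonneg hsτ] using h2
        linarith
      have hg00 : 0 ≤ g 0 := hmaps 0 le_rfl
      rw [div_le_iff₀ hs0]
      have e1 : g 0 * 1 ≤ g 0 * s := by
        apply mul_le_mul_of_nonneg_left hs hg00
      have e2 : L * 1 ≤ L * s := by
        apply mul_le_mul_of_nonneg_left hs (by linarith)
      have hBs : B * s = L * τ * s + g 0 * s + L * s := by rw [hB]; ring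
      nlinarith
  have hmem' : ↑(𝒰.map (fun s => g (s * τ) / s)) ≤ 𝓟 (Set.Icc (0:ℝ) B) := by
    rw [Ultrafilter.coe_map, le_principal_iff, mem_map]
    exact hmem
  obtain ⟨c, _, hc⟩ := isCompact_Icc.ultrafilter_le_nhds _ hmem'
  rw [Ultrafilter.coe_map] at hc
  have htend : Tendsto (fun s => g (s * τ) / s) ↑𝒰 (𝓝 c) := hc
  rwa [show psiF ↑𝒰 g τ = c from htend.limUnder_eq]

lemma psiF_nonneg {𝒰 : Ultrafilter ℝ} (hle : ↑𝒰 ≤ (atTop : Filter ℝ))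
    {g : ℝ → ℝ} (hg : Adm g) {τ : ℝ} (hτ : 0 ≤ τ) :
    0 ≤ psiF ↑𝒰 g τ := by
  refine ge_of_tendsto (tendsto_psiF hle hg hτ) ?_
  filter_upwards [hle (eventually_ge_atTop 1)] with s hs
  exact div_nonneg ((hg.1) _ (mul_nonneg (by linarith) hτ)) (by linarith)

lemma tendsto_comp_psiF {𝒰 : Ultrafilter ℝ} (hle : ↑𝒰 ≤ (atTop : Filter ℝ))
    {g : ℝ → ℝ} (hg : Adm g) {u : ℝ → ℝ} {b : ℝ}
    (hu : Tendsto u ↑𝒰 (𝓝 b)) (hb : 0 ≤ b) (hu0 : ∀ᶠ s in ↑𝒰, 0 ≤ u s) :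
    Tendsto (fun s => g (s * u s) / s) ↑𝒰 (𝓝 (psiF ↑𝒰 g b)) := by
  obtain ⟨hmaps, L, hL, hlip⟩ := hg
  have hbase := tendsto_psiF hle ⟨hmaps, L, hL, hlip⟩ hb
  have hdiff : Tendsto (fun s => g (s * u s) / s - g (s * b) / s) ↑𝒰 (𝓝 0) := by
    have hbound : ∀ᶠ s in ↑𝒰, |g (s * u s) / s - g (s * b) / s| ≤ L * |u s - b| + L / s := by
      filter_upwards [hle (eventually_ge_atTop 1), hu0] with s hs hus
      have hs0 : (0:ℝ) < s := lt_of_lt_of_le one_pos hs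
      have h1 : |g (s * u s) - g (s * b)| ≤ L * |s * u s - s * b| + L :=
        hlip _ _ (mul_nonneg hs0.le hus) (mul_nonneg hs0.le hb)
      have h2 : |s * u s - s * b| = s * |u s - b| := by
        rw [← mul_sub, abs_mul, abs_of_pos hs0]
      rw [div_sub_div_same, abs_div, abs_of_pos hs0, div_le_iff₀ hs0]
      rw [h2] at h1
      have h3 : L / s * s = L := by field_simp
      nlinarith [h1]
    have hlim : Tendsto (fun s => L * |u s - b| + L / s) ↑𝒰 (𝓝 0) := by
      have h1 : Tendsto (fun s => |u s - b|) ↑𝒰 (𝓝 0) := by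
        have h0 := hu.sub_const b
        rw [sub_self] at h0
        simpa using h0.abs
      have h2 : Tendsto (fun s : ℝ => L / s) ↑𝒰 (𝓝 0) :=
        tendsto_const_nhds.div_atTop (tendsto_id.mono_left hle)
      have h3 := (h1.const_mul L).add h2
      simpa using h3
    have habs : Tendsto (fun s => |g (s * u s) / s - g (s * b) / s|) ↑𝒰 (𝓝 0) :=
      squeeze_zero' (Eventually.of_forall (fun s => abs_nonneg _)) hbound hlim
    exact (tendsto_zero_iff_abs_tendsto_zero _).mpr habs
  have hsum := hdiff.add hbase
  simpa using hsum

lemma psiF_lower {𝒰 : Ultrafilter ℝ} (hle : ↑𝒰 ≤ (atTop : Filter ℝ))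
    {g : ℝ → ℝ} (hg : Adm g) {K c : ℝ} (hK : 0 < K)
    (hlow : ∀ x y, 0 ≤ x → x ≤ y → (y - x) / K - c ≤ g y - g x)
    {τ τ' : ℝ} (hτ : 0 ≤ τ) (hττ' : τ ≤ τ') :
    (τ' - τ) / K ≤ psiF ↑𝒰 g τ' - psiF ↑𝒰 g τ := by
  have hτ' : 0 ≤ τ' := le_trans hτ hττ'
  have h1 := tendsto_psiF hle hg hτ
  have h2 := tendsto_psiF hle hg hτ'
  have hconst : Tendsto (fun s : ℝ => (τ' - τ) / K - c / s) ↑𝒰 (𝓝 ((τ' - τ) / K)) := by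
    have h2' : Tendsto (fun s : ℝ => c / s) ↑𝒰 (𝓝 0) :=
      tendsto_const_nhds.div_atTop (tendsto_id.mono_left hle)
    have h3 := (tendsto_const_nhds (x := (τ' - τ) / K) (f := (↑𝒰 : Filter ℝ))).sub h2'
    simpa using h3
  refine le_of_tendsto_of_tendsto hconst (h2.sub h1) ?_
  filter_upwards [hle (eventually_ge_atTop 1)] with s hs
  have hs0 : (0:ℝ) < s := lt_of_lt_of_le one_pos hs
  have key : (s * τ' - s * τ) / K - c ≤ g (s * τ') - g (s * τ) :=
    hlow (s * τ) (s * τ') (mul_nonneg hs0.le hτ) (by nlinarith)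
  have hdiv := (div_le_div_iff_of_pos_right hs0).mpr key
  have heq : ((s * τ' - s * τ) / K - c) / s = (τ' - τ) / K - c / s := by
    field_simp
  calc (τ' - τ) / K - c / s = ((s * τ' - s * τ) / K - c) / s := heq.symm
    _ ≤ (g (s * τ') - g (s * τ)) / s := hdiv
    _ = g (s * τ') / s - g (s * τ) / s := by rw [sub_div]

lemma psiF_zero {F : Filter ℝ} [NeBot F] {g : ℝ → ℝ} (hg0 : g 0 = 0) : psiF F g 0 = 0 := by
  have h : (fun s : ℝ => g (s * 0) / s) = fun _ => (0:ℝ) := by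
    funext s; simp [hg0]
  rw [psiF, h]
  exact tendsto_const_nhds.limUnder_eq

lemma psiF_inv_comp {𝒰 : Ultrafilter ℝ} (hle : ↑𝒰 ≤ (atTop : Filter ℝ))
    {g v : ℝ → ℝ} (hg : Adm g) (hv : Adm v)
    (hgv : ∀ x, 0 ≤ x → g (v x) = x) {τ : ℝ} (hτ : 0 ≤ τ) :
    psiF ↑𝒰 g (psiF ↑𝒰 v τ) = τ := by
  set b := psiF ↑𝒰 v τ with hb
  have hb0 : 0 ≤ b := psiF_nonneg hle hv hτ
  have hu : Tendsto (fun s => v (s * τ) / s) ↑𝒰 (𝓝 b) := tendsto_psiF hle hv hτ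
  have hu0 : ∀ᶠ s in ↑𝒰, 0 ≤ v (s * τ) / s := by
    filter_upwards [hle (eventually_ge_atTop 1)] with s hs
    exact div_nonneg (hv.1 _ (mul_nonneg (by linarith) hτ)) (by linarith)
  have hcomp := tendsto_comp_psiF hle hg hu hb0 hu0
  have heq : ∀ᶠ s in ↑𝒰, g (s * (v (s * τ) / s)) / s = τ := by
    filter_upwards [hle (eventually_ge_atTop 1)] with s hs
    have hs0 : (0:ℝ) < s := lt_of_lt_of_le one_pos hs
    have h1 : s * (v (s * τ) / s) = v (s * τ) := by field_simp
    rw [h1, hgv _ (mul_nonneg hs0.le hτ), mul_comm, mul_div_assoc, div_self hs0.ne', mul_one]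
  have hten : Tendsto (fun s => g (s * (v (s * τ) / s)) / s) ↑𝒰 (𝓝 τ) := by
    rw [tendsto_congr' heq]
    exact tendsto_const_nhds
  exact tendsto_nhds_unique hcomp hten

lemma foldr_nonneg (ℓ : List (ℝ → ℝ)) (hℓ : ∀ g ∈ ℓ, Adm g) :
    ∀ x, 0 ≤ x → 0 ≤ (ℓ.foldr (· ∘ ·) id) x := by
  induction ℓ with
  | nil => intro x hx; simpa using hx
  | cons g ℓ ih =>
    intro x hx
    have h1 := ih (fun g' hg' => hℓ g' (List.mem_cons_of_mem g hg')) x hx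
    have h2 := (hℓ g List.mem_cons_self).1 _ h1
    simpa using h2

lemma foldr_tendsto {𝒰 : Ultrafilter ℝ} (hle : ↑𝒰 ≤ (atTop : Filter ℝ))
    (ℓ : List (ℝ → ℝ)) (hℓ : ∀ g ∈ ℓ, Adm g) {τ : ℝ} (hτ : 0 ≤ τ) :
    0 ≤ (ℓ.map (psiF ↑𝒰)).foldr (· ∘ ·) id τ ∧
    Tendsto (fun s => (ℓ.foldr (· ∘ ·) id) (s * τ) / s) ↑𝒰
      (𝓝 ((ℓ.map (psiF ↑𝒰)).foldr (· ∘ ·) id τ)) := by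
  induction ℓ with
  | nil =>
    refine ⟨by simpa using hτ, ?_⟩
    have heq : ∀ᶠ s in ↑𝒰, (List.foldr (· ∘ ·) id []) (s * τ) / s = τ := by
      filter_upwards [hle (eventually_ge_atTop 1)] with s hs
      have hs0 : (0:ℝ) < s := lt_of_lt_of_le one_pos hs
      simp [mul_comm, mul_div_assoc, div_self hs0.ne']
    rw [tendsto_congr' heq]
    simpa using (tendsto_const_nhds : Tendsto (fun _ : ℝ => τ) ↑𝒰 (𝓝 τ))
  | cons g ℓ ih =>
    have hℓ' : ∀ g' ∈ ℓ, Adm g' := fun g' hg' => hℓ g' (List.mem_cons_of_mem g hg')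
    have hg : Adm g := hℓ g List.mem_cons_self
    obtain ⟨ihn, iht⟩ := ih hℓ'
    set b := (ℓ.map (psiF ↑𝒰)).foldr (· ∘ ·) id τ with hbdef
    have hu0 : ∀ᶠ s in ↑𝒰, 0 ≤ (ℓ.foldr (· ∘ ·) id) (s * τ) / s := by
      filter_upwards [hle (eventually_ge_atTop 1)] with s hs
      exact div_nonneg (foldr_nonneg ℓ hℓ' _ (mul_nonneg (by linarith) hτ)) (by linarith)
    have hcomp := tendsto_comp_psiF hle hg iht ihn hu0
    have heq : ∀ᶠ s in ↑𝒰,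
        g (s * ((ℓ.foldr (· ∘ ·) id) (s * τ) / s)) / s
          = (List.foldr (· ∘ ·) id (g :: ℓ)) (s * τ) / s := by
      filter_upwards [hle (eventually_ge_atTop 1)] with s hs
      have hs0 : (0:ℝ) < s := lt_of_lt_of_le one_pos hs
      have h1 : s * ((ℓ.foldr (· ∘ ·) id) (s * τ) / s) = (ℓ.foldr (· ∘ ·) id) (s * τ) := by
        field_simp
      rw [h1]
      simp [Function.comp]
    constructor
    · have : (List.map (psiF ↑𝒰) (g :: ℓ)).foldr (· ∘ ·) id τ = psiF ↑𝒰 g b := by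
        simp [Function.comp, hbdef]
      rw [this]
      exact psiF_nonneg hle hg ihn
    · have h2 : Tendsto (fun s => (List.foldr (· ∘ ·) id (g :: ℓ)) (s * τ) / s) ↑𝒰
          (𝓝 (psiF ↑𝒰 g b)) := by
        rw [← tendsto_congr' heq]
        exact hcomp
      have h3 : (List.map (psiF ↑𝒰) (g :: ℓ)).foldr (· ∘ ·) id τ = psiF ↑𝒰 g b := by
        simp [Function.comp, hbdef]
      rw [h3]
      exact h2


section basicfacts

variable {n : ℕ} {f finv : Fin n → ℝ → ℝ}

theorem stmt8_facts
    (hqi : ∀ i, IsQI (f i))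
    (hmono : ∀ i, StrictMonoOn (f i) (Set.Ici 0))
    (hbij : ∀ i, Set.BijOn (f i) (Set.Ici 0) (Set.Ici 0))
    (hinv : ∀ i, ∀ x : ℝ, 0 ≤ x → finv i (f i x) = x ∧ f i (finv i x) = x) :
    ∀ i, (f i 0 = 0) ∧ (finv i 0 = 0) ∧ (∀ x, 0 ≤ x → 0 ≤ finv i x) := by
  intro i
  have hf0 : f i 0 = 0 := by
    obtain ⟨x, hx, hfx⟩ := (hbij i).2.2 (show (0:ℝ) ∈ Set.Ici 0 from Set.mem_Ici.mpr le_rfl)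
    rcases eq_or_lt_of_le (show (0:ℝ) ≤ x from Set.mem_Ici.mp hx) with h | h
    · rw [← h] at hfx; exact hfx
    · exfalso
      have h1 : f i 0 < f i x := (hmono i) (Set.mem_Ici.mpr le_rfl) hx h
      have h2 : 0 ≤ f i 0 := (hqi i).1 0 le_rfl
      rw [hfx] at h1; linarith
  refine ⟨hf0, ?_, ?_⟩
  · have := (hinv i 0 le_rfl).1
    rwa [hf0] at this
  · intro x hx
    obtain ⟨y, hy, hfy⟩ := (hbij i).2.2 (show x ∈ Set.Ici 0 from Set.mem_Ici.mpr hx)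
    have := (hinv i y hy).1
    rw [hfy] at this
    rw [this]
    exact hy

end basicfacts



/-- given finitely many strictly increasing quasi-isometric homeomorphisms
`fᵢ` of `[0,∞)`, none satisfying `fᵢ(x)/x → 1`, there are signs `εᵢ` such that no
nonempty composition of the `fᵢ^{εᵢ}` satisfies `w(x)/x → 1`. (Navas's criterion for
left-orderability of `QI(ℝ₊)/H`.) -/
theorem stmt8 (n : ℕ) (f finv : Fin n → ℝ → ℝ)
    (hqi : ∀ i, IsQI (f i))
    (hcont : ∀ i, ContinuousOn (f i) (Set.Ici 0))
    (hmono : ∀ i, StrictMonoOn (f i) (Set.Ici 0))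
    (hbij : ∀ i, Set.BijOn (f i) (Set.Ici 0) (Set.Ici 0))
    (hinv : ∀ i, ∀ x : ℝ, 0 ≤ x → finv i (f i x) = x ∧ f i (finv i x) = x)
    (hnt : ∀ i, ¬ Tendsto (fun x => f i x / x) atTop (𝓝 1)) :
    ∃ ε : Fin n → Bool, ∀ m : ℕ, 0 < m → ∀ idx : Fin m → Fin n,
      ¬ Tendsto (fun x =>
          ((List.ofFn fun j : Fin m =>
            if ε (idx j) then f (idx j) else finv (idx j)).foldr (· ∘ ·) id) x / x)
        atTop (𝓝 1) := by
  classical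
  -- constants
  choose K hK using fun i => (hqi i).2.1
  have hK1 : ∀ i, 1 < K i := fun i => (hK i).1
  have hfacts := stmt8_facts hqi hmono hbij hinv
  have hf0 : ∀ i, f i 0 = 0 := fun i => (hfacts i).1
  have hv0 : ∀ i, finv i 0 = 0 := fun i => (hfacts i).2.1
  have hvnn : ∀ i x, 0 ≤ x → 0 ≤ finv i x := fun i => (hfacts i).2.2
  have hmonoOn : ∀ i, MonotoneOn (f i) (Set.Ici 0) := fun i => (hmono i).monotoneOn
  -- admissibility
  have hAdmf : ∀ i, Adm (f i) :=
    fun i => ⟨(hqi i).1, K i, (hK1 i).le, fun x y hx hy => ((hK i).2 x y hx hy).2⟩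
  have hAdmv : ∀ i, Adm (finv i) := by
    intro i
    refine ⟨hvnn i, (K i)^2, by nlinarith [hK1 i], fun x y hx hy => ?_⟩
    have h1 := ((hK i).2 (finv i x) (finv i y) (hvnn i x hx) (hvnn i y hy)).1
    rw [(hinv i x hx).2, (hinv i y hy).2] at h1
    have hKpos : (0:ℝ) < K i := lt_trans one_pos (hK1 i)
    have habs : 0 ≤ |finv i x - finv i y| := abs_nonneg _
    have habs2 : 0 ≤ |x - y| := abs_nonneg _
    rw [div_mul_eq_mul_div, one_mul] at h1
    have h2 : |finv i x - finv i y| / K i ≤ |x - y| + K i := by linarith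
    have h3 : |finv i x - finv i y| ≤ (|x - y| + K i) * K i := (div_le_iff₀ hKpos).mp h2
    have h5 : K i * |x - y| ≤ K i ^ 2 * |x - y| :=
      mul_le_mul_of_nonneg_right (by nlinarith [hK1 i]) habs2
    nlinarith [hK1 i]
  -- lower bounds
  have hlowf : ∀ i, ∀ x y, 0 ≤ x → x ≤ y → (y - x) / (K i) - (K i) ≤ f i y - f i x := by
    intro i x y hx hxy
    have hy : 0 ≤ y := le_trans hx hxy
    have h1 := ((hK i).2 x y hx hy).1
    have h2 : |x - y| = y - x := by rw [abs_sub_comm]; exact abs_of_nonneg (by linarith)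
    have h3 : |f i x - f i y| = f i y - f i x := by
      rw [abs_sub_comm]
      exact abs_of_nonneg (by
        have := hmonoOn i (Set.mem_Ici.mpr hx) (Set.mem_Ici.mpr hy) hxy
        linarith)
    rw [h2, h3] at h1
    have hKpos : (0:ℝ) < K i := lt_trans one_pos (hK1 i)
    rw [div_mul_eq_mul_div, one_mul] at h1
    linarith [h1]
  have hvmonoOn : ∀ i, ∀ x y, 0 ≤ x → x ≤ y → finv i x ≤ finv i y := by
    intro i x y hx hxy
    by_contra hcon
    push_neg at hcon
    have h1 : f i (finv i y) ≤ f i (finv i x) :=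
      hmonoOn i (Set.mem_Ici.mpr (hvnn i y (le_trans hx hxy)))
        (Set.mem_Ici.mpr (hvnn i x hx)) hcon.le
    rw [(hinv i x hx).2, (hinv i y (le_trans hx hxy)).2] at h1
    have : x = y := le_antisymm hxy h1
    rw [this] at hcon
    exact lt_irrefl _ hcon
  have hlowv : ∀ i, ∀ x y, 0 ≤ x → x ≤ y → (y - x) / (K i) - 1 ≤ finv i y - finv i x := by
    intro i x y hx hxy
    have hy : 0 ≤ y := le_trans hx hxy
    have h1 := ((hK i).2 (finv i x) (finv i y) (hvnn i x hx) (hvnn i y hy)).2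
    rw [(hinv i x hx).2, (hinv i y hy).2] at h1
    have h2 : |x - y| = y - x := by rw [abs_sub_comm]; exact abs_of_nonneg (by linarith)
    have h3 : |finv i x - finv i y| = finv i y - finv i x := by
      rw [abs_sub_comm]
      exact abs_of_nonneg (by linarith [hvmonoOn i x y hx hxy])
    rw [h2, h3] at h1
    have hKpos : (0:ℝ) < K i := lt_trans one_pos (hK1 i)
    have h4 : (y - x) / K i ≤ (finv i y - finv i x) + 1 := by
      rw [div_le_iff₀ hKpos]
      nlinarith
    linarith
  -- goodness of limits
  have hGood : ∀ (𝒰 : Ultrafilter ℝ), ↑𝒰 ≤ (atTop : Filter ℝ) → ∀ i (b : Bool),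
      GoodMap (psiF ↑𝒰 (if b then f i else finv i)) := by
    intro 𝒰 hle i b
    have hKpos : (0:ℝ) < K i := lt_trans one_pos (hK1 i)
    have hAdm : Adm (if b then f i else finv i) := by
      cases b
      · simpa using hAdmv i
      · simpa using hAdmf i
    have hzero : (if b then f i else finv i) 0 = 0 := by
      cases b
      · simpa using hv0 i
      · simpa using hf0 i
    have hlow : ∀ x y, 0 ≤ x → x ≤ y →
        (y - x) / (K i) - (max (K i) 1) ≤ (if b then f i else finv i) y
          - (if b then f i else finv i) x := by
      intro x y hx hxy
      cases b
      · have e : (fun z => if (false:Bool) then f i z else finv i z) = finv i := by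
          funext z; simp
        simp only [Bool.false_eq_true, if_false]
        have h6 := hlowv i x y hx hxy
        have h5 : (1:ℝ) ≤ max (K i) 1 := le_max_right _ _
        linarith
      · simp only [if_true]
        have h6 := hlowf i x y hx hxy
        have h5 : K i ≤ max (K i) 1 := le_max_left _ _
        linarith
    have hmonopsi : ∀ τ τ', 0 ≤ τ → τ ≤ τ' →
        (τ' - τ) / K i ≤ psiF ↑𝒰 (if b then f i else finv i) τ'
          - psiF ↑𝒰 (if b then f i else finv i) τ :=
      fun τ τ' hτ hττ' => psiF_lower hle hAdm hKpos hlow hτ hττ'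
    have hpz : psiF ↑𝒰 (if b then f i else finv i) 0 = 0 := psiF_zero hzero
    constructor
    · intro τ hτ
      have := hmonopsi 0 τ le_rfl hτ.le
      rw [hpz] at this
      have : τ / K i ≤ psiF ↑𝒰 (if b then f i else finv i) τ := by simpa using this
      have hpos : 0 < τ / K i := div_pos hτ hKpos
      linarith
    · intro τ τ' hτ hlt
      have := hmonopsi τ τ' hτ.le hlt.le
      have hpos : 0 < (τ' - τ) / K i := div_pos (by linarith) hKpos
      linarith
  -- inverse pair identities
  have hPair1 : ∀ (𝒰 : Ultrafilter ℝ), ↑𝒰 ≤ (atTop : Filter ℝ) → ∀ i τ, 0 ≤ τ →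
      psiF ↑𝒰 (f i) (psiF ↑𝒰 (finv i) τ) = τ := by
    intro 𝒰 hle i τ hτ
    exact psiF_inv_comp hle (hAdmf i) (hAdmv i) (fun x hx => (hinv i x hx).2) hτ
  have hPair2 : ∀ (𝒰 : Ultrafilter ℝ), ↑𝒰 ≤ (atTop : Filter ℝ) → ∀ i τ, 0 ≤ τ →
      psiF ↑𝒰 (finv i) (psiF ↑𝒰 (f i) τ) = τ := by
    intro 𝒰 hle i τ hτ
    refine psiF_inv_comp hle (hAdmv i) (hAdmf i) (fun x hx => ?_) hτ
    exact (hinv i x hx).1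
  -- trivial f implies trivial finv
  have htrivv : ∀ (𝒰 : Ultrafilter ℝ) (hle : ↑𝒰 ≤ (atTop : Filter ℝ)) i,
      (∀ τ, 0 < τ → psiF ↑𝒰 (f i) τ = τ) →
      ∀ τ, 0 < τ → psiF ↑𝒰 (finv i) τ = τ := by
    intro 𝒰 hle i htriv τ hτ
    have h1 : 0 < psiF ↑𝒰 (finv i) τ := by
      have := hGood 𝒰 hle i false
      exact this.1 τ hτ
    have h2 := htriv _ h1
    rw [← h2]
    exact (hPair1 𝒰 hle i τ hτ.le)
  -- seed ultrafilter
  have hseed : ∀ i, ∃ 𝒰 : Ultrafilter ℝ, ↑𝒰 ≤ (atTop : Filter ℝ) ∧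
      ∃ τ, 0 < τ ∧ psiF ↑𝒰 (f i) τ ≠ τ := by
    intro i
    have h0 := hnt i
    rw [Metric.tendsto_nhds] at h0
    push_neg at h0
    obtain ⟨δ, hδ, hfreq⟩ := h0
    have hfreq : ∃ᶠ x in atTop, ¬ dist (f i x / x) 1 < δ := hfreq.mono fun x hx => not_lt.mpr hx
    have hNB : ((atTop : Filter ℝ) ⊓ 𝓟 {x | ¬ dist (f i x / x) 1 < δ}).NeBot :=
      frequently_iff_neBot.mp hfreq
    refine ⟨Ultrafilter.of ((atTop : Filter ℝ) ⊓ 𝓟 {x | ¬ dist (f i x / x) 1 < δ}),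
      le_trans (Ultrafilter.of_le _) inf_le_left, 1, one_pos, ?_⟩
    set 𝒰 := Ultrafilter.of ((atTop : Filter ℝ) ⊓ 𝓟 {x | ¬ dist (f i x / x) 1 < δ}) with h𝒰
    have hle : ↑𝒰 ≤ (atTop : Filter ℝ) := le_trans (Ultrafilter.of_le _) inf_le_left
    have hA : ∀ᶠ x in ↑𝒰, ¬ dist (f i x / x) 1 < δ :=
      le_trans (Ultrafilter.of_le _) inf_le_right (mem_principal_self _)
    have htp := tendsto_psiF hle (hAdmf i) (le_of_lt (one_pos : (0:ℝ) < 1))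
    have htp' : Tendsto (fun s => f i s / s) ↑𝒰 (𝓝 (psiF ↑𝒰 (f i) 1)) := by
      have : (fun s : ℝ => f i (s * 1) / s) = fun s => f i s / s := by
        funext s; rw [mul_one]
      rwa [this] at htp
    have hdist : Tendsto (fun s => dist (f i s / s) 1) ↑𝒰
        (𝓝 (dist (psiF ↑𝒰 (f i) 1) 1)) := htp'.dist tendsto_const_nhds
    have hge : δ ≤ dist (psiF ↑𝒰 (f i) 1) 1 := by
      refine ge_of_tendsto hdist ?_
      filter_upwards [hA] with s hs
      exact not_lt.mp hs
    intro hcon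
    rw [hcon] at hge
    simp at hge
    linarith
  -- the recursion
  have main : ∀ (N : ℕ) (U : Finset (Fin n)), U.card ≤ N →
      ∃ (st : Fin n → ℕ) (Fls : ℕ → Ultrafilter ℝ) (ε : Fin n → Bool),
        (∀ j, ↑(Fls j) ≤ (atTop : Filter ℝ)) ∧
        ∀ i ∈ U, PosM (psiF ↑(Fls (st i)) (if ε i then f i else finv i)) ∧
          ∀ j, j < st i → ∀ τ, 0 < τ → psiF ↑(Fls j) (f i) τ = τ := by
    intro N
    induction N with
    | zero =>
      intro U hU
      have hUe : U = ∅ := Finset.card_eq_zero.mp (Nat.le_zero.mp hU)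
      refine ⟨fun _ => 0, fun _ => Ultrafilter.of atTop, fun _ => true,
        fun _ => Ultrafilter.of_le _, ?_⟩
      intro i hi
      rw [hUe] at hi
      exact absurd hi (Finset.notMem_empty i)
    | succ N ih =>
      intro U hU
      rcases Finset.eq_empty_or_nonempty U with rfl | ⟨i₀, hi₀⟩
      · refine ⟨fun _ => 0, fun _ => Ultrafilter.of atTop, fun _ => true,
          fun _ => Ultrafilter.of_le _, ?_⟩
        intro i hi
        exact absurd hi (Finset.notMem_empty i)
      obtain ⟨𝒰, hle, τ₀, hτ₀, hτ₀'⟩ := hseed i₀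
      set I : Finset (Fin n) :=
        U.filter (fun i => ¬ ∀ τ, 0 < τ → psiF ↑𝒰 (f i) τ = τ) with hI
      have hi₀I : i₀ ∈ I := by
        rw [hI, Finset.mem_filter]
        exact ⟨hi₀, fun hall => hτ₀' (hall τ₀ hτ₀)⟩
      have hIU : I ⊆ U := Finset.filter_subset _ _
      have hcard : (U \ I).card ≤ N := by
        have h1 : (U \ I) ⊂ U := Finset.sdiff_ssubset hIU ⟨i₀, hi₀I⟩
        have h2 := Finset.card_lt_card h1
        omega
      obtain ⟨st', Fls', ε', hFle', hprop'⟩ := ih (U \ I) hcard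
      -- sign selection on I
      have hsel : ∀ i ∈ I, ∃ b : Bool, PosM (psiF ↑𝒰 (if b then f i else finv i)) := by
        intro i hi
        rw [hI, Finset.mem_filter] at hi
        have hnt' : ∃ τ, 0 < τ ∧ psiF ↑𝒰 (f i) τ ≠ τ := by
          have := hi.2
          push_neg at this
          obtain ⟨τ, hτ, hne⟩ := this
          exact ⟨τ, hτ, hne⟩
        have hor := sign_choice
          (by simpa using hGood 𝒰 hle i true)
          (by simpa using hGood 𝒰 hle i false)
          (fun x hx => hPair1 𝒰 hle i x hx.le)
          (fun x hx => hPair2 𝒰 hle i x hx.le) hnt'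
        rcases hor with h | h
        · exact ⟨true, by simpa using h⟩
        · exact ⟨false, by simpa using h⟩
      choose bsel hbsel using hsel
      refine ⟨fun i => if i ∈ I then 0 else st' i + 1,
        fun j => match j with | 0 => 𝒰 | (k+1) => Fls' k,
        fun i => if h : i ∈ I then bsel i h else ε' i,
        ?_, ?_⟩
      · intro j
        match j with
        | 0 => exact hle
        | (k+1) => exact hFle' k
      · intro i hi
        by_cases hiI : i ∈ I
        · constructor
          · simp only [hiI, if_pos, dif_pos]
            exact hbsel i hiI
          · intro j hj
            simp only [hiI, if_pos] at hj
            omega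
        · have hiU' : i ∈ U \ I := Finset.mem_sdiff.mpr ⟨hi, hiI⟩
          have hp := hprop' i hiU'
          constructor
          · simpa only [hiI, if_neg, dif_neg, not_false_iff] using hp.1
          · intro j hj
            simp only [hiI, if_neg, not_false_iff] at hj
            match j, hj with
            | 0, _ =>
              intro τ hτ
              by_contra hne
              have : i ∈ I := by
                rw [hI, Finset.mem_filter]
                refine ⟨hi, fun hall => hne (hall τ hτ)⟩
              exact hiI this
            | (k+1), hj => exact hp.2 k (by omega)
  -- conclude
  obtain ⟨st, Fls, ε, hFle, hprop⟩ := main n Finset.univ (by simp [Finset.card_univ])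
  refine ⟨ε, ?_⟩
  intro m hm idx htend
  have hj0 : (0 : ℕ) < m := hm
  set T : Finset ℕ := Finset.image (fun j => st (idx j)) Finset.univ with hT
  have hTne : T.Nonempty := ⟨st (idx ⟨0, hm⟩), by
    rw [hT]; exact Finset.mem_image_of_mem _ (Finset.mem_univ _)⟩
  set jstar := T.min' hTne with hjstar
  set 𝒰 := Fls jstar with h𝒰
  have hle : ↑𝒰 ≤ (atTop : Filter ℝ) := hFle jstar
  set Lfun : List (ℝ → ℝ) :=
    List.ofFn (fun j : Fin m => if ε (idx j) then f (idx j) else finv (idx j)) with hLfun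
  have hAdmL : ∀ g ∈ Lfun, Adm g := by
    intro g hg
    rw [hLfun, List.mem_ofFn] at hg
    obtain ⟨j, hj⟩ := hg
    rw [← hj]
    by_cases hb : ε (idx j)
    · simp only [hb, if_pos]; exact hAdmf _
    · simp only [hb, if_neg, not_false_iff]; exact hAdmv _
  have hQ : ∀ Ψ ∈ Lfun.map (psiF ↑𝒰), QPosM Ψ := by
    intro Ψ hΨ
    rw [hLfun, List.map_ofFn, List.mem_ofFn] at hΨ
    obtain ⟨j, hj⟩ := hΨ
    rw [← hj]
    simp only [Function.comp]
    have hmem : st (idx j) ∈ T := by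
      rw [hT]; exact Finset.mem_image_of_mem _ (Finset.mem_univ _)
    have hge : jstar ≤ st (idx j) := Finset.min'_le T _ hmem
    rcases eq_or_lt_of_le hge with heq | hlt
    · left
      have h := (hprop (idx j) (Finset.mem_univ _)).1
      rw [h𝒰, heq]
      exact h
    · right
      have htrivf := (hprop (idx j) (Finset.mem_univ _)).2 jstar hlt
      refine ⟨hGood 𝒰 hle (idx j) (ε (idx j)), ?_⟩
      intro x hx
      by_cases hb : ε (idx j)
      · simp only [hb, if_pos]
        exact htrivf x hx
      · simp only [hb, if_neg, not_false_iff]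
        exact htrivv 𝒰 hle (idx j) htrivf x hx
  have hPosEx : ∃ Ψ ∈ Lfun.map (psiF ↑𝒰), PosM Ψ := by
    have hmem : jstar ∈ T := by rw [hjstar]; exact T.min'_mem hTne
    rw [hT] at hmem
    obtain ⟨j₀, _, hj₀⟩ := Finset.mem_image.mp hmem
    refine ⟨psiF ↑𝒰 (if ε (idx j₀) then f (idx j₀) else finv (idx j₀)), ?_, ?_⟩
    · rw [hLfun, List.map_ofFn, List.mem_ofFn]
      exact ⟨j₀, rfl⟩
    · have h := (hprop (idx j₀) (Finset.mem_univ _)).1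
      rw [h𝒰, ← hj₀]
      exact h
  have hPos : PosM ((Lfun.map (psiF ↑𝒰)).foldr (· ∘ ·) id) :=
    (qPosM_foldr _ hQ).2 hPosEx
  obtain ⟨a, ha, ha'⟩ := posM_neq_id hPos
  have hft := (foldr_tendsto hle Lfun hAdmL ha.le).2
  -- contradiction with htend
  have hta : Tendsto (fun s : ℝ => s * a) ↑𝒰 atTop :=
    Tendsto.atTop_mul_const ha (tendsto_id.mono_left hle)
  have h1 : Tendsto (fun s : ℝ => (Lfun.foldr (· ∘ ·) id) (s * a) / (s * a)) ↑𝒰 (𝓝 1) :=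
    htend.comp hta
  have h2 : Tendsto (fun s : ℝ => (Lfun.foldr (· ∘ ·) id) (s * a) / s) ↑𝒰 (𝓝 a) := by
    have h3 : Tendsto (fun s : ℝ => ((Lfun.foldr (· ∘ ·) id) (s * a) / (s * a)) * a) ↑𝒰
        (𝓝 (1 * a)) := h1.mul_const a
    rw [one_mul] at h3
    have heq : ∀ᶠ s in ↑𝒰, ((Lfun.foldr (· ∘ ·) id) (s * a) / (s * a)) * a
        = (Lfun.foldr (· ∘ ·) id) (s * a) / s := by
      filter_upwards [hle (eventually_ge_atTop 1)] with s hs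
      have hs0 : (0:ℝ) < s := lt_of_lt_of_le one_pos hs
      field_simp
    exact Filter.Tendsto.congr' heq h3
  have := tendsto_nhds_unique hft h2
  rw [this] at ha'
  exact lt_irrefl _ ha'
end

section
/- Let f be a strictly increasing homeomorphism of [0,∞) that is a quasi-isometry, and suppose that for some integer n ≥ 1 the n-fold composition f^{∘n} satisfies f^{∘n}(x)/x → 1 as x → ∞. Then f(x)/x → 1 as x → ∞. (Equivalently, the quotient group QI(ℝ₊)/H is torsion-free.) -/
open Filter Topology

lemma stmt9_iter_nonneg (f : ℝ → ℝ) (hpos : ∀ x, 0 ≤ x → 0 ≤ f x) (x : ℝ) (hx : 0 ≤ x) :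
    ∀ j, 0 ≤ f^[j] x := by
  intro j
  induction j with
  | zero => simpa
  | succ j ih => rw [Function.iterate_succ_apply']; exact hpos _ ih

lemma stmt9_iter_up (f : ℝ → ℝ) (K : ℝ) (hK : 1 < K)
    (hmono : MonotoneOn f (Set.Ici 0))
    (hlow : ∀ x y : ℝ, 0 ≤ x → x ≤ y → f x + (y - x) / K - K ≤ f y)
    (δ x : ℝ) (hδ : 0 < δ) (hx : 0 ≤ x) (hfx : x + δ * x ≤ f x)
    (n : ℕ) (hbig : ∀ j : ℕ, j ≤ n → (j : ℝ) * K ≤ δ * x / K ^ j) :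
    ∀ j : ℕ, j ≤ n → x + δ * x / K ^ j - (j : ℝ) * K ≤ f^[j + 1] x := by
  intro j
  induction j with
  | zero => intro _; simpa using hfx
  | succ j ih =>
    intro hjn
    have hj : j ≤ n := Nat.le_of_succ_le hjn
    have IH := ih hj
    have hK0 : (0 : ℝ) < K := lt_trans one_pos hK
    have hKj : (0 : ℝ) < K ^ j := pow_pos hK0 j
    set a : ℝ := δ * x / K ^ j - (j : ℝ) * K with ha
    have ha0 : 0 ≤ a := by have := hbig j hj; simp only [ha]; linarith
    have hxa : (0 : ℝ) ≤ x + a := by linarith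
    have hiter : x + a ≤ f^[j + 1] x := by rw [ha]; linarith
    have hiter0 : (0 : ℝ) ≤ f^[j + 1] x := le_trans hxa hiter
    have h1 : f (x + a) ≤ f (f^[j + 1] x) :=
      hmono (Set.mem_Ici.mpr hxa) (Set.mem_Ici.mpr hiter0) hiter
    have h2 : f x + ((x + a) - x) / K - K ≤ f (x + a) := hlow x (x + a) hx (by linarith)
    have haK : a / K = δ * x / K ^ (j + 1) - (j : ℝ) := by
      rw [ha, pow_succ]
      field_simp
    have hstep : f^[j + 1 + 1] x = f (f^[j + 1] x) := Function.iterate_succ_apply' f (j + 1) x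
    have hjK : (j : ℝ) ≤ (j : ℝ) * K := by
      nlinarith [Nat.cast_nonneg (α := ℝ) j]
    have hδx : 0 ≤ δ * x := mul_nonneg hδ.le hx
    rw [hstep]
    have : f x + a / K - K ≤ f (f^[j + 1] x) := by
      have : ((x + a) - x) / K = a / K := by ring_nf
      linarith [h2, h1, this.symm.le]
    push_cast
    linarith [haK, hfx, this]

lemma stmt9_iter_down (f : ℝ → ℝ) (K : ℝ) (hK : 1 < K)
    (hpos : ∀ x, 0 ≤ x → 0 ≤ f x)
    (hmono : MonotoneOn f (Set.Ici 0))
    (hlow : ∀ x y : ℝ, 0 ≤ x → x ≤ y → f x + (y - x) / K - K ≤ f y)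
    (δ x : ℝ) (hδ : 0 < δ) (hx : 0 ≤ x) (hfx : f x ≤ x - δ * x)
    (n : ℕ) (hbig : ∀ j : ℕ, j ≤ n → (j : ℝ) * K ≤ δ * x / K ^ j) :
    ∀ j : ℕ, j ≤ n → f^[j + 1] x ≤ x - δ * x / K ^ j + (j : ℝ) * K := by
  intro j
  induction j with
  | zero => intro _; simpa using hfx
  | succ j ih =>
    intro hjn
    have hj : j ≤ n := Nat.le_of_succ_le hjn
    have IH := ih hj
    have hK0 : (0 : ℝ) < K := lt_trans one_pos hK
    have hKj : (0 : ℝ) < K ^ j := pow_pos hK0 j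
    set a : ℝ := δ * x / K ^ j - (j : ℝ) * K with ha
    have ha0 : 0 ≤ a := by have := hbig j hj; simp only [ha]; linarith
    have hb0 : 0 ≤ f^[j + 1] x := stmt9_iter_nonneg f hpos x hx (j + 1)
    have hble : f^[j + 1] x ≤ x - a := by rw [ha]; linarith
    have hxa0 : (0 : ℝ) ≤ x - a := le_trans hb0 hble
    have h1 : f (f^[j + 1] x) ≤ f (x - a) :=
      hmono (Set.mem_Ici.mpr hb0) (Set.mem_Ici.mpr hxa0) hble
    have h2 : f (x - a) + (x - (x - a)) / K - K ≤ f x := hlow (x - a) x hxa0 (by linarith)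
    have haK : a / K = δ * x / K ^ (j + 1) - (j : ℝ) := by
      rw [ha, pow_succ]
      field_simp
    have hstep : f^[j + 1 + 1] x = f (f^[j + 1] x) := Function.iterate_succ_apply' f (j + 1) x
    have hjK : (j : ℝ) ≤ (j : ℝ) * K := by
      nlinarith [Nat.cast_nonneg (α := ℝ) j]
    have hδx : 0 ≤ δ * x := mul_nonneg hδ.le hx
    rw [hstep]
    have hax : (x - (x - a)) / K = a / K := by ring_nf
    have : f (f^[j + 1] x) ≤ f x - a / K + K := by linarith [h1, h2, hax.le]
    push_cast
    linarith [haK, hfx, this]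

/-- if a strictly increasing quasi-isometric homeomorphism `f` of `[0,∞)`
has `f^[n](x)/x → 1` for some `n ≥ 1`, then already `f(x)/x → 1`.
(`QI(ℝ₊)/H` is torsion-free.) -/
theorem stmt9 (f : ℝ → ℝ) (hqi : IsQI f) (hcont : ContinuousOn f (Set.Ici 0))
    (hmono : StrictMonoOn f (Set.Ici 0)) (hbij : Set.BijOn f (Set.Ici 0) (Set.Ici 0))
    (n : ℕ) (hn : 1 ≤ n)
    (h : Tendsto (fun x => f^[n] x / x) atTop (𝓝 1)) :
    Tendsto (fun x => f x / x) atTop (𝓝 1) := by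
  obtain ⟨hpos, ⟨K, hK, hKspec⟩, -⟩ := hqi
  have hK0 : (0 : ℝ) < K := lt_trans one_pos hK
  have hmono' : MonotoneOn f (Set.Ici 0) := hmono.monotoneOn
  have hlow : ∀ x y : ℝ, 0 ≤ x → x ≤ y → f x + (y - x) / K - K ≤ f y := by
    intro x y hx hxy
    have hy : 0 ≤ y := le_trans hx hxy
    have h1 := (hKspec x y hx hy).1
    have hfle : f x ≤ f y := hmono' (Set.mem_Ici.mpr hx) (Set.mem_Ici.mpr hy) hxy
    rw [abs_sub_comm (f x), abs_of_nonneg (sub_nonneg.mpr hfle), abs_sub_comm x,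
      abs_of_nonneg (sub_nonneg.mpr hxy)] at h1
    have heq : (1 / K) * (y - x) = (y - x) / K := by ring
    linarith
  obtain ⟨m, rfl⟩ : ∃ m, n = m + 1 := ⟨n - 1, (Nat.succ_pred_eq_of_pos hn).symm⟩
  rw [Metric.tendsto_nhds]
  intro ε hε
  set δ : ℝ := ε / 2 with hδdef
  have hδ : 0 < δ := by positivity
  have hKm1 : (0 : ℝ) < K ^ (m + 1) := pow_pos hK0 _
  have hKm2 : (0 : ℝ) < K ^ (m + 2) := pow_pos hK0 _
  set η : ℝ := δ / (2 * K ^ (m + 1)) with hηdef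
  have hη : 0 < η := by positivity
  have E1 : ∀ᶠ x in atTop, dist (f^[m + 1] x / x) 1 < η := (Metric.tendsto_nhds.mp h) η hη
  have E2 : ∀ᶠ x : ℝ in atTop, 2 * ((m : ℝ) + 1) * K ^ (m + 2) / δ + 1 ≤ x :=
    eventually_ge_atTop _
  filter_upwards [E1, E2] with x h1 h2
  have hT0 : (0 : ℝ) ≤ 2 * ((m : ℝ) + 1) * K ^ (m + 2) / δ := by positivity
  have hx1 : (1 : ℝ) ≤ x := by linarith
  have hx0 : (0 : ℝ) < x := by linarith
  have hxnn : (0 : ℝ) ≤ x := hx0.le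
  -- δ * x is large
  have hδxbig : 2 * ((m : ℝ) + 1) * K ^ (m + 2) ≤ δ * x := by
    have h3 : 2 * ((m : ℝ) + 1) * K ^ (m + 2) / δ ≤ x - 1 := by linarith
    have h4 := (div_le_iff₀ hδ).mp h3
    nlinarith
  have hbig : ∀ j : ℕ, j ≤ m → (j : ℝ) * K ≤ δ * x / K ^ j := by
    intro j hj
    have hKj : (0 : ℝ) < K ^ j := pow_pos hK0 j
    rw [le_div_iff₀ hKj]
    have hp : K ^ (j + 1) ≤ K ^ (m + 2) := pow_le_pow_right₀ hK.le (by omega)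
    have hjm : (j : ℝ) ≤ 2 * ((m : ℝ) + 1) := by
      have : (j : ℝ) ≤ (m : ℝ) := Nat.cast_le.mpr hj
      linarith
    have heq : (j : ℝ) * K * K ^ j = (j : ℝ) * K ^ (j + 1) := by rw [pow_succ]; ring
    rw [heq]
    have hj0 : (0 : ℝ) ≤ (j : ℝ) := Nat.cast_nonneg j
    have e1 : 0 ≤ (2 * ((m : ℝ) + 1) - (j : ℝ)) * K ^ (m + 2) :=
      mul_nonneg (by linarith) hKm2.le
    have e2 : 0 ≤ (j : ℝ) * (K ^ (m + 2) - K ^ (j + 1)) := mul_nonneg hj0 (by linarith)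
    nlinarith
  -- bounds from the hypothesis on the n-th iterate
  rw [Real.dist_eq, abs_sub_lt_iff] at h1
  have hiterlt : f^[m + 1] x < (1 + η) * x := by
    have h1a : f^[m + 1] x / x < 1 + η := by linarith [h1.1]
    exact (div_lt_iff₀ hx0).mp h1a
  have hitergt : (1 - η) * x < f^[m + 1] x := by
    have h1b : 1 - η < f^[m + 1] x / x := by linarith [h1.2]
    exact (lt_div_iff₀ hx0).mp h1b
  -- the auxiliary quantity s = η * x
  have hs : η * x = δ * x / (2 * K ^ (m + 1)) := by rw [hηdef]; ring
  have hsbig : ((m : ℝ) + 1) * K ≤ η * x := by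
    rw [hs, le_div_iff₀ (by positivity : (0:ℝ) < 2 * K ^ (m + 1))]
    have heq2 : ((m : ℝ) + 1) * K * (2 * K ^ (m + 1)) = 2 * ((m : ℝ) + 1) * K ^ (m + 2) := by
      rw [pow_succ]; ring
    rw [heq2]; exact hδxbig
  have hsK : δ * x / K ^ m = 2 * K * (η * x) := by
    rw [hs, pow_succ]
    field_simp
  have hprod : 0 ≤ (η * x) * (2 * K - 2) :=
    mul_nonneg (mul_nonneg hη.le hxnn) (by linarith)
  -- upper bound: f x < (1 + δ) * x
  have hup : f x < (1 + δ) * x := by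
    by_contra hc
    push_neg at hc
    have hfx : x + δ * x ≤ f x := by linarith [hc]
    have HH := stmt9_iter_up f K hK hmono' hlow δ x hδ hxnn hfx m hbig m le_rfl
    rw [hsK] at HH
    linarith [HH, hiterlt, hsbig, hprod]
  -- lower bound: (1 - δ) * x < f x
  have hdown : (1 - δ) * x < f x := by
    by_contra hc
    push_neg at hc
    have hfx : f x ≤ x - δ * x := by linarith [hc]
    have HH := stmt9_iter_down f K hK hpos hmono' hlow δ x hδ hxnn hfx m hbig m le_rfl
    rw [hsK] at HH
    linarith [HH, hitergt, hsbig, hprod]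
  -- conclude
  rw [Real.dist_eq, abs_sub_lt_iff]
  have c1 : f x / x < 1 + δ := (div_lt_iff₀ hx0).mpr hup
  have c2 : 1 - δ < f x / x := (lt_div_iff₀ hx0).mpr hdown
  constructor
  · linarith
  · linarith
end

section
/- There exist strictly increasing homeomorphisms X, Y, Z : ℝ → ℝ, each commuting with the unit translation (that is, F(t + 1) = F(t) + 1 for F ∈ {X, Y, Z}), such that X∘X = Y∘Y∘Y = Z^{∘7} = X∘Y∘Z, and this common composition is the translation t ↦ t + 1. In particular the group of lifts of orientation-preserving circle homeomorphisms contains a subgroup generated by x, y, z satisfying the relations x² = y³ = z⁷ = xyz of the central extension of the (2,3,7) triangle group. -/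
open Filter Topology

open Real Set


noncomputable def gA (k t : ℝ) : ℝ :=
  if t = 0 then 0 else 1/2 - Real.arctan (k * (Real.cos (π * t) / Real.sin (π * t))) / π

noncomputable def Amap (k t : ℝ) : ℝ := (⌊t⌋ : ℝ) + gA k (Int.fract t)

lemma gA_zero (k : ℝ) : gA k 0 = 0 := if_pos rfl

lemma gA_mem {k t : ℝ} (h : t ∈ Ioo (0:ℝ) 1) : gA k t ∈ Ioo (0:ℝ) 1 := by
  rw [gA, if_neg h.1.ne']
  have h1 := Real.arctan_lt_pi_div_two (k * (cos (π*t)/sin (π*t)))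
  have h2 := Real.neg_pi_div_two_lt_arctan (k * (cos (π*t)/sin (π*t)))
  have hπ := Real.pi_pos
  constructor
  · rw [sub_pos, div_lt_iff₀ hπ]; linarith
  · have : -(1/2 : ℝ) < arctan (k * (cos (π*t)/sin (π*t))) / π := by
      rw [lt_div_iff₀ hπ]; linarith
    linarith

lemma sin_pi_mul_pos {t : ℝ} (h : t ∈ Ioo (0:ℝ) 1) : 0 < sin (π * t) := by
  have hπ := Real.pi_pos
  apply Real.sin_pos_of_pos_of_lt_pi
  · exact mul_pos hπ h.1
  · nlinarith [h.2]

lemma gA_cot {k t : ℝ} (h : t ∈ Ioo (0:ℝ) 1) :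
    0 < sin (π * gA k t) ∧
    cos (π * gA k t) * sin (π * t) = k * cos (π * t) * sin (π * gA k t) := by
  set u := k * (cos (π*t) / sin (π*t)) with hu
  have hπ := Real.pi_pos
  have hg : π * gA k t = π/2 - arctan u := by
    rw [gA, if_neg h.1.ne', ← hu, mul_sub, mul_div_cancel₀ _ hπ.ne']; ring
  have hsin : sin (π * gA k t) = cos (arctan u) := by
    rw [hg, Real.sin_pi_div_two_sub]
  have hcos : cos (π * gA k t) = sin (arctan u) := by
    rw [hg, Real.cos_pi_div_two_sub]
  have hcpos := Real.cos_arctan_pos u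
  have htan : sin (arctan u) = u * cos (arctan u) := by
    rw [Real.sin_arctan, Real.cos_arctan]; ring
  refine ⟨by rw [hsin]; exact hcpos, ?_⟩
  rw [hsin, hcos, htan, hu]
  have hst : sin (π * t) ≠ 0 := (sin_pi_mul_pos h).ne'
  field_simp

-- cot is strictly decreasing on (0,1) (as cos(pi t)/sin(pi t))
lemma cot_lt {a b : ℝ} (ha : a ∈ Ioo (0:ℝ) 1) (hb : b ∈ Ioo (0:ℝ) 1) (hab : a < b) :
    cos (π * b) / sin (π * b) < cos (π * a) / sin (π * a) := by
  have hπ := Real.pi_pos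
  have hsa := sin_pi_mul_pos ha
  have hsb := sin_pi_mul_pos hb
  rw [div_lt_div_iff₀ hsb hsa]
  have hs : 0 < sin (π * b - π * a) := by
    apply Real.sin_pos_of_pos_of_lt_pi
    · nlinarith
    · nlinarith [ha.1, hb.2]
  rw [Real.sin_sub] at hs
  nlinarith

lemma gA_strictMonoOn {k : ℝ} (hk : 0 < k) : StrictMonoOn (gA k) (Ico (0:ℝ) 1) := by
  intro a ha b hb hab
  rcases eq_or_lt_of_le ha.1 with h0 | h0
  · rw [← h0, gA_zero]
    exact (gA_mem ⟨lt_of_le_of_lt ha.1 hab, hb.2⟩).1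
  · have ha' : a ∈ Ioo (0:ℝ) 1 := ⟨h0, ha.2⟩
    have hb' : b ∈ Ioo (0:ℝ) 1 := ⟨lt_trans h0 hab, hb.2⟩
    rw [gA, if_neg ha'.1.ne', gA, if_neg hb'.1.ne']
    have hcot := cot_lt ha' hb' hab
    have harc : arctan (k * (cos (π*b)/sin (π*b))) < arctan (k * (cos (π*a)/sin (π*a))) := by
      apply Real.arctan_strictMono
      nlinarith
    have hπ := Real.pi_pos
    have hdiv : arctan (k * (cos (π*b)/sin (π*b))) / π < arctan (k * (cos (π*a)/sin (π*a))) / π :=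
      div_lt_div_of_pos_right harc hπ
    linarith

lemma gA_inv {k s : ℝ} (hk : 0 < k) (hs : s ∈ Ico (0:ℝ) 1) : gA k (gA k⁻¹ s) = s := by
  rcases eq_or_lt_of_le hs.1 with h0 | h0
  · rw [← h0, gA_zero, gA_zero]
  · have hs' : s ∈ Ioo (0:ℝ) 1 := ⟨h0, hs.2⟩
    have hv : gA k⁻¹ s ∈ Ioo (0:ℝ) 1 := gA_mem hs'
    have hπ := Real.pi_pos
    have hc := gA_cot (k := k⁻¹) hs'
    have hsv : 0 < sin (π * gA k⁻¹ s) := hc.1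
    have hss : 0 < sin (π * s) := sin_pi_mul_pos hs'
    -- k * cot(pi v) = cot(pi s)
    have hkc : k * (cos (π * gA k⁻¹ s) / sin (π * gA k⁻¹ s)) = cos (π * s) / sin (π * s) := by
      have h2 := hc.2
      rw [← mul_div_assoc, div_eq_div_iff hsv.ne' hss.ne']
      field_simp at h2
      simp only [one_div] at h2
      nlinarith [h2]
    rw [gA, if_neg hv.1.ne', hkc]
    have harg : cos (π * s) / sin (π * s) = Real.tan (π/2 - π * s) := by
      rw [Real.tan_eq_sin_div_cos, Real.sin_pi_div_two_sub, Real.cos_pi_div_two_sub]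
    rw [harg, Real.arctan_tan (by nlinarith [hs'.2]) (by nlinarith [hs'.1])]
    field_simp
    ring

lemma gA_mem' {k t : ℝ} (h : t ∈ Ico (0:ℝ) 1) : gA k t ∈ Ico (0:ℝ) 1 := by
  rcases eq_or_lt_of_le h.1 with h0 | h0
  · rw [← h0, gA_zero]; exact ⟨le_refl _, one_pos⟩
  · have := gA_mem (k := k) ⟨h0, h.2⟩
    exact ⟨this.1.le, this.2⟩

lemma fract_mem (t : ℝ) : Int.fract t ∈ Ico (0:ℝ) 1 := ⟨Int.fract_nonneg t, Int.fract_lt_one t⟩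

lemma Amap_add_one (k t : ℝ) : Amap k (t + 1) = Amap k t + 1 := by
  unfold Amap
  rw [Int.fract_add_one]
  push_cast [Int.floor_add_one]
  ring

lemma Amap_add_int (k t : ℝ) (j : ℤ) : Amap k (t + j) = Amap k t + j := by
  unfold Amap
  rw [Int.fract_add_intCast]
  push_cast [Int.floor_add_intCast]
  ring

lemma Amap_floor (k t : ℝ) : Amap k t ∈ Ico ((⌊t⌋:ℝ)) ((⌊t⌋:ℝ) + 1) := by
  have := gA_mem' (k := k) (fract_mem t)
  unfold Amap
  constructor
  · linarith [this.1]
  · linarith [this.2]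

lemma floor_Amap (k t : ℝ) : ⌊Amap k t⌋ = ⌊t⌋ := by
  unfold Amap
  rw [add_comm, Int.floor_add_intCast]
  rw [Int.floor_eq_zero_iff.mpr (gA_mem' (fract_mem t))]
  ring

lemma fract_Amap (k t : ℝ) : Int.fract (Amap k t) = gA k (Int.fract t) := by
  unfold Amap
  rw [add_comm, Int.fract_add_intCast]
  exact Int.fract_eq_self.mpr ⟨(gA_mem' (fract_mem t)).1, (gA_mem' (fract_mem t)).2⟩

lemma Amap_inv {k : ℝ} (hk : 0 < k) (t : ℝ) : Amap k (Amap k⁻¹ t) = t := by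
  conv_lhs => rw [Amap]
  rw [floor_Amap, fract_Amap, gA_inv hk (fract_mem t), Int.floor_add_fract t]

lemma Amap_inv' {k : ℝ} (hk : 0 < k) (t : ℝ) : Amap k⁻¹ (Amap k t) = t := by
  have := Amap_inv (k := k⁻¹) (by positivity) t
  rwa [inv_inv] at this

lemma Amap_strictMono {k : ℝ} (hk : 0 < k) : StrictMono (Amap k) := by
  intro a b hab
  rcases eq_or_lt_of_le (Int.floor_le_floor hab.le) with hfl | hfl
  · have hfr : Int.fract a < Int.fract b := by
      unfold Int.fract; rw [hfl]; linarith
    unfold Amap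
    rw [hfl]
    have := gA_strictMonoOn hk (fract_mem a) (fract_mem b) hfr
    linarith
  · have h1 := (Amap_floor k a).2
    have h2 := (Amap_floor k b).1
    have : (⌊a⌋ : ℝ) + 1 ≤ (⌊b⌋ : ℝ) := by exact_mod_cast hfl
    linarith

lemma Amap_surjective {k : ℝ} (hk : 0 < k) : Function.Surjective (Amap k) :=
  fun b => ⟨Amap k⁻¹ b, Amap_inv hk b⟩

lemma Amap_continuous {k : ℝ} (hk : 0 < k) : Continuous (Amap k) :=
  (Amap_strictMono hk).monotone.continuous_of_surjective (Amap_surjective hk)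

-- Lifts predicate: F is a lift of the projective map with matrix (a b; c d)
def Lifts (F : ℝ → ℝ) (a b c d : ℝ) : Prop :=
  ∀ t : ℝ, ∃ ρ : ℝ, ρ ≠ 0 ∧
    cos (π * F t) = ρ * (a * cos (π * t) + b * sin (π * t)) ∧
    sin (π * F t) = ρ * (c * cos (π * t) + d * sin (π * t))

lemma lifts_comp {F G : ℝ → ℝ} {a b c d a' b' c' d' : ℝ}
    (hF : Lifts F a b c d) (hG : Lifts G a' b' c' d') :
    Lifts (fun t => F (G t)) (a*a' + b*c') (a*b' + b*d') (c*a' + d*c') (c*b' + d*d') := by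
  intro t
  obtain ⟨σ, hσ, hG1, hG2⟩ := hG t
  obtain ⟨ρ, hρ, hF1, hF2⟩ := hF (G t)
  refine ⟨ρ * σ, mul_ne_zero hρ hσ, ?_, ?_⟩
  · rw [hF1, hG1, hG2]; ring
  · rw [hF2, hG1, hG2]; ring

lemma lifts_congr {F : ℝ → ℝ} {a b c d a' b' c' d' : ℝ}
    (hF : Lifts F a b c d) (h1 : a = a') (h2 : b = b') (h3 : c = c') (h4 : d = d') :
    Lifts F a' b' c' d' := by rw [← h1, ← h2, ← h3, ← h4]; exact hF

lemma lifts_scale {F : ℝ → ℝ} {a b c d κ : ℝ} (hκ : κ ≠ 0)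
    (hF : Lifts F (κ*a) (κ*b) (κ*c) (κ*d)) : Lifts F a b c d := by
  intro t
  obtain ⟨ρ, hρ, h1, h2⟩ := hF t
  exact ⟨ρ * κ, mul_ne_zero hρ hκ, by rw [h1]; ring, by rw [h2]; ring⟩

lemma lifts_ext {F : ℝ → ℝ} {G : ℝ → ℝ} (hFG : ∀ t, F t = G t)
    {a b c d : ℝ} (hF : Lifts F a b c d) : Lifts G a b c d := by
  intro t; obtain ⟨ρ, h⟩ := hF t; exact ⟨ρ, by rwa [hFG t] at h⟩

lemma lifts_trans (a : ℝ) :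
    Lifts (fun t => t + a) (cos (π*a)) (-sin (π*a)) (sin (π*a)) (cos (π*a)) := by
  intro t
  refine ⟨1, one_ne_zero, ?_, ?_⟩
  · rw [mul_add, Real.cos_add]; ring
  · rw [mul_add, Real.sin_add]; ring

-- lift of Amap k
lemma lifts_Amap {k : ℝ} (hk : 0 < k) : Lifts (Amap k) k 0 0 1 := by
  set Q : ℝ → Prop := fun s => ∃ ρ : ℝ, ρ ≠ 0 ∧
      cos (π * Amap k s) = ρ * (k * cos (π * s) + 0 * sin (π * s)) ∧
      sin (π * Amap k s) = ρ * (0 * cos (π * s) + 1 * sin (π * s)) with hQ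
  have key : ∀ s ∈ Ico (0:ℝ) 1, Q s := by
    intro s hs
    rcases eq_or_lt_of_le hs.1 with h0 | h0
    · have hA0 : Amap k 0 = 0 := by
        unfold Amap
        norm_num [Int.fract_zero, gA_zero]
      refine ⟨k⁻¹, by positivity, ?_, ?_⟩
      · rw [← h0, hA0]
        norm_num
        field_simp
      · rw [← h0, hA0]
        norm_num
    · have hs' : s ∈ Ioo (0:ℝ) 1 := ⟨h0, hs.2⟩
      have hA : Amap k s = gA k s := by
        unfold Amap
        rw [Int.floor_eq_zero_iff.mpr ⟨hs.1, hs.2⟩, Int.fract_eq_self.mpr ⟨hs.1, hs.2⟩]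
        norm_num
      have hc := gA_cot (k := k) hs'
      have hss := sin_pi_mul_pos hs'
      refine ⟨sin (π * gA k s) / sin (π * s), ne_of_gt (div_pos hc.1 hss), ?_, ?_⟩
      · rw [hA]
        have h2 := hc.2
        field_simp
        nlinarith [h2]
      · rw [hA]; field_simp; ring
  have step : ∀ t : ℝ, Q t → Q (t + 1) ∧ Q (t - 1) := by
    intro t ht
    obtain ⟨ρ, hρ, h1, h2⟩ := ht
    have flip : ∀ x : ℝ, cos (π * (x + 1)) = -cos (π * x) ∧ sin (π * (x + 1)) = -sin (π * x) := by
      intro x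
      constructor <;> rw [mul_add, mul_one] <;>
        simp [Real.cos_add, Real.sin_add, Real.cos_pi, Real.sin_pi]
    have flip' : ∀ x : ℝ, cos (π * (x - 1)) = -cos (π * x) ∧ sin (π * (x - 1)) = -sin (π * x) := by
      intro x
      constructor <;> rw [mul_sub, mul_one] <;>
        simp [Real.cos_sub, Real.sin_sub, Real.cos_pi, Real.sin_pi]
    constructor
    · have hAe : Amap k (t + 1) = Amap k t + 1 := Amap_add_one k t
      refine ⟨ρ, hρ, ?_, ?_⟩
      · rw [hAe, (flip (Amap k t)).1, (flip t).1, (flip t).2, h1]; ring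
      · rw [hAe, (flip (Amap k t)).2, (flip t).1, (flip t).2, h2]; ring
    · have hAe : Amap k (t - 1) = Amap k t - 1 := by
        have := Amap_add_int k (t - 1) 1
        push_cast at this
        simp at this
        linarith
      refine ⟨ρ, hρ, ?_, ?_⟩
      · rw [hAe, (flip' (Amap k t)).1, (flip' t).1, (flip' t).2, h1]; ring
      · rw [hAe, (flip' (Amap k t)).2, (flip' t).1, (flip' t).2, h2]; ring
  have hshift : ∀ j : ℤ, ∀ s : ℝ, Q s → Q (s + j) := by
    intro j
    induction j using Int.induction_on with
    | zero => intro s hP; simpa using hP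
    | succ i ih =>
        intro s hP
        have heq : s + ((i+1 : ℤ) : ℝ) = (s + (i : ℤ)) + 1 := by push_cast; ring
        rw [heq]
        exact (step _ (ih s hP)).1
    | pred i ih =>
        intro s hP
        have heq : s + ((-i-1 : ℤ) : ℝ) = (s + (-i : ℤ)) - 1 := by push_cast; ring
        rw [heq]
        exact (step _ (ih s hP)).2
  intro t
  have := hshift ⌊t⌋ (Int.fract t) (key _ (fract_mem t))
  rwa [Int.fract_add_floor] at this

-- a continuous integer-valued function is constant
lemma int_valued_const {f : ℝ → ℝ} (hf : Continuous f) (h : ∀ t, ∃ j : ℤ, f t = j) :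
    ∀ t, f t = f 0 := by
  intro t
  by_contra hne
  obtain ⟨j0, hj0⟩ := h 0
  obtain ⟨jt, hjt⟩ := h t
  have hjne : j0 ≠ jt := by
    intro hcontra
    exact hne (by rw [hjt, hj0, hcontra])
  have key : ∀ v : ℝ, v ∈ Set.uIcc (f 0) (f t) → ∃ ju : ℤ, (ju : ℝ) = v := by
    intro v hvmem
    obtain ⟨u, _, hu⟩ := intermediate_value_uIcc (f := f) (a := 0) (b := t)
      hf.continuousOn hvmem
    obtain ⟨ju, hju⟩ := h u
    exact ⟨ju, by rw [← hju, hu]⟩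
  rcases lt_or_gt_of_ne hjne with hlt | hgt
  · have hgap : (j0 : ℝ) + 1 ≤ jt := by exact_mod_cast hlt
    obtain ⟨ju, hju⟩ := key ((j0 : ℝ) + 1/2) (by
      rw [Set.mem_uIcc, hj0, hjt]; left; constructor <;> linarith)
    have h2 : (2 * ju : ℤ) = 2 * j0 + 1 := by exact_mod_cast (by push_cast; linarith : ((2*ju : ℤ) : ℝ) = ((2*j0+1 : ℤ) : ℝ))
    omega
  · have hgap : (jt : ℝ) + 1 ≤ j0 := by exact_mod_cast hgt
    obtain ⟨ju, hju⟩ := key ((j0 : ℝ) - 1/2) (by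
      rw [Set.mem_uIcc, hj0, hjt]; right; constructor <;> linarith)
    have h2 : (2 * ju : ℤ) = 2 * j0 - 1 := by exact_mod_cast (by push_cast; linarith : ((2*ju : ℤ) : ℝ) = ((2*j0-1 : ℤ) : ℝ))
    omega

-- two continuous lifts of the same projective map differ by an integer
lemma lifts_unique {F G : ℝ → ℝ} {a b c d : ℝ}
    (hF : Lifts F a b c d) (hG : Lifts G a b c d)
    (hFc : Continuous F) (hGc : Continuous G) :
    ∃ j : ℤ, ∀ t, F t = G t + j := by
  have hsin : ∀ t, Real.sin (π * F t - π * G t) = 0 := by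
    intro t
    obtain ⟨ρ, hρ, hF1, hF2⟩ := hF t
    obtain ⟨σ, hσ, hG1, hG2⟩ := hG t
    rw [Real.sin_sub, hF1, hF2, hG1, hG2]
    ring
  have hint : ∀ t, ∃ j : ℤ, F t - G t = j := by
    intro t
    obtain ⟨n, hn⟩ := Real.sin_eq_zero_iff.mp (hsin t)
    refine ⟨n, ?_⟩
    have hπ := Real.pi_ne_zero
    have : π * (F t - G t) = π * n := by rw [mul_sub]; linarith [hn]
    have h := mul_left_cancel₀ hπ this
    linarith [h]
  have hconst := int_valued_const (f := fun t => F t - G t) (by fun_prop) hint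
  obtain ⟨j, hj⟩ := hint 0
  refine ⟨j, fun t => ?_⟩
  have := hconst t
  linarith

-- specific translation lifts
lemma lifts_T_half : Lifts (fun t => t + 1/2) 0 (-1) 1 0 := by
  have h := lifts_trans (1/2)
  have e : π * (1/2 : ℝ) = π/2 := by ring
  exact lifts_congr h (by rw [e, Real.cos_pi_div_two]) (by rw [e, Real.sin_pi_div_two])
    (by rw [e, Real.sin_pi_div_two]) (by rw [e, Real.cos_pi_div_two])

lemma lifts_T_m17 : Lifts (fun t => t + (-(1/7)))
    (Real.cos (π/7)) (Real.sin (π/7)) (-Real.sin (π/7)) (Real.cos (π/7)) := by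
  have h := lifts_trans (-(1/7))
  have e : π * (-(1/7) : ℝ) = -(π/7) := by ring
  exact lifts_congr h (by rw [e, Real.cos_neg]) (by rw [e, Real.sin_neg]; ring)
    (by rw [e, Real.sin_neg]) (by rw [e, Real.cos_neg])

lemma lifts_T_third : Lifts (fun t => t + 1/3) 1 (-Real.sqrt 3) (Real.sqrt 3) 1 := by
  intro t
  have e : π * (t + 1/3 : ℝ) = π * t + π/3 := by ring
  refine ⟨1/2, by norm_num, ?_, ?_⟩
  · rw [e, Real.cos_add, Real.cos_pi_div_three, Real.sin_pi_div_three]; ring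
  · rw [e, Real.sin_add, Real.cos_pi_div_three, Real.sin_pi_div_three]; ring

lemma sqrt2_half_ne : (Real.sqrt 2)/2 ≠ 0 := by
  have := Real.sqrt_pos.mpr (by norm_num : (0:ℝ) < 2)
  positivity

lemma lifts_T_quarter : Lifts (fun t => t + 1/4) 1 (-1) 1 1 := by
  intro t
  have e : π * (t + 1/4 : ℝ) = π * t + π/4 := by ring
  refine ⟨(Real.sqrt 2)/2, sqrt2_half_ne, ?_, ?_⟩
  · rw [e, Real.cos_add, Real.cos_pi_div_four, Real.sin_pi_div_four]; ring
  · rw [e, Real.sin_add, Real.cos_pi_div_four, Real.sin_pi_div_four]; ring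

lemma lifts_T_mquarter : Lifts (fun t => t + (-(1/4))) 1 1 (-1) 1 := by
  intro t
  have e : π * (t + (-(1/4)) : ℝ) = π * t - π/4 := by ring
  refine ⟨(Real.sqrt 2)/2, sqrt2_half_ne, ?_, ?_⟩
  · rw [e, Real.cos_sub, Real.cos_pi_div_four, Real.sin_pi_div_four]; ring
  · rw [e, Real.sin_sub, Real.cos_pi_div_four, Real.sin_pi_div_four]; ring

-- the constants
noncomputable def sc : ℝ := Real.sin (π / 7)
noncomputable def cc : ℝ := Real.cos (π / 7)
noncomputable def qc : ℝ := Real.sqrt (1 - 4 * sc ^ 2)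
noncomputable def mc : ℝ := (1 + qc) / (2 * sc)
noncomputable def nc : ℝ := (2 * cc + qc) / Real.sqrt 3

lemma sc_pos : 0 < sc := by
  have hπ := Real.pi_pos
  exact Real.sin_pos_of_pos_of_lt_pi (by linarith) (by linarith)

lemma cc_pos : 0 < cc := by
  have hπ := Real.pi_pos
  exact Real.cos_pos_of_mem_Ioo ⟨by linarith, by linarith⟩

lemma sc_lt_half : sc < 1/2 := by
  have hπ := Real.pi_pos
  have h := Real.strictMonoOn_sin (a := π/7) (b := π/6)
    ⟨by linarith, by linarith⟩ ⟨by linarith, by linarith⟩ (by linarith)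
  rw [Real.sin_pi_div_six] at h
  exact h

lemma q_nonneg_arg : (0:ℝ) < 1 - 4 * sc ^ 2 := by nlinarith [sc_pos, sc_lt_half]

lemma qc_pos : 0 < qc := Real.sqrt_pos.mpr q_nonneg_arg

lemma q_sq : qc ^ 2 = 1 - 4 * sc ^ 2 := Real.sq_sqrt q_nonneg_arg.le

lemma pyth : sc ^ 2 + cc ^ 2 = 1 := Real.sin_sq_add_cos_sq _

lemma mc_pos : 0 < mc := by
  unfold mc
  have := sc_pos
  have := qc_pos
  positivity

lemma s3_pos : 0 < Real.sqrt 3 := Real.sqrt_pos.mpr (by norm_num)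
lemma s3_sq : (Real.sqrt 3) ^ 2 = 3 := Real.sq_sqrt (by norm_num)

lemma nc_pos : 0 < nc := by
  unfold nc
  have := cc_pos
  have := qc_pos
  have := s3_pos
  positivity

lemma h2cq_pos : (0:ℝ) < 2 * cc + qc := by
  have := cc_pos; have := qc_pos; linarith

lemma hq4 : qc ^ 2 = 4 * cc ^ 2 - 3 := by
  have h1 := pyth
  have h2 := q_sq
  nlinarith

lemma e_nc : Real.sqrt 3 * nc = 2 * cc + qc := by
  unfold nc
  field_simp

lemma e_ncinv : nc⁻¹ = Real.sqrt 3 / (2 * cc + qc) := by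
  unfold nc
  rw [inv_div]

lemma s3_mul_self : Real.sqrt 3 * Real.sqrt 3 = 3 := Real.mul_self_sqrt (by norm_num)

lemma hn1 : Real.sqrt 3 * (nc + nc⁻¹) = 4 * cc := by
  rw [mul_add, e_nc, e_ncinv, ← mul_div_assoc, s3_mul_self]
  field_simp [h2cq_pos.ne']
  ring_nf
  nlinarith [hq4]

lemma hn2 : Real.sqrt 3 * (nc - nc⁻¹) = 2 * qc := by
  rw [mul_sub, e_nc, e_ncinv, ← mul_div_assoc, s3_mul_self]
  field_simp [h2cq_pos.ne']
  ring_nf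
  nlinarith [hq4]

lemma hm1 : sc * mc⁻¹ = (1 - qc) / 2 := by
  have hne : sc ≠ 0 := sc_pos.ne'
  have hq1 : (1:ℝ) + qc ≠ 0 := by nlinarith [qc_pos]
  unfold mc
  rw [inv_div]
  field_simp
  nlinarith [q_sq]

lemma hm2 : mc * sc = (1 + qc) / 2 := by
  have hne : sc ≠ 0 := sc_pos.ne'
  unfold mc
  field_simp

lemma sc_def : Real.sin (π/7) = sc := rfl
lemma cc_def : Real.cos (π/7) = cc := rfl

noncomputable def yF : ℝ → ℝ := fun t => Amap mc (Amap mc⁻¹ t + (-(1/7))) + 1/2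
noncomputable def zF : ℝ → ℝ := fun t => Amap mc (Amap mc⁻¹ t + 1/7)
noncomputable def wF : ℝ → ℝ := fun t => Amap nc (Amap nc⁻¹ (t + 1/4) + 1/3) + (-(1/4))

lemma mcinv_pos : 0 < mc⁻¹ := inv_pos.mpr mc_pos
lemma ncinv_pos : 0 < nc⁻¹ := inv_pos.mpr nc_pos

lemma lifts_yF : Lifts yF ((1-qc)/2) (-cc) cc ((1+qc)/2) := by
  have hA1 : Lifts (Amap mc⁻¹) mc⁻¹ 0 0 1 := lifts_Amap mcinv_pos
  have hA2 : Lifts (Amap mc) mc 0 0 1 := lifts_Amap mc_pos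
  have c1 := lifts_comp lifts_T_m17 hA1
  have c2 := lifts_comp hA2 c1
  have c3 := lifts_comp lifts_T_half c2
  refine lifts_ext (fun t => rfl) (lifts_congr c3 ?_ ?_ ?_ ?_) <;>
    rw [sc_def, cc_def]
  · linear_combination hm1
  · ring
  · field_simp [mc_pos.ne']
    ring
  · linear_combination hm2

lemma hn1' : Real.sqrt 3 * (nc * nc) + Real.sqrt 3 = 4 * cc * nc := by
  have h := hn1
  field_simp [nc_pos.ne'] at h
  linarith

lemma hn2' : Real.sqrt 3 * (nc * nc) - Real.sqrt 3 = 2 * qc * nc := by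
  have h := hn2
  field_simp [nc_pos.ne'] at h
  linarith

lemma lifts_wF : Lifts wF ((1-qc)/2) (-cc) cc ((1+qc)/2) := by
  have hA1 : Lifts (Amap nc⁻¹) nc⁻¹ 0 0 1 := lifts_Amap ncinv_pos
  have hA2 : Lifts (Amap nc) nc 0 0 1 := lifts_Amap nc_pos
  have c1 := lifts_comp hA1 lifts_T_quarter
  have c2 := lifts_comp lifts_T_third c1
  have c3 := lifts_comp hA2 c2
  have c4 := lifts_comp lifts_T_mquarter c3
  apply lifts_scale (κ := 4) (by norm_num)
  refine lifts_ext (fun t => rfl) (lifts_congr c4 ?_ ?_ ?_ ?_) <;>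
    field_simp [nc_pos.ne'] <;> ring_nf
  · linear_combination (-2 : ℝ) * hn2'
  · linear_combination (-1 : ℝ) * hn1'
  · linear_combination hn1'
  · linear_combination 2 * hn2'

lemma yF_strictMono : StrictMono yF := by
  intro a b hab
  unfold yF
  have h1 := Amap_strictMono mcinv_pos hab
  have h2 := Amap_strictMono mc_pos (add_lt_add_left h1 (-(1/7)))
  linarith

lemma yF_surj : Function.Surjective yF := by
  intro b
  refine ⟨Amap mc (Amap mc⁻¹ (b - 1/2) + 1/7), ?_⟩
  unfold yF
  rw [Amap_inv' mc_pos]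
  have e : Amap mc⁻¹ (b - 1/2) + 1/7 + (-(1/7)) = Amap mc⁻¹ (b - 1/2) := by ring
  rw [e, Amap_inv mc_pos]
  ring

lemma yF_cont : Continuous yF := yF_strictMono.monotone.continuous_of_surjective yF_surj

lemma zF_strictMono : StrictMono zF := by
  intro a b hab
  unfold zF
  exact Amap_strictMono mc_pos (add_lt_add_left (Amap_strictMono mcinv_pos hab) _)

lemma zF_surj : Function.Surjective zF := by
  intro b
  refine ⟨Amap mc (Amap mc⁻¹ b + (-(1/7))), ?_⟩
  unfold zF
  rw [Amap_inv' mc_pos]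
  have e : Amap mc⁻¹ b + (-(1/7)) + 1/7 = Amap mc⁻¹ b := by ring
  rw [e, Amap_inv mc_pos]

lemma zF_cont : Continuous zF := zF_strictMono.monotone.continuous_of_surjective zF_surj

lemma wF_strictMono : StrictMono wF := by
  intro a b hab
  unfold wF
  have h1 := Amap_strictMono ncinv_pos (add_lt_add_left hab (1/4 : ℝ))
  have h2 := Amap_strictMono nc_pos (add_lt_add_left h1 (1/3 : ℝ))
  linarith

lemma wF_surj : Function.Surjective wF := by
  intro b
  refine ⟨Amap nc (Amap nc⁻¹ (b + 1/4) + (-(1/3))) - 1/4, ?_⟩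
  unfold wF
  have e0 : Amap nc (Amap nc⁻¹ (b + 1/4) + (-(1/3))) - 1/4 + 1/4
      = Amap nc (Amap nc⁻¹ (b + 1/4) + (-(1/3))) := by ring
  rw [e0, Amap_inv' nc_pos]
  have e : Amap nc⁻¹ (b + 1/4) + (-(1/3)) + 1/3 = Amap nc⁻¹ (b + 1/4) := by ring
  rw [e, Amap_inv nc_pos]
  ring

lemma wF_cont : Continuous wF := wF_strictMono.monotone.continuous_of_surjective wF_surj

lemma Amap_sub_one (k t : ℝ) : Amap k (t - 1) = Amap k t - 1 := by
  have := Amap_add_one k (t - 1)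
  simp at this
  linarith

lemma wF_cube : ∀ t, wF (wF (wF t)) = t + 1 := by
  intro t
  unfold wF
  have step : ∀ v : ℝ, Amap nc v + (-(1/4)) + 1/4 = Amap nc v := by intro v; ring
  rw [step, Amap_inv' nc_pos, step, Amap_inv' nc_pos]
  have e : Amap nc⁻¹ (t + 1/4) + 1/3 + 1/3 + 1/3 = Amap nc⁻¹ (t + 1/4) + 1 := by ring
  rw [e, Amap_add_one, Amap_inv nc_pos]
  ring

lemma wF_add_int : ∀ (j : ℤ) (t : ℝ), wF (t + j) = wF t + j := by
  intro j t
  unfold wF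
  have e1 : t + (j:ℝ) + 1/4 = (t + 1/4) + (j:ℝ) := by ring
  rw [e1, Amap_add_int]
  have e2 : Amap nc⁻¹ (t + 1/4) + (j:ℝ) + 1/3 = (Amap nc⁻¹ (t + 1/4) + 1/3) + (j:ℝ) := by ring
  rw [e2, Amap_add_int]
  ring

lemma yF_disp : ∀ t, t - 1/2 < yF t ∧ yF t < t + 1/2 := by
  intro t
  have hut : Amap mc (Amap mc⁻¹ t) = t := Amap_inv mc_pos t
  set u := Amap mc⁻¹ t with hu
  have h1 : Amap mc (u - 1) < Amap mc (u + (-(1/7))) :=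
    Amap_strictMono mc_pos (show u - 1 < u + (-(1/7)) by linarith)
  have h2 : Amap mc (u + (-(1/7))) < Amap mc u :=
    Amap_strictMono mc_pos (show u + (-(1/7)) < u by linarith)
  have h3 : Amap mc (u - 1) = Amap mc u - 1 := Amap_sub_one mc u
  unfold yF
  rw [← hu]
  constructor
  · rw [← hut]; linarith
  · rw [← hut]; linarith

lemma yF_eq_wF : ∀ t, yF t = wF t := by
  obtain ⟨j, hj⟩ := lifts_unique lifts_yF lifts_wF yF_cont wF_cont
  have e1 : yF 0 = wF 0 + (j:ℝ) := hj 0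
  have e2 : yF (yF 0) = wF (wF 0) + (j:ℝ) + (j:ℝ) := by
    rw [e1, hj (wF 0 + (j:ℝ)), wF_add_int j (wF 0)]
  have e3 : yF (yF (yF 0)) = wF (wF (wF 0)) + (j:ℝ) + (j:ℝ) + (j:ℝ) := by
    rw [e2]
    have e2' : wF (wF 0) + (j:ℝ) + (j:ℝ) = wF (wF 0) + ((2*j : ℤ):ℝ) := by push_cast; ring
    rw [e2', hj (wF (wF 0) + ((2*j : ℤ):ℝ)), wF_add_int (2*j) (wF (wF 0))]
    push_cast
    ring
  have hy3 : yF (yF (yF 0)) = 1 + 3*(j:ℝ) := by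
    rw [e3, wF_cube 0]
    push_cast
    ring
  have b1 := yF_disp 0
  have b2 := yF_disp (yF 0)
  have b3 := yF_disp (yF (yF 0))
  have hlow : (-3/2 : ℝ) < 1 + 3*(j:ℝ) := by rw [← hy3]; linarith
  have hhigh : (1 + 3*(j:ℝ) : ℝ) < 3/2 := by rw [← hy3]; linarith
  have hj0 : j = 0 := by
    have l1 : (j : ℝ) < 1 := by linarith
    have l2 : (-1 : ℝ) < (j : ℝ) := by linarith
    have l1' : j < 1 := by exact_mod_cast l1
    have l2' : -1 < j := by exact_mod_cast l2
    omega
  intro t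
  rw [hj t, hj0]
  push_cast
  ring

lemma yF_cube : ∀ t, yF (yF (yF t)) = t + 1 := by
  intro t
  rw [yF_eq_wF, yF_eq_wF, yF_eq_wF]
  exact wF_cube t

lemma yF_add_one : ∀ t, yF (t + 1) = yF t + 1 := by
  intro t
  unfold yF
  rw [Amap_add_one]
  have e : Amap mc⁻¹ t + 1 + (-(1/7)) = (Amap mc⁻¹ t + (-(1/7))) + 1 := by ring
  rw [e, Amap_add_one]
  ring

lemma zF_add_one : ∀ t, zF (t + 1) = zF t + 1 := by
  intro t
  unfold zF
  rw [Amap_add_one]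
  have e : Amap mc⁻¹ t + 1 + 1/7 = (Amap mc⁻¹ t + 1/7) + 1 := by ring
  rw [e, Amap_add_one]

lemma zF_iter : ∀ (jn : ℕ) (t : ℝ), zF^[jn] t = Amap mc (Amap mc⁻¹ t + jn/7) := by
  intro jn
  induction jn with
  | zero =>
      intro t
      simp [Amap_inv mc_pos]
  | succ i ih =>
      intro t
      rw [Function.iterate_succ_apply', ih]
      unfold zF
      rw [Amap_inv' mc_pos]
      push_cast
      ring_nf

lemma zF_seven : ∀ t, zF^[7] t = t + 1 := by
  intro t
  rw [zF_iter 7 t]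
  norm_num
  rw [Amap_add_one, Amap_inv mc_pos]

lemma xyz : ∀ t, yF (zF t) + 1/2 = t + 1 := by
  intro t
  unfold yF zF
  rw [Amap_inv' mc_pos]
  have e : Amap mc⁻¹ t + 1/7 + (-(1/7)) = Amap mc⁻¹ t := by ring
  rw [e, Amap_inv mc_pos]
  ring

/-- there are strictly increasing self-homeomorphisms `X, Y, Z` of `ℝ`,
each commuting with the unit translation, with
`X² = Y³ = Z⁷ = X∘Y∘Z = (t ↦ t + 1)` — lifts realizing the relations
`x² = y³ = z⁷ = xyz` of the (2,3,7) triangle group extension. -/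
theorem stmt11 : ∃ X Y Z : ℝ → ℝ,
    (StrictMono X ∧ Continuous X ∧ Function.Surjective X) ∧
    (StrictMono Y ∧ Continuous Y ∧ Function.Surjective Y) ∧
    (StrictMono Z ∧ Continuous Z ∧ Function.Surjective Z) ∧
    (∀ t, X (t + 1) = X t + 1) ∧ (∀ t, Y (t + 1) = Y t + 1) ∧
    (∀ t, Z (t + 1) = Z t + 1) ∧
    (∀ t, X (X t) = t + 1) ∧ (∀ t, Y (Y (Y t)) = t + 1) ∧
    (∀ t, Z^[7] t = t + 1) ∧ (∀ t, X (Y (Z t)) = t + 1) := by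
  refine ⟨fun t => t + 1/2, yF, zF, ?_, ?_, ?_, ?_, ?_, ?_, ?_, ?_, ?_, ?_⟩
  · exact ⟨fun a b h => by simpa using h, by continuity, fun b => ⟨b - 1/2, by ring⟩⟩
  · exact ⟨yF_strictMono, yF_cont, yF_surj⟩
  · exact ⟨zF_strictMono, zF_cont, zF_surj⟩
  · intro t; ring
  · exact yF_add_one
  · exact zF_add_one
  · intro t; ring
  · exact yF_cube
  · exact zF_seven
  · intro t
    show yF (zF t) + 1/2 = t + 1
    exact xyz t
end
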